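/- arXiv:1909.00802 — 10 statements merged into one kernel-verified Lean document; each statement's English description precedes it below -/
import Mathlib

section
/- Let L be a cyclic Galois extension of a field F of degree n, with Galois group generated by σ. Let 1 ≤ k ≤ n and let a₀,...,a_k ∈ L, not all zero. Then the F-linear transformation of L defined by f(x) = a₀x + a₁σ(x) + ... + a_k σ^k(x) has kernel of F-dimension at most k. -/
set_option maxHeartbeats 1000000

open Module LinearMap Finset

/-- Dedekind independence specialized to a family of distinct algebra equivs. -/
lemma aux_dedekind {F L : Type*} [Field F] [Field L] [Algebra F L]
    {ι : Type*} (v : ι → (L ≃ₐ[F] L)) (hv : Function.Injective v) :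
    LinearIndependent L (fun i : ι => ((v i : L → L) : L → L)) := by
  have h := linearIndependent_monoidHom L L
  have : (fun i : ι => ((v i : L → L) : L → L)) =
      (fun f : L →* L => (f : L → L)) ∘ (fun i => ((v i : L ≃* L) : L →* L)) := by
    funext i; rfl
  rw [this]
  refine h.comp _ (fun i j hij => hv ?_)
  ext x
  exact DFunLike.congr_fun hij x

theorem stmt_0 (F L : Type*) [Field F] [Field L] [Algebra F L]
    [FiniteDimensional F L] [IsGalois F L] (n : ℕ)
    (hn : Module.finrank F L = n)
    (σ : L ≃ₐ[F] L) (hσ : ∀ τ : L ≃ₐ[F] L, τ ∈ Subgroup.zpowers σ)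
    (k : ℕ) (hk1 : 1 ≤ k) (hkn : k ≤ n)
    (a : Fin (k + 1) → L) (ha : a ≠ 0)
    (f : L →ₗ[F] L)
    (hf : ∀ x, f x = ∑ i : Fin (k + 1), a i * (σ ^ (i : ℕ)) x) :
    Module.finrank F (LinearMap.ker f) ≤ k := by
  classical
  rcases eq_or_lt_of_le hkn with rfl | hklt
  · calc Module.finrank F (LinearMap.ker f) ≤ Module.finrank F L := Submodule.finrank_le _
    _ = k := hn
  -- main case : k < n
  set m := n - k with hm
  have hmpos : 0 < m := Nat.sub_pos_of_lt hklt
  have hkm : k + m = n := by omega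
  -- order of σ is n
  have horder : orderOf σ = n := by
    have := orderOf_eq_card_of_forall_mem_zpowers hσ
    rwa [IsGalois.card_aut_eq_finrank, hn] at this
  -- powers of σ below n are distinct
  have hpowinj : ∀ s t : Fin n, σ ^ (s : ℕ) = σ ^ (t : ℕ) → s = t := by
    intro s t hst
    have := pow_injOn_Iio_orderOf (x := σ)
      (by rw [horder]; exact Set.mem_Iio.2 s.isLt)
      (by rw [horder]; exact Set.mem_Iio.2 t.isLt) hst
    exact Fin.ext this
  -- minimal index with nonzero coefficient
  have hane : ∃ i : Fin (k+1), a i ≠ 0 := by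
    by_contra h
    push_neg at h
    exact ha (funext fun i => h i)
  set s : Finset (Fin (k+1)) := univ.filter (fun i => a i ≠ 0) with hs
  have hsne : s.Nonempty := by
    obtain ⟨i, hi⟩ := hane
    exact ⟨i, by simp [hs, hi]⟩
  set i₀ := s.min' hsne with hi₀def
  have hai₀ : a i₀ ≠ 0 := by
    have := s.min'_mem hsne
    simpa [hs] using this
  have hbelow : ∀ i : Fin (k+1), i < i₀ → a i = 0 := by
    intro i hi
    by_contra hne
    have : i ∈ s := by simp [hs, hne]
    exact absurd (s.min'_le i this) (not_le.2 hi)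
  -- the map Φ
  set Φ : L →ₗ[F] (Fin m → L) :=
    LinearMap.pi (fun j : Fin m => ((σ ^ (j : ℕ)).toLinearMap).comp f) with hΦ
  have hΦapp : ∀ (x : L) (j : Fin m), Φ x j = (σ ^ (j : ℕ)) (f x) := by
    intro x j; rfl
  have hker : LinearMap.ker Φ = LinearMap.ker f := by
    ext x
    simp only [LinearMap.mem_ker]
    constructor
    · intro h
      have h0 := congr_fun h (⟨0, hmpos⟩ : Fin m)
      simpa [hΦapp] using h0
    · intro h
      funext j
      simp [hΦapp, h]
  -- span over L of the range of Φ is everything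
  have hspan : Submodule.span L ((LinearMap.range Φ : Submodule F (Fin m → L)) : Set (Fin m → L)) = ⊤ := by
    by_contra hne
    obtain ⟨φ, hφne, hφbot⟩ := Submodule.exists_dual_map_eq_bot_of_lt_top
      (lt_top_iff_ne_top.2 hne) inferInstance
    set lam : Fin m → L := fun j => φ (Pi.single j 1) with hlam
    have hsingle : ∀ (j : Fin m) (cc : L),
        (Pi.single j cc : Fin m → L) = cc • (Pi.single j (1:L) : Fin m → L) := by
      intro j cc
      funext t
      by_cases h : t = j <;> simp [Pi.single_apply, h]
    have hφeval : ∀ z : Fin m → L, φ z = ∑ j : Fin m, z j * lam j := by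
      intro z
      conv_lhs => rw [← Finset.univ_sum_single z]
      rw [map_sum]
      refine Finset.sum_congr rfl (fun j _ => ?_)
      rw [hsingle j (z j), map_smul, smul_eq_mul, hlam]
    have hlamne : lam ≠ 0 := by
      intro h0
      apply hφne
      ext z
      simp [hφeval, h0]
    have hann : ∀ x : L, ∑ j : Fin m, lam j * (σ ^ (j:ℕ)) (f x) = 0 := by
      intro x
      have hx : Φ x ∈ Submodule.span L ((LinearMap.range Φ : Submodule F (Fin m → L)) : Set (Fin m → L)) :=
        Submodule.subset_span (LinearMap.mem_range_self Φ x)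
      have : φ (Φ x) ∈ Submodule.map φ (Submodule.span L _) := Submodule.mem_map_of_mem hx
      rw [hφbot] at this
      have h0 : φ (Φ x) = 0 := (Submodule.mem_bot L).1 this
      rw [hφeval] at h0
      rw [← h0]
      exact Finset.sum_congr rfl (fun j _ => by rw [hΦapp, mul_comm])
    -- minimal index with nonzero lam
    set sl : Finset (Fin m) := univ.filter (fun j => lam j ≠ 0) with hsl
    have hslne : sl.Nonempty := by
      rcases Function.ne_iff.1 hlamne with ⟨j, hj⟩
      refine ⟨j, ?_⟩
      simp only [hsl, Finset.mem_filter, Finset.mem_univ, true_and]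
      simpa using hj
    set j₀ := sl.min' hslne with hj₀def
    have hlamj₀ : lam j₀ ≠ 0 := by
      have := sl.min'_mem hslne
      simpa [hsl] using this
    have hlbelow : ∀ j : Fin m, j < j₀ → lam j = 0 := by
      intro j hj
      by_contra hne2
      have : j ∈ sl := by simp [hsl, hne2]
      exact absurd (sl.min'_le j this) (not_le.2 hj)
    -- regroup the double sum over automorphism exponents
    set g : Fin (k+1) × Fin m → Fin n := fun p => ⟨(p.1 : ℕ) + (p.2 : ℕ), by omega⟩ with hg
    set c : Fin n → L := fun t =>
      ∑ p ∈ univ.filter (fun p : Fin (k+1) × Fin m => g p = t),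
        lam p.2 * (σ ^ (p.2 : ℕ)) (a p.1) with hc
    have hsum : ∀ x : L, ∑ t : Fin n, c t * (σ ^ (t : ℕ)) x = 0 := by
      intro x
      have expand : ∀ j : Fin m, lam j * (σ ^ (j:ℕ)) (f x)
          = ∑ i : Fin (k+1), lam j * (σ ^ (j:ℕ)) (a i) * (σ ^ ((i:ℕ) + (j:ℕ))) x := by
        intro j
        rw [hf x, map_sum, Finset.mul_sum]
        refine Finset.sum_congr rfl (fun i _ => ?_)
        rw [map_mul, ← mul_assoc]
        congr 1
        rw [← AlgEquiv.mul_apply, ← pow_add, Nat.add_comm]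
      have key : ∑ p : Fin (k+1) × Fin m,
          lam p.2 * (σ ^ (p.2:ℕ)) (a p.1) * (σ ^ ((p.1:ℕ) + (p.2:ℕ))) x = 0 := by
        rw [Fintype.sum_prod_type, Finset.sum_comm]
        calc _ = ∑ j : Fin m, lam j * (σ ^ (j:ℕ)) (f x) := by
                refine Finset.sum_congr rfl (fun j _ => ?_)
                rw [expand j]
        _ = 0 := hann x
      calc ∑ t : Fin n, c t * (σ ^ (t : ℕ)) x
          = ∑ t : Fin n, ∑ p ∈ univ.filter (fun p : Fin (k+1) × Fin m => g p = t),
              lam p.2 * (σ ^ (p.2 : ℕ)) (a p.1) * (σ ^ ((p.1:ℕ) + (p.2:ℕ))) x := by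
            refine Finset.sum_congr rfl (fun t _ => ?_)
            rw [hc, Finset.sum_mul]
            refine Finset.sum_congr rfl (fun p hp => ?_)
            have : g p = t := (Finset.mem_filter.1 hp).2
            have ht : (p.1:ℕ) + (p.2:ℕ) = (t : ℕ) := by rw [← this]
            rw [← ht]
      _ = ∑ p : Fin (k+1) × Fin m,
              lam p.2 * (σ ^ (p.2 : ℕ)) (a p.1) * (σ ^ ((p.1:ℕ) + (p.2:ℕ))) x :=
            Finset.sum_fiberwise _ _ _
      _ = 0 := key
    -- apply Dedekind's theorem
    have hli : LinearIndependent L (fun t : Fin n => ((σ ^ (t:ℕ) : L ≃ₐ[F] L) : L → L)) :=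
      aux_dedekind _ (fun s t hst => hpowinj s t hst)
    have hc0 : ∀ t, c t = 0 := by
      have := Fintype.linearIndependent_iff.1 hli c ?_
      · exact this
      · funext x
        have := hsum x
        simpa [Finset.sum_apply, smul_eq_mul] using this
    -- but the coefficient at i₀ + j₀ is nonzero
    set t₀ : Fin n := g (i₀, j₀) with ht₀
    have hct₀ : c t₀ = lam j₀ * (σ ^ (j₀:ℕ)) (a i₀) := by
      rw [show c t₀ = ∑ p ∈ univ.filter (fun p : Fin (k+1) × Fin m => g p = t₀),
        lam p.2 * (σ ^ (p.2 : ℕ)) (a p.1) from rfl]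
      rw [Finset.sum_eq_single (i₀, j₀)]
      · intro p hp hpne
        have hgp : g p = t₀ := (Finset.mem_filter.1 hp).2
        have hnat : (p.1:ℕ) + (p.2:ℕ) = (i₀:ℕ) + (j₀:ℕ) := by
          have := congrArg (Fin.val) hgp
          simpa [hg, ht₀] using this
        rcases lt_trichotomy p.2 j₀ with h | h | h
        · rw [hlbelow p.2 h, zero_mul]
        · have h2 : (p.2 : ℕ) = (j₀ : ℕ) := congrArg Fin.val h
          have h1 : p.1 = i₀ := Fin.ext (by omega)
          exact absurd (Prod.ext h1 h) hpne
        · have : (p.1 : ℕ) < (i₀ : ℕ) := by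
            have : (j₀ : ℕ) < (p.2 : ℕ) := h
            omega
          rw [hbelow p.1 this, map_zero, mul_zero]
      · intro h
        exact absurd (Finset.mem_filter.2
          ⟨Finset.mem_univ ((i₀, j₀) : Fin (k+1) × Fin m), ht₀.symm⟩) h
    have : lam j₀ * (σ ^ (j₀:ℕ)) (a i₀) = 0 := by rw [← hct₀]; exact hc0 t₀
    rcases mul_eq_zero.1 this with h | h
    · exact hlamj₀ h
    · exact hai₀ ((_root_.map_eq_zero_iff _ (AlgEquiv.injective _)).1 h)
  -- from spanning, the F-rank of the range of Φ is at least m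
  have hrank : m ≤ Module.finrank F (LinearMap.range Φ) := by
    set r := Module.finrank F (LinearMap.range Φ) with hr
    let b := Module.finBasis F (LinearMap.range Φ)
    set w : Fin r → (Fin m → L) := fun i => ((b i : LinearMap.range Φ) : Fin m → L) with hw
    have hsubset : ((LinearMap.range Φ : Submodule F (Fin m → L)) : Set (Fin m → L))
        ⊆ (Submodule.span L (Set.range w) : Set (Fin m → L)) := by
      intro z hz
      have : z ∈ Submodule.span F (Set.range w) := by
        have hbz : (⟨z, hz⟩ : LinearMap.range Φ) ∈ Submodule.span F (Set.range b) := by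
          rw [b.span_eq]; trivial
        have := Submodule.mem_map_of_mem (f := (LinearMap.range Φ).subtype) hbz
        rw [Submodule.map_span] at this
        have himg : (LinearMap.range Φ).subtype '' (Set.range b) = Set.range w := by
          rw [← Set.range_comp]; rfl
        rw [himg] at this
        simpa using this
      exact Submodule.span_le_restrictScalars F L (Set.range w) this
    have hspan2 : Submodule.span L (Set.range w) = ⊤ := by
      rw [eq_top_iff, ← hspan]
      exact Submodule.span_le.2 hsubset
    have hfin : Module.finrank L (Submodule.span L (Set.range w)) ≤ r := by
      refine le_trans (finrank_span_le_card (Set.range w)) ?_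
      rw [Set.toFinset_card]
      simpa using Fintype.card_range_le w
    rw [hspan2] at hfin
    rw [finrank_top] at hfin
    have : Module.finrank L (Fin m → L) = m := by simp
    omega
  -- conclude by rank-nullity
  have hrn := LinearMap.finrank_range_add_finrank_ker Φ
  rw [hker, hn] at hrn
  omega
end

section
/- Let f(x) = -x + b₀x^σ + b₁x^{σq^n} + ... + b_{t-1}x^{σq^{n(t-1)}} ∈ F_{q^{nt}}[x], where σ ∈ Aut(F_{q^{nt}}) restricts to an automorphism of F_{q^n} of order n. Then the F_q-dimension of the set of roots of f in F_{q^{nt}} is at most t. -/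
open Module

/-- Fixed points of a semilinear (w.r.t. an automorphism `σ'` whose fixed field is `Fq`)
map that are `Fq`-linearly independent are `Fqn`-linearly independent. -/
lemma aux_indep {Fq Fqn F : Type*} [Field Fq] [Field Fqn] [Field F]
    [Algebra Fq Fqn] [Algebra Fqn F] [Algebra Fq F] [IsScalarTower Fq Fqn F]
    (σ' : Fqn ≃ₐ[Fq] Fqn)
    (hfix : ∀ c : Fqn, σ' c = c → ∃ a : Fq, algebraMap Fq Fqn a = c)
    (h : F →ₗ[Fq] F)
    (hsemi : ∀ (c : Fqn) (x : F), h (c • x) = σ' c • h x)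
    {ι : Type*} (v : ι → F) (hv : ∀ i, h (v i) = v i)
    (hind : LinearIndependent Fq v) : LinearIndependent Fqn v := by
  classical
  by_contra hcon
  rw [linearIndependent_iff] at hcon
  push_neg at hcon
  obtain ⟨l0, hl0, hl0ne⟩ := hcon
  set P : ℕ → Prop := fun m => ∃ l : ι →₀ Fqn,
      Finsupp.linearCombination Fqn v l = 0 ∧ l ≠ 0 ∧ l.support.card = m with hP
  have hPex : ∃ m, P m := ⟨l0.support.card, l0, hl0, hl0ne, rfl⟩
  obtain ⟨l, hlc, hlne, hlcard⟩ := Nat.find_spec hPex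
  obtain ⟨i₀, hi₀⟩ := Finsupp.support_nonempty_iff.mpr hlne
  have hli₀ : l i₀ ≠ 0 := Finsupp.mem_support_iff.mp hi₀
  -- normalize so that the coefficient at i₀ is 1
  set l' : ι →₀ Fqn := (l i₀)⁻¹ • l with hl'def
  have hl'c : Finsupp.linearCombination Fqn v l' = 0 := by
    rw [hl'def, map_smul, hlc, smul_zero]
  have hl'supp : l'.support = l.support :=
    Finsupp.support_smul_eq (inv_ne_zero hli₀)
  have hl'i₀ : l' i₀ = 1 := by
    simp [hl'def, inv_mul_cancel₀ hli₀]
  -- the image of l' under σ' is again a dependency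
  set l₂ : ι →₀ Fqn := Finsupp.mapRange σ' (map_zero σ') l' with hl₂def
  have hl₂supp : l₂.support = l'.support :=
    Finsupp.support_mapRange_of_injective (map_zero σ') l' σ'.injective
  have hl₂c : Finsupp.linearCombination Fqn v l₂ = 0 := by
    have h0 : h (Finsupp.linearCombination Fqn v l') = 0 := by rw [hl'c, map_zero]
    rw [Finsupp.linearCombination_apply, Finsupp.sum, map_sum] at h0
    rw [Finsupp.linearCombination_apply, Finsupp.sum, hl₂supp]
    calc ∑ i ∈ l'.support, l₂ i • v i
        = ∑ i ∈ l'.support, h (l' i • v i) := by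
          refine Finset.sum_congr rfl fun i _ => ?_
          rw [hsemi, hv]
          simp [hl₂def]
      _ = 0 := h0
  -- the difference is a smaller dependency, hence zero
  set d : ι →₀ Fqn := l₂ - l' with hd
  have hdc : Finsupp.linearCombination Fqn v d = 0 := by
    rw [hd, map_sub, hl₂c, hl'c, sub_zero]
  have hdsupp : d.support ⊆ l'.support.erase i₀ := by
    intro j hj
    have hj' : d j ≠ 0 := Finsupp.mem_support_iff.mp hj
    rw [Finset.mem_erase]
    constructor
    · rintro rfl
      apply hj'
      simp [hd, hl₂def, hl'i₀]
    · rcases Finset.mem_union.mp (Finsupp.support_sub hj) with h1 | h1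
      · rwa [hl₂supp] at h1
      · exact h1
  have hd0 : d = 0 := by
    by_contra hdne
    have hcard : d.support.card < Nat.find hPex := by
      calc d.support.card ≤ (l'.support.erase i₀).card := Finset.card_le_card hdsupp
        _ < l'.support.card := by
            apply Finset.card_erase_lt_of_mem
            rwa [hl'supp]
        _ = Nat.find hPex := by rw [hl'supp, hlcard]
    exact Nat.find_min hPex hcard ⟨d, hdc, hdne, rfl⟩
  have hfixall : ∀ i, σ' (l' i) = l' i := by
    intro i
    have : d i = 0 := by rw [hd0]; rfl
    have : l₂ i - l' i = 0 := this
    have h2 : l₂ i = l' i := sub_eq_zero.mp this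
    simpa [hl₂def] using h2
  -- so all coefficients come from Fq
  choose a ha using fun i => hfix (l' i) (hfixall i)
  have hsum : ∑ i ∈ l'.support, a i • v i = 0 := by
    have := hl'c
    rw [Finsupp.linearCombination_apply, Finsupp.sum] at this
    calc ∑ i ∈ l'.support, a i • v i
        = ∑ i ∈ l'.support, l' i • v i := by
          refine Finset.sum_congr rfl fun i _ => ?_
          rw [← ha i, algebraMap_smul]
      _ = 0 := this
  have := linearIndependent_iff'.mp hind l'.support a hsum i₀ (by rwa [hl'supp])
  apply one_ne_zero (α := Fqn)
  rw [← hl'i₀, ← ha i₀, this, map_zero]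

theorem stmt_3 (q n t : ℕ) (Fq Fqn F : Type*) [Field Fq] [Field Fqn] [Field F]
    [Algebra Fq Fqn] [Algebra Fqn F] [Algebra Fq F] [IsScalarTower Fq Fqn F]
    [Fintype Fq] [Fintype Fqn] [Fintype F]
    (hq : Fintype.card Fq = q) (hqn : Fintype.card Fqn = q ^ n)
    (hF : Fintype.card F = q ^ (n * t))
    (σ : F ≃ₐ[Fq] F) (σ' : Fqn ≃ₐ[Fq] Fqn) (hord : orderOf σ' = n)
    (hres : ∀ c : Fqn, σ (algebraMap Fqn F c) = algebraMap Fqn F (σ' c))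
    (b : Fin t → F)
    (f : F →ₗ[Fq] F)
    (hf : ∀ x, f x = -x + ∑ i : Fin t, b i * σ x ^ q ^ (n * (i : ℕ))) :
    Module.finrank Fq (LinearMap.ker f) ≤ t := by
  classical
  have hq1 : 1 < q := hq ▸ Fintype.one_lt_card
  have hn0 : 0 < n := hord ▸ orderOf_pos σ'
  -- finrank Fq Fqn = n
  have hrk1 : Module.finrank Fq Fqn = n := by
    have := card_eq_pow_finrank (K := Fq) (V := Fqn)
    rw [hq, hqn] at this
    exact (Nat.pow_right_injective hq1 this.symm)
  -- finrank Fqn F = t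
  have hrk2 : Module.finrank Fqn F = t := by
    have := card_eq_pow_finrank (K := Fqn) (V := F)
    rw [hqn, hF, ← pow_mul] at this
    have := Nat.pow_right_injective hq1 this
    exact Nat.eq_of_mul_eq_mul_left hn0 this.symm
  -- the fixed field of σ' is Fq
  have hfix : ∀ c : Fqn, σ' c = c → ∃ a : Fq, algebraMap Fq Fqn a = c := by
    have htop : Subgroup.zpowers σ' = ⊤ := by
      apply Subgroup.eq_top_of_card_eq
      rw [Nat.card_eq_fintype_card (α := Subgroup.zpowers σ'), Fintype.card_zpowers, hord,
        IsGalois.card_aut_eq_finrank, hrk1]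
    have hbot : IntermediateField.fixedField (⊤ : Subgroup (Fqn ≃ₐ[Fq] Fqn)) = ⊥ := by
      rw [← IntermediateField.fixingSubgroup_bot (F := Fq) (E := Fqn),
        IsGalois.fixedField_fixingSubgroup]
    intro c hc
    have hmem : c ∈ IntermediateField.fixedField (⊤ : Subgroup (Fqn ≃ₐ[Fq] Fqn)) := by
      rintro ⟨g, -⟩
      obtain ⟨k, rfl⟩ := Subgroup.mem_zpowers_iff.mp (htop ▸ Subgroup.mem_top g)
      show (σ' ^ k) c = c
      have : ∀ m : ℕ, (σ' ^ m) c = c := by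
        intro m
        induction m with
        | zero => rfl
        | succ m ih => rw [pow_succ, AlgEquiv.mul_apply, hc, ih]
      rcases k with m | m
      · exact this m
      · rw [zpow_negSucc]
        conv_lhs => rw [← this (m + 1)]
        rw [← AlgEquiv.mul_apply, inv_mul_cancel, AlgEquiv.one_apply]
    rw [hbot, IntermediateField.mem_bot] at hmem
    obtain ⟨a, ha⟩ := hmem
    exact ⟨a, ha⟩
  -- the semilinear map
  set h : F →ₗ[Fq] F := f + LinearMap.id with hh
  have hhx : ∀ x, h x = ∑ i : Fin t, b i * σ x ^ q ^ (n * (i : ℕ)) := by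
    intro x
    simp [hh, hf x]
  have hsemi : ∀ (c : Fqn) (x : F), h (c • x) = σ' c • h x := by
    intro c x
    rw [hhx, hhx, Algebra.smul_def, Algebra.smul_def, map_mul, hres, Finset.mul_sum]
    refine Finset.sum_congr rfl fun i _ => ?_
    rw [mul_pow]
    have : (algebraMap Fqn F (σ' c)) ^ q ^ (n * (i : ℕ)) = algebraMap Fqn F (σ' c) := by
      rw [← map_pow]
      congr 1
      rw [pow_mul, ← hqn]
      exact FiniteField.pow_card_pow (i : ℕ) (σ' c)
    rw [this]; ring
  -- basis of the kernel
  have : Module.Finite Fq F := Module.Finite.of_finite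
  let B := Module.finBasis Fq (LinearMap.ker f)
  set v : Fin (Module.finrank Fq (LinearMap.ker f)) → F := fun i => (B i : F) with hvdef
  have hind : LinearIndependent Fq v := by
    have := B.linearIndependent
    exact this.map' (LinearMap.ker f).subtype (Submodule.ker_subtype _)
  have hv : ∀ i, h (v i) = v i := by
    intro i
    have hmem : (B i : F) ∈ LinearMap.ker f := (B i).2
    rw [LinearMap.mem_ker] at hmem
    simp [hh, hvdef, hmem]
  have hFqnind : LinearIndependent Fqn v := aux_indep σ' hfix h hsemi v hv hind
  have := hFqnind.fintype_card_le_finrank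
  rwa [Fintype.card_fin, hrk2] at this
end

section
/- Let G(x) = Σ_{i=0}^{t-1} b_i x^{q^{ni}} be a q^n-polynomial over F_{q^{nt}}, let σ ∈ Aut(F_{q^{nt}}) restrict to an automorphism of F_{q^n} of order n, set H = G∘σ, and let f = H - id. Then f has a nonzero root in F_{q^{nt}} if and only if H^n - id has a nonzero root in F_{q^{nt}} (where H^n denotes the n-fold composition of H). -/
theorem stmt_4 (q n t : ℕ) (Fq Fqn F : Type*) [Field Fq] [Field Fqn] [Field F]
    [Algebra Fq Fqn] [Algebra Fqn F] [Algebra Fq F] [IsScalarTower Fq Fqn F]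
    [Fintype Fq] [Fintype Fqn] [Fintype F]
    (hq : Fintype.card Fq = q) (hqn : Fintype.card Fqn = q ^ n)
    (hF : Fintype.card F = q ^ (n * t))
    (σ : F ≃ₐ[Fq] F) (σ' : Fqn ≃ₐ[Fq] Fqn) (hord : orderOf σ' = n)
    (hres : ∀ c : Fqn, σ (algebraMap Fqn F c) = algebraMap Fqn F (σ' c))
    (b : Fin t → F)
    (H : F → F) (hH : ∀ x, H x = ∑ i : Fin t, b i * σ x ^ q ^ (n * (i : ℕ))) :
    (∃ y : F, y ≠ 0 ∧ H y = y) ↔ (∃ y : F, y ≠ 0 ∧ H^[n] y = y) := by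
  constructor
  · rintro ⟨y, hy, hHy⟩
    exact ⟨y, hy, Function.iterate_fixed hHy n⟩
  rintro ⟨y, hy, hny⟩
  -- characteristic setup
  haveI : CharP Fq (ringChar Fq) := ringChar.charP Fq
  obtain ⟨m, hp, hpm⟩ := FiniteField.card Fq (ringChar Fq)
  set p := ringChar Fq with hpdef
  have hqp : q = p ^ (m : ℕ) := by rw [← hq, hpm]
  haveI : CharP F p := charP_of_injective_algebraMap (algebraMap Fq F).injective p
  haveI : Fact p.Prime := ⟨hp⟩
  -- additivity of powers of q
  have hpow_add : ∀ (k : ℕ) (a c : F), (a + c) ^ q ^ k = a ^ q ^ k + c ^ q ^ k := by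
    intro k a c
    rw [hqp, ← pow_mul]
    exact add_pow_char_pow a c p (↑m * k)
  -- H is additive
  have hadd : ∀ a c : F, H (a + c) = H a + H c := by
    intro a c
    rw [hH, hH, hH, ← Finset.sum_add_distrib]
    refine Finset.sum_congr rfl fun i _ => ?_
    rw [map_add, hpow_add, mul_add]
  -- H is σ'-semilinear over Fqn
  have hsemi : ∀ (c : Fqn) (x : F),
      H (algebraMap Fqn F c * x) = algebraMap Fqn F (σ' c) * H x := by
    intro c x
    rw [hH, hH, Finset.mul_sum]
    refine Finset.sum_congr rfl fun i _ => ?_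
    rw [map_mul, hres, mul_pow, ← map_pow]
    have : (σ' c) ^ q ^ (n * (i : ℕ)) = σ' c := by
      rw [pow_mul, ← hqn]
      exact FiniteField.pow_card_pow _ _
    rw [this]; ring
  -- iterated semilinearity
  have hsemi_it : ∀ (k : ℕ) (c : Fqn) (x : F),
      H^[k] (algebraMap Fqn F c * x) = algebraMap Fqn F ((σ' ^ k) c) * H^[k] x := by
    intro k
    induction k with
    | zero => simp
    | succ k ih =>
      intro c x
      rw [Function.iterate_succ_apply, Function.iterate_succ_apply, hsemi, ih]
      congr 2
  have hn : 0 < n := by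
    rcases Nat.eq_zero_or_pos n with h | h
    · exfalso
      have h2 := Fintype.one_lt_card (α := Fqn)
      rw [hqn, h, pow_zero] at h2
      omega
    · exact h
  -- the candidate fixed points
  set N : Fqn → F := fun a =>
    ∑ k ∈ Finset.range n, algebraMap Fqn F ((σ' ^ k) a) * H^[k] y with hN
  have hσn : σ' ^ n = 1 := by rw [← hord]; exact pow_orderOf_eq_one σ'
  have hfix : ∀ a : Fqn, H (N a) = N a := by
    intro a
    have Ha : F →+ F := AddMonoidHom.mk' H hadd
    have hmap : H (N a) = ∑ k ∈ Finset.range n,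
        H (algebraMap Fqn F ((σ' ^ k) a) * H^[k] y) := by
      exact map_sum (AddMonoidHom.mk' H hadd) _ _
    set g : ℕ → F := fun k => algebraMap Fqn F ((σ' ^ k) a) * H^[k] y with hg
    have hterm : ∀ k, H (algebraMap Fqn F ((σ' ^ k) a) * H^[k] y) = g (k + 1) := by
      intro k
      rw [hsemi, hg]
      simp only
      rw [Function.iterate_succ_apply']
      congr 2
      rw [pow_succ', AlgEquiv.mul_apply]
    rw [hmap, Finset.sum_congr rfl fun k _ => hterm k]
    have hgn : g n = g 0 := by
      rw [hg]; simp only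
      rw [hσn, hny]
      simp
    have h1 : ∑ k ∈ Finset.range (n + 1), g k = (∑ k ∈ Finset.range n, g (k + 1)) + g 0 :=
      Finset.sum_range_succ' g n
    have h2 : ∑ k ∈ Finset.range (n + 1), g k = (∑ k ∈ Finset.range n, g k) + g n :=
      Finset.sum_range_succ g n
    have : (∑ k ∈ Finset.range n, g (k + 1)) + g 0 = (∑ k ∈ Finset.range n, g k) + g 0 := by
      rw [← h1, h2, hgn]
    have := add_right_cancel this
    rw [this]
  by_cases hex : ∃ a : Fqn, N a ≠ 0
  · obtain ⟨a, ha⟩ := hex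
    exact ⟨N a, ha, hfix a⟩
  push_neg at hex
  -- Dedekind linear independence of characters gives a contradiction
  exfalso
  set f : Fin n → (Fqn →* F) := fun k =>
    { toFun := fun a => algebraMap Fqn F ((σ' ^ (k : ℕ)) a)
      map_one' := by simp
      map_mul' := by intros; simp } with hf
  have finj : Function.Injective f := by
    intro k j hkj
    have heq : ∀ a : Fqn, algebraMap Fqn F ((σ' ^ (k : ℕ)) a) = algebraMap Fqn F ((σ' ^ (j : ℕ)) a) := by
      intro a
      exact DFunLike.congr_fun hkj a
    have hσeq : σ' ^ (k : ℕ) = σ' ^ (j : ℕ) := by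
      ext a
      exact (algebraMap Fqn F).injective (heq a)
    have := pow_injOn_Iio_orderOf (x := σ')
      (by rw [hord]; exact k.isLt) (by rw [hord]; exact j.isLt) hσeq
    exact Fin.ext this
  have li : LinearIndependent F (fun k : Fin n => ⇑(f k)) :=
    (linearIndependent_monoidHom Fqn F).comp f finj
  have h0 : ∑ k : Fin n, H^[(k : ℕ)] y • ⇑(f k) = 0 := by
    funext a
    have : ∑ k : Fin n, H^[(k : ℕ)] y * (f k) a = N a := by
      simp only [hN]
      rw [← Fin.sum_univ_eq_sum_range (fun k => algebraMap Fqn F ((σ' ^ k) a) * H^[k] y) n]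
      exact Finset.sum_congr rfl fun k _ => by rw [hf]; simp [mul_comm]
    simp only [Finset.sum_apply, Pi.smul_apply, smul_eq_mul, Pi.zero_apply]
    rw [this, hex a]
  have := Fintype.linearIndependent_iff.mp li (fun k => H^[(k : ℕ)] y) h0 ⟨0, hn⟩
  simp at this
  exact hy this
end

section
/- Let G(x) = Σ_{i=0}^{t-1} b_i x^{q^{ni}}, σ ∈ Aut(F_{q^{nt}}) restricting to an automorphism of F_{q^n} of order n, H = G∘σ, and f = H - id. Then dim_{F_q} ker f = dim_{F_{q^n}} ker(H^n - id), where H^n is the n-fold composite. In particular, dim_{F_q} ker f = t if and only if H^n = id. -/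
open Module

section Aux

variable {Fq Fqn F : Type*} [Field Fq] [Field Fqn] [Field F]
  [Algebra Fq Fqn] [Algebra Fqn F] [Algebra Fq F] [IsScalarTower Fq Fqn F]

private theorem key_step5 (σ' : Fqn ≃ₐ[Fq] Fqn) (H : F → F)
    (hsemi : ∀ (c : Fqn) (x : F), H (algebraMap Fqn F c * x) = algebraMap Fqn F (σ' c) * H x)
    (Hf : F →ₗ[Fq] F) (hHf : ∀ x, H x = Hf x)
    {ι : Type*} (s : Finset ι) (w : ι → F) (hfixw : ∀ i, H (w i) = w i)
    (c : ι → Fqn) (hrel : ∑ i ∈ s, c i • w i = 0) :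
    ∑ i ∈ s, σ' (c i) • w i = 0 := by
  have h0 : H 0 = 0 := by rw [hHf]; exact map_zero Hf
  have h1 := congrArg H hrel
  rw [h0, hHf, map_sum] at h1
  rw [← h1]
  refine Finset.sum_congr rfl fun i _ => ?_
  rw [← hHf, Algebra.smul_def (c i) (w i), hsemi, hfixw, ← Algebra.smul_def]

private theorem indep5 (σ' : Fqn ≃ₐ[Fq] Fqn)
    (hfix : ∀ c : Fqn, σ' c = c → ∃ a : Fq, algebraMap Fq Fqn a = c)
    (H : F → F)
    (hsemi : ∀ (c : Fqn) (x : F), H (algebraMap Fqn F c * x) = algebraMap Fqn F (σ' c) * H x)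
    (Hf : F →ₗ[Fq] F) (hHf : ∀ x, H x = Hf x)
    {ι : Type*} [Fintype ι] (w : ι → F) (hw : LinearIndependent Fq w)
    (hfixw : ∀ i, H (w i) = w i) :
    LinearIndependent Fqn w := by
  classical
  rw [Fintype.linearIndependent_iff]
  suffices h : ∀ k (g : ι → Fqn), (Finset.univ.filter fun i => g i ≠ 0).card ≤ k →
      ∑ i, g i • w i = 0 → ∀ i, g i = 0 by
    intro g hg i
    exact h _ g le_rfl hg i
  intro k
  induction k with
  | zero =>
    intro g hcard hrel i
    by_contra hgi
    have hi : i ∈ Finset.univ.filter (fun i => g i ≠ 0) := by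
      simp [hgi]
    rw [Nat.le_zero, Finset.card_eq_zero] at hcard
    rw [hcard] at hi
    exact absurd hi (Finset.notMem_empty i)
  | succ k ih =>
    intro g hcard hrel
    by_cases hne : ∀ i, g i = 0
    · exact hne
    push_neg at hne
    obtain ⟨i0, hi0⟩ := hne
    exfalso
    set c : ι → Fqn := fun i => (g i0)⁻¹ * g i with hc
    have hci0 : c i0 = 1 := inv_mul_cancel₀ hi0
    have hrelc : ∑ i, c i • w i = 0 := by
      have h2 : ∑ i, c i • w i = (g i0)⁻¹ • ∑ i, g i • w i := by
        rw [Finset.smul_sum]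
        exact Finset.sum_congr rfl fun i _ => (smul_smul _ _ _).symm
      rw [h2, hrel, smul_zero]
    have hrelσ : ∑ i, σ' (c i) • w i = 0 :=
      key_step5 σ' H hsemi Hf hHf _ w hfixw c hrelc
    set g' : ι → Fqn := fun i => σ' (c i) - c i with hg'
    have hrelg' : ∑ i, g' i • w i = 0 := by
      simp only [hg', sub_smul]
      rw [Finset.sum_sub_distrib, hrelσ, hrelc, sub_zero]
    have hsupp : (Finset.univ.filter fun i => g' i ≠ 0) ⊆
        (Finset.univ.filter fun i => g i ≠ 0).erase i0 := by
      intro i hi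
      simp only [Finset.mem_filter, Finset.mem_univ, true_and] at hi
      rw [Finset.mem_erase]
      refine ⟨?_, ?_⟩
      · rintro rfl
        exact hi (by simp [hg', hci0])
      · simp only [Finset.mem_filter, Finset.mem_univ, true_and]
        intro hgi
        exact hi (by simp [hg', hc, hgi])
    have hmem0 : i0 ∈ Finset.univ.filter (fun i => g i ≠ 0) := by simp [hi0]
    have hcard' : (Finset.univ.filter fun i => g' i ≠ 0).card ≤ k := by
      have h1 := Finset.card_le_card hsupp
      have h2 := Finset.card_erase_of_mem hmem0
      have h3 : 1 ≤ (Finset.univ.filter fun i => g i ≠ 0).card :=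
        Finset.card_pos.mpr ⟨i0, hmem0⟩
      omega
    have hzero := ih g' hcard' hrelg'
    have hfixc : ∀ i, σ' (c i) = c i := fun i => sub_eq_zero.mp (hzero i)
    choose a ha using fun i => hfix (c i) (hfixc i)
    have hrelA : ∑ i, a i • w i = 0 := by
      rw [← hrelc]
      refine Finset.sum_congr rfl fun i _ => ?_
      rw [← ha i, algebraMap_smul]
    have hA := Fintype.linearIndependent_iff.mp hw a hrelA
    have hzero0 : c i0 = 0 := by rw [← ha i0, hA i0, map_zero]
    rw [hci0] at hzero0
    exact one_ne_zero hzero0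

end Aux

theorem stmt_5 (q n t : ℕ) (Fq Fqn F : Type*) [Field Fq] [Field Fqn] [Field F]
    [Algebra Fq Fqn] [Algebra Fqn F] [Algebra Fq F] [IsScalarTower Fq Fqn F]
    [Fintype Fq] [Fintype Fqn] [Fintype F]
    (hq : Fintype.card Fq = q) (hqn : Fintype.card Fqn = q ^ n)
    (hF : Fintype.card F = q ^ (n * t))
    (σ : F ≃ₐ[Fq] F) (σ' : Fqn ≃ₐ[Fq] Fqn) (hord : orderOf σ' = n)
    (hres : ∀ c : Fqn, σ (algebraMap Fqn F c) = algebraMap Fqn F (σ' c))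
    (b : Fin t → F)
    (H : F → F) (hH : ∀ x, H x = ∑ i : Fin t, b i * σ x ^ q ^ (n * (i : ℕ)))
    (f : F →ₗ[Fq] F) (hf : ∀ x, f x = H x - x)
    (g : F →ₗ[Fqn] F) (hg : ∀ x, g x = H^[n] x - x) :
    Module.finrank Fq (LinearMap.ker f) = Module.finrank Fqn (LinearMap.ker g) ∧
      (Module.finrank Fq (LinearMap.ker f) = t ↔ ∀ x, H^[n] x = x) := by
  classical
  have hq2 : 2 ≤ q := by rw [← hq]; exact Fintype.one_lt_card
  have hn1 : 1 ≤ n := by rw [← hord]; exact orderOf_pos σ'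
  have hdF : finrank Fqn F = t := by
    have hc := card_eq_pow_finrank (K := Fqn) (V := F)
    rw [hF, hqn, ← pow_mul] at hc
    have h2 : n * t = n * finrank Fqn F := Nat.pow_right_injective hq2 hc
    exact (Nat.eq_of_mul_eq_mul_left (by omega) h2).symm
  -- Hf : bundled version of H
  set Hf : F →ₗ[Fq] F := f + LinearMap.id with hHfdef
  have hHf : ∀ x, H x = Hf x := by
    intro x
    simp only [hHfdef, LinearMap.add_apply, LinearMap.id_apply, hf x]
    ring
  -- semilinearity
  have hpow : ∀ (d : Fqn) (i : ℕ), (algebraMap Fqn F d) ^ q ^ (n * i) = algebraMap Fqn F d := by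
    intro d i
    rw [← map_pow]
    congr 1
    rw [pow_mul, ← hqn]
    exact FiniteField.pow_card_pow i d
  have hsemi : ∀ (c : Fqn) (x : F),
      H (algebraMap Fqn F c * x) = algebraMap Fqn F (σ' c) * H x := by
    intro c x
    rw [hH, hH, Finset.mul_sum]
    refine Finset.sum_congr rfl fun i _ => ?_
    rw [map_mul, hres, mul_pow, hpow]
    ring
  -- fixed points of σ' are Fq
  have hfix : ∀ c : Fqn, σ' c = c → ∃ a : Fq, algebraMap Fq Fqn a = c := by
    intro c hcσ
    set G := Subgroup.zpowers σ' with hG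
    haveI : Fintype G := Fintype.ofFinite G
    haveI : FaithfulSMul G Fqn :=
      ⟨fun {g₁ g₂} h => Subtype.ext (AlgEquiv.ext h)⟩
    have hcardG : Fintype.card G = n := by
      rw [← Nat.card_eq_fintype_card, Nat.card_zpowers, hord]
    have hfr := FixedPoints.finrank_eq_card G Fqn
    rw [hcardG] at hfr
    set K0 := FixedPoints.subfield G Fqn with hK0
    haveI : Fintype K0 := Fintype.ofFinite K0
    have hcardK0 : Fintype.card K0 = q := by
      have hc := card_eq_pow_finrank (K := K0) (V := Fqn)
      rw [hqn, hfr] at hc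
      exact (Nat.pow_left_injective (by omega) hc.symm)
    have hmem : ∀ a : Fq, algebraMap Fq Fqn a ∈ K0 := by
      intro a
      intro gg
      show gg • algebraMap Fq Fqn a = algebraMap Fq Fqn a
      obtain ⟨x, hx⟩ := gg
      show x • algebraMap Fq Fqn a = algebraMap Fq Fqn a
      exact x.commutes a
    set φ : Fq → K0 := fun a => ⟨algebraMap Fq Fqn a, hmem a⟩ with hφ
    have hφinj : Function.Injective φ := by
      intro a₁ a₂ h
      have := congrArg Subtype.val h
      exact (algebraMap Fq Fqn).injective this
    have hφbij : Function.Bijective φ :=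
      (Fintype.bijective_iff_injective_and_card φ).mpr ⟨hφinj, by rw [hq, hcardK0]⟩
    have hcK0 : c ∈ K0 := by
      intro gg
      obtain ⟨x, hx⟩ := gg
      show x • c = c
      have hst : Subgroup.zpowers σ' ≤ MulAction.stabilizer (Fqn ≃ₐ[Fq] Fqn) c := by
        rw [Subgroup.zpowers_le]
        exact hcσ
      exact hst hx
    obtain ⟨a, ha⟩ := hφbij.2 ⟨c, hcK0⟩
    exact ⟨a, congrArg Subtype.val ha⟩
  -- kernels
  have hkerf : ∀ x : F, x ∈ LinearMap.ker f ↔ H x = x := by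
    intro x; rw [LinearMap.mem_ker, hf, sub_eq_zero]
  have hkerg : ∀ x : F, x ∈ LinearMap.ker g ↔ H^[n] x = x := by
    intro x; rw [LinearMap.mem_ker, hg, sub_eq_zero]
  have hsub : ∀ x : F, x ∈ LinearMap.ker f → x ∈ LinearMap.ker g := by
    intro x hx
    rw [hkerg]
    exact Function.iterate_fixed ((hkerf x).mp hx) n
  -- basis of ker f
  set d1 := finrank Fq (LinearMap.ker f) with hd1
  set bb := Module.finBasis Fq (LinearMap.ker f) with hbb
  set w : Fin d1 → F := fun i => ((bb i : LinearMap.ker f) : F) with hw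
  have hwmem : ∀ i, w i ∈ LinearMap.ker f := fun i => (bb i).2
  have hwind : LinearIndependent Fq w :=
    bb.linearIndependent.map' (LinearMap.ker f).subtype (Submodule.ker_subtype _)
  have hwfix : ∀ i, H (w i) = w i := fun i => (hkerf _).mp (hwmem i)
  have hindFqn : LinearIndependent Fqn w :=
    indep5 σ' hfix H hsemi Hf hHf w hwind hwfix
  -- spanning
  set p : Submodule Fqn F := Submodule.span Fqn (Set.range w) with hp
  have hkerf_sub_p : ∀ x : F, x ∈ LinearMap.ker f → x ∈ p := by
    intro x hx
    have h1 : x ∈ Submodule.span Fq (Set.range w) := by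
      have h2 : (⟨x, hx⟩ : LinearMap.ker f) ∈ Submodule.span Fq (Set.range bb) := by
        rw [bb.span_eq]; trivial
      have h3 : Submodule.span Fq (Set.range w) =
          Submodule.map (LinearMap.ker f).subtype (Submodule.span Fq (Set.range bb)) := by
        rw [Submodule.map_span, ← Set.range_comp]
        rfl
      rw [h3]
      exact ⟨⟨x, hx⟩, h2, rfl⟩
    have h4 : Submodule.span Fq (Set.range w) ≤ p.restrictScalars Fq :=
      Submodule.span_le.mpr Submodule.subset_span
    exact h4 h1
  have hspan : ∀ v : F, v ∈ LinearMap.ker g → v ∈ p := by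
    intro v hv
    have hvfix : H^[n] v = v := (hkerg v).mp hv
    -- the averaged elements
    set r : Fqn → F := fun c => ∑ i ∈ Finset.range n,
      algebraMap Fqn F ((σ' ^ i) c) * H^[i] v with hr
    have hrker : ∀ c, r c ∈ LinearMap.ker f := by
      intro c
      rw [hkerf, hr]
      set A : ℕ → F := fun i => algebraMap Fqn F ((σ' ^ i) c) * H^[i] v with hA
      have hterm : ∀ i, H (A i) = A (i + 1) := by
        intro i
        rw [hA]
        show H (algebraMap Fqn F ((σ' ^ i) c) * H^[i] v) = _
        rw [hsemi]
        congr 1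
        · congr 1
          rw [pow_succ']
          rfl
        · rw [Function.iterate_succ_apply']
      have hAn : A n = A 0 := by
        rw [hA]
        show algebraMap Fqn F ((σ' ^ n) c) * H^[n] v = algebraMap Fqn F ((σ' ^ 0) c) * H^[0] v
        rw [← hord, pow_orderOf_eq_one, hord, hvfix]
        simp
      have hHsum : H (∑ i ∈ Finset.range n, A i) = ∑ i ∈ Finset.range n, A (i + 1) := by
        rw [hHf, map_sum]
        exact Finset.sum_congr rfl fun i _ => by rw [← hHf, hterm]
      rw [hHsum]
      have hshift : ∑ i ∈ Finset.range n, A (i + 1) + A 0 =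
          ∑ i ∈ Finset.range n, A i + A n := by
        rw [← Finset.sum_range_succ', ← Finset.sum_range_succ]
      rw [hAn] at hshift
      exact add_right_cancel hshift
    -- dual argument
    have hQ : ∀ φ : Module.Dual Fqn (F ⧸ p), φ (p.mkQ v) = 0 := by
      intro φ
      set ψ : F →ₗ[Fqn] Fqn := φ.comp p.mkQ with hψ
      have hψp : ∀ x : F, x ∈ p → ψ x = 0 := by
        intro x hx
        show φ (p.mkQ x) = 0
        rw [Submodule.mkQ_apply, (Submodule.Quotient.mk_eq_zero p).mpr hx, map_zero]
      have hrel : ∀ c : Fqn, ∑ i ∈ Finset.range n, (σ' ^ i) c * ψ (H^[i] v) = 0 := by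
        intro c
        have h5 : ψ (r c) = 0 := hψp _ (hkerf_sub_p _ (hrker c))
        rw [hr, map_sum] at h5
        rw [← h5]
        refine Finset.sum_congr rfl fun i _ => ?_
        rw [← Algebra.smul_def, map_smul, smul_eq_mul]
      -- Dedekind independence of characters
      set χ : Fin n → (Fqn →* Fqn) :=
        fun i => ⟨⟨⇑(σ' ^ (i : ℕ)), map_one _⟩, map_mul _⟩ with hχ
      have hχinj : Function.Injective χ := by
        intro i j hij
        have hσp : σ' ^ (i : ℕ) = σ' ^ (j : ℕ) := by
          ext c
          exact DFunLike.congr_fun hij c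
        have hmod := pow_eq_pow_iff_modEq.mp hσp
        rw [hord] at hmod
        have : (i : ℕ) % n = (j : ℕ) % n := hmod
        rw [Nat.mod_eq_of_lt i.isLt, Nat.mod_eq_of_lt j.isLt] at this
        exact Fin.ext this
      have hli : LinearIndependent Fqn (fun i : Fin n => ((χ i : Fqn →* Fqn) : Fqn → Fqn)) :=
        (linearIndependent_monoidHom Fqn Fqn).comp χ hχinj
      have hrel2 : ∑ i : Fin n, ψ (H^[(i : ℕ)] v) • ((χ i : Fqn →* Fqn) : Fqn → Fqn) = 0 := by
        funext c
        have h9 := hrel c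
        rw [← Fin.sum_univ_eq_sum_range (fun i => (σ' ^ i) c * ψ (H^[i] v)) n] at h9
        simp only [Finset.sum_apply, Pi.smul_apply, smul_eq_mul, Pi.zero_apply, hχ,
          MonoidHom.coe_mk, OneHom.coe_mk]
        exact (Finset.sum_congr rfl fun i _ => mul_comm _ _).trans h9
      have hcoef := Fintype.linearIndependent_iff.mp hli
        (fun i => ψ (H^[(i : ℕ)] v)) hrel2
      have h0 := hcoef ⟨0, by omega⟩
      have h0' : ψ v = 0 := by simpa using h0
      exact h0'
    have := (Module.forall_dual_apply_eq_zero_iff Fqn (p.mkQ v)).mp hQ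
    rwa [Submodule.mkQ_apply, Submodule.Quotient.mk_eq_zero] at this
  -- conclude part 1
  have hspaneq : p = LinearMap.ker g := by
    apply le_antisymm
    · rw [hp, Submodule.span_le]
      rintro x ⟨i, rfl⟩
      exact hsub _ (hwmem i)
    · intro v hv
      exact hspan v hv
  have hpart1 : finrank Fq (LinearMap.ker f) = finrank Fqn (LinearMap.ker g) := by
    have h6 := finrank_span_eq_card hindFqn
    rw [Fintype.card_fin] at h6
    rw [← hspaneq, hp]
    exact h6.symm
  refine ⟨hpart1, ?_, ?_⟩
  · intro hd x
    have h7 : finrank Fqn (LinearMap.ker g) = finrank Fqn F := by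
      rw [← hpart1, ← hd1, hd, hdF]
    have htop : LinearMap.ker g = ⊤ := Submodule.eq_top_of_finrank_eq h7
    have h8 : x ∈ LinearMap.ker g := by rw [htop]; trivial
    exact (hkerg x).mp h8
  · intro hid
    have htop : LinearMap.ker g = ⊤ := by
      rw [eq_top_iff]
      intro x _
      rw [hkerg]
      exact hid x
    rw [hd1, hpart1, htop, finrank_top, hdF]
end

section
/- With H = G∘σ as above and L = H^{n-1} + H^{n-2} + ... + H + id, the kernel of f = H - id equals the image under L of the set E₁(H^n) = {y ∈ F_{q^{nt}} : H^n(y) = y}, i.e., ker f = L(E₁(H^n)). -/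
theorem stmt_6 (q n t : ℕ) (Fq Fqn F : Type*) [Field Fq] [Field Fqn] [Field F]
    [Algebra Fq Fqn] [Algebra Fqn F] [Algebra Fq F] [IsScalarTower Fq Fqn F]
    [Fintype Fq] [Fintype Fqn] [Fintype F]
    (hq : Fintype.card Fq = q) (hqn : Fintype.card Fqn = q ^ n)
    (hF : Fintype.card F = q ^ (n * t))
    (σ : F ≃ₐ[Fq] F) (σ' : Fqn ≃ₐ[Fq] Fqn) (hord : orderOf σ' = n)
    (hres : ∀ c : Fqn, σ (algebraMap Fqn F c) = algebraMap Fqn F (σ' c))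
    (b : Fin t → F)
    (H : F → F) (hH : ∀ x, H x = ∑ i : Fin t, b i * σ x ^ q ^ (n * (i : ℕ))) :
    {x : F | H x = x} =
      (fun y => ∑ j ∈ Finset.range n, H^[j] y) '' {y : F | H^[n] y = y} := by
  -- basic numerology
  have hq2 : 1 < q := by
    have := Fintype.one_lt_card (α := Fq); omega
  have hn1 : 1 ≤ n := by
    by_contra h
    have h0 : n = 0 := by omega
    have := Fintype.one_lt_card (α := Fqn)
    rw [hqn, h0, pow_zero] at this; omega
  have ht1 : 1 ≤ t := by
    by_contra h
    have h0 : t = 0 := by omega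
    have := Fintype.one_lt_card (α := F)
    rw [hF, h0, Nat.mul_zero, pow_zero] at this; omega
  -- characteristic
  set p := ringChar F with hp_def
  have hp : p.Prime := CharP.char_is_prime F p
  haveI : Fact p.Prime := ⟨hp⟩
  obtain ⟨k, -, hcard⟩ := FiniteField.card F p
  obtain ⟨j, -, hqpj⟩ : ∃ j ≤ (k : ℕ), q = p ^ j :=
    (Nat.dvd_prime_pow hp).1 (by
      rw [← hcard, hF]; exact dvd_pow_self q (by positivity))
  classical
  -- Frobenius additivity
  have hfrob : ∀ (m : ℕ) (u v : F), (u + v) ^ q ^ m = u ^ q ^ m + v ^ q ^ m := by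
    intro m u v
    rw [hqpj, ← pow_mul]
    exact add_pow_char_pow u v p (j * m)
  -- H is additive
  have hadd : ∀ x y, H (x + y) = H x + H y := by
    intro x y
    simp only [hH, map_add]
    rw [← Finset.sum_add_distrib]
    refine Finset.sum_congr rfl fun i _ => ?_
    rw [hfrob, mul_add]
  have h0 : H 0 = 0 := by
    simp only [hH, map_zero]
    rw [Finset.sum_eq_zero]
    intro i _
    rw [zero_pow (by positivity), mul_zero]
  have hsum : ∀ (s : Finset ℕ) (f : ℕ → F), H (∑ i ∈ s, f i) = ∑ i ∈ s, H (f i) := by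
    intro s f
    induction s using Finset.induction with
    | empty => simpa using h0
    | insert a s hx ih => rw [Finset.sum_insert hx, hadd, ih, Finset.sum_insert hx]
  -- semilinearity of H
  have hsemi : ∀ (l : Fqn) (x : F),
      H (algebraMap Fqn F l * x) = algebraMap Fqn F (σ' l) * H x := by
    intro l x
    simp only [hH, map_mul]
    rw [Finset.mul_sum]
    refine Finset.sum_congr rfl fun i _ => ?_
    rw [hres, mul_pow, ← map_pow]
    have hz : σ' l ^ q ^ (n * (i : ℕ)) = σ' l := by
      have := FiniteField.pow_card_pow (i : ℕ) (σ' l)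
      rwa [hqn, ← pow_mul] at this
    rw [hz]; ring
  have hsemij : ∀ (m : ℕ) (l : Fqn) (x : F),
      H^[m] (algebraMap Fqn F l * x) = algebraMap Fqn F ((σ' ^ m) l) * H^[m] x := by
    intro m
    induction m with
    | zero => intro l x; simp
    | succ m ih =>
        intro l x
        rw [Function.iterate_succ_apply', Function.iterate_succ_apply', ih, hsemi]
        congr 2
        rw [pow_succ']
        rfl
  have hσn : σ' ^ n = 1 := by rw [← hord]; exact pow_orderOf_eq_one σ'
  ext x
  simp only [Set.mem_setOf_eq, Set.mem_image]
  constructor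
  · -- ker (H - 1) ⊆ L(E₁(Hⁿ))
    intro hx
    have hxj : ∀ m, H^[m] x = x := by
      intro m
      induction m with
      | zero => rfl
      | succ m ih => rw [Function.iterate_succ_apply', ih, hx]
    -- find μ with ∑ σ'^j μ ≠ 0
    have hex : ∃ μ : Fqn, ∑ i ∈ Finset.range n, (σ' ^ i) μ ≠ 0 := by
      by_contra hcon
      push_neg at hcon
      have li : LinearIndependent Fqn (fun (f : Fqn ≃ₐ[Fq] Fqn) => (f : Fqn → Fqn)) :=
        LinearIndependent.comp (ι' := Fqn ≃ₐ[Fq] Fqn)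
          (linearIndependent_monoidHom Fqn Fqn) (fun f => f)
          (fun x y h => by ext a; exact DFunLike.ext_iff.1 h a)
      have hinj : ∀ a ∈ Finset.range n, ∀ b ∈ Finset.range n,
          σ' ^ a = σ' ^ b → a = b := by
        intro a ha b hb hab
        rw [Finset.mem_range] at ha hb
        rcases le_total a b with h | h
        · have h2 : σ' ^ (b - a) = 1 := by
            have h1 : σ' ^ a * σ' ^ (b - a) = σ' ^ a * 1 := by
              rw [← pow_add, Nat.add_sub_cancel' h, hab, mul_one]
            exact mul_left_cancel h1
          have h3 : b - a = 0 :=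
            Nat.eq_zero_of_dvd_of_lt (hord ▸ orderOf_dvd_of_pow_eq_one h2) (by omega)
          omega
        · have h2 : σ' ^ (a - b) = 1 := by
            have h1 : σ' ^ b * σ' ^ (a - b) = σ' ^ b * 1 := by
              rw [← pow_add, Nat.add_sub_cancel' h, ← hab, mul_one]
            exact mul_left_cancel h1
          have h3 : a - b = 0 :=
            Nat.eq_zero_of_dvd_of_lt (hord ▸ orderOf_dvd_of_pow_eq_one h2) (by omega)
          omega
      have hzero : ∑ f ∈ (Finset.range n).image (fun i => σ' ^ i),
          (1 : Fqn) • (f : Fqn → Fqn) = 0 := by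
        funext μ
        rw [Finset.sum_apply]
        simp only [one_smul]
        rw [Finset.sum_image hinj]
        exact hcon μ
      have := linearIndependent_iff'.1 li _ _ hzero (σ' ^ 0)
        (Finset.mem_image.2 ⟨0, Finset.mem_range.2 (by omega), rfl⟩)
      exact one_ne_zero this
    obtain ⟨μ, hμ⟩ := hex
    set c : Fqn := ∑ i ∈ Finset.range n, (σ' ^ i) μ with hc
    -- c is fixed by σ'
    have hshift : ∀ i, (fun i => (σ' ^ i) μ) (i) = (σ' ^ i) μ := fun _ => rfl
    have hfn : (σ' ^ n) μ = (σ' ^ 0) μ := by rw [hσn]; rfl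
    have hfix : σ' c = c := by
      have h1 : σ' c = ∑ i ∈ Finset.range n, (σ' ^ (i + 1)) μ := by
        rw [hc, map_sum]
        refine Finset.sum_congr rfl fun i _ => ?_
        rw [pow_succ']
        rfl
      have h2 : (∑ i ∈ Finset.range n, (σ' ^ (i + 1)) μ) + (σ' ^ 0) μ
          = (∑ i ∈ Finset.range n, (σ' ^ i) μ) + (σ' ^ n) μ := by
        rw [← Finset.sum_range_succ' (fun i => (σ' ^ i) μ) n,
          ← Finset.sum_range_succ (fun i => (σ' ^ i) μ) n]
      rw [hfn] at h2
      rw [h1, ← hc] at *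
      exact add_right_cancel h2
    have hfixj : ∀ m, (σ' ^ m) c = c := by
      intro m
      induction m with
      | zero => rfl
      | succ m ih => rw [pow_succ', AlgEquiv.mul_apply, ih, hfix]
    set l : Fqn := c⁻¹ * μ with hl
    have hTl : ∑ i ∈ Finset.range n, (σ' ^ i) l = 1 := by
      have : ∀ i, (σ' ^ i) l = c⁻¹ * (σ' ^ i) μ := by
        intro i
        rw [hl, map_mul, map_inv₀, hfixj]
      simp_rw [this]
      rw [← Finset.mul_sum, ← hc, inv_mul_cancel₀ hμ]
    refine ⟨algebraMap Fqn F l * x, ?_, ?_⟩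
    · rw [hsemij, hσn, hxj]
      rfl
    · have : ∀ i ∈ Finset.range n, H^[i] (algebraMap Fqn F l * x)
          = algebraMap Fqn F ((σ' ^ i) l) * x := by
        intro i _
        rw [hsemij, hxj]
      rw [Finset.sum_congr rfl this, ← Finset.sum_mul, ← map_sum, hTl, map_one, one_mul]
  · -- L(E₁(Hⁿ)) ⊆ ker (H - 1)
    rintro ⟨y, hy, rfl⟩
    have h1 : H (∑ i ∈ Finset.range n, H^[i] y) = ∑ i ∈ Finset.range n, H^[i + 1] y := by
      rw [hsum]
      exact Finset.sum_congr rfl fun i _ => (Function.iterate_succ_apply' H i y).symm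
    have hfn : H^[n] y = H^[0] y := hy
    have h2 : (∑ i ∈ Finset.range n, H^[i + 1] y) + H^[0] y
        = (∑ i ∈ Finset.range n, H^[i] y) + H^[n] y := by
      rw [← Finset.sum_range_succ' (fun i => H^[i] y) n,
        ← Finset.sum_range_succ (fun i => H^[i] y) n]
    rw [hfn] at h2
    rw [h1]
    exact add_right_cancel h2
end

section
/- Let f(x) = -x + ax^{q^s} + bx^{q^{s+ℓn}} over F_{q^{nt}} with gcd(s,n)=1, a,b ≠ 0, 1 ≤ ℓ ≤ t-1. If t ≤ nℓ + s and s + hℓ ≢ 0 (mod t) for every 0 ≤ h ≤ n, then dim_{F_q} ker f ≤ min{t-1, (n-1)ℓ + s}. -/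
open Finset Polynomial

private lemma powfix {K : Type*} [Monoid K] {Q e : ℕ} {x : K} (hx : x ^ Q ^ e = x) :
    ∀ j : ℕ, x ^ Q ^ (e * j) = x := by
  intro j
  induction j with
  | zero => simp
  | succ j ih =>
    have h1 : Q ^ (e * (j + 1)) = Q ^ (e * j) * Q ^ e := by
      rw [← pow_add]; ring_nf
    rw [h1, pow_mul, ih, hx]

set_option maxHeartbeats 1000000 in
theorem stmt_8 (q n t s ℓ : ℕ) (Fq Fqn F : Type*) [Field Fq] [Field Fqn] [Field F]
    [Algebra Fq Fqn] [Algebra Fqn F] [Algebra Fq F] [IsScalarTower Fq Fqn F]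
    [Fintype Fq] [Fintype Fqn] [Fintype F]
    (hq : Fintype.card Fq = q) (hqn : Fintype.card Fqn = q ^ n)
    (hF : Fintype.card F = q ^ (n * t))
    (hs : Nat.gcd s n = 1)
    (a b : F) (ha : a ≠ 0) (hb : b ≠ 0)
    (hℓ1 : 1 ≤ ℓ) (hℓt : ℓ ≤ t - 1)
    (hts : t ≤ n * ℓ + s)
    (hcong : ∀ h : ℕ, h ≤ n → ¬ (t ∣ (s + h * ℓ)))
    (f : F →ₗ[Fq] F)
    (hf : ∀ x, f x = -x + a * x ^ q ^ s + b * x ^ q ^ (s + ℓ * n)) :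
    Module.finrank Fq (LinearMap.ker f) ≤ min (t - 1) ((n - 1) * ℓ + s) := by
  classical
  -- basic numeric facts
  have hq2 : 2 ≤ q := hq ▸ Fintype.one_lt_card
  have hn1 : 1 ≤ n := by
    by_contra h
    have hn0 : n = 0 := by omega
    have := hqn
    rw [hn0, pow_zero] at this
    have := Fintype.one_lt_card (α := Fqn)
    omega
  have hs1 : 1 ≤ s := by
    by_contra h
    have hs0 : s = 0 := by omega
    exact hcong 0 (by omega) (by simp [hs0])
  have ht2 : 2 ≤ t := by omega
  set D : ℕ := min (t - 1) ((n - 1) * ℓ + s) with hD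
  have hD1 : 1 ≤ D := by
    have : 1 ≤ (n - 1) * ℓ + s := by omega
    omega
  -- characteristic
  obtain ⟨p, hpfq⟩ := CharP.exists Fq
  haveI : CharP Fq p := hpfq
  have hp : p.Prime := CharP.char_is_prime Fq p
  haveI : Fact p.Prime := ⟨hp⟩
  haveI : CharP F p := charP_of_injective_ringHom (algebraMap Fq F).injective p
  obtain ⟨r, hpr, hcard⟩ := FiniteField.card Fq p
  have hqpr : q = p ^ (r : ℕ) := by rw [← hq, hcard]
  -- additivity of q-power maps in F
  have hfrob : ∀ (e : ℕ) (x y : F), (x + y) ^ q ^ e = x ^ q ^ e + y ^ q ^ e := by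
    intro e x y
    rw [hqpr, ← pow_mul]
    exact add_pow_char_pow x y p _
  -- the map H
  set H : F → F := fun x => a * x ^ q ^ s + b * x ^ q ^ (s + ℓ * n) with hHdef
  have hHadd : ∀ x y : F, H (x + y) = H x + H y := by
    intro x y
    simp only [hHdef, hfrob]
    ring
  set Hadd : F →+ F := AddMonoidHom.mk' H hHadd with hHaddDef
  -- Frobenius-power fixedness of Fqn scalars
  have hmu : ∀ (μ : Fqn) (j : ℕ), μ ^ q ^ (n * j) = μ := by
    intro μ j
    have h0 : μ ^ q ^ n = μ := by
      have := FiniteField.pow_card μ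
      rwa [hqn] at this
    exact powfix h0 j
  have hzmu : ∀ (μ : Fqn) (j : ℕ), (algebraMap Fqn F μ) ^ q ^ (n * j) = algebraMap Fqn F μ := by
    intro μ j
    rw [← map_pow, hmu]
  -- semilinearity of H
  have hsemil : ∀ (μ : Fqn) (x : F), H (μ • x) = (μ ^ q ^ s) • H x := by
    intro μ x
    have hz : algebraMap Fqn F μ ^ q ^ (s + ℓ * n) = algebraMap Fqn F μ ^ q ^ s := by
      have h1 : q ^ (s + ℓ * n) = q ^ (n * ℓ) * q ^ s := by
        rw [← pow_add]; ring_nf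
      rw [h1, pow_mul, hzmu]
    simp only [hHdef, Algebra.smul_def, map_pow, mul_pow]
    rw [hz]
    ring
  -- iterate formula
  have hiter : ∀ m : ℕ, ∃ c : ℕ → F, ∀ x : F,
      H^[m] x = ∑ k ∈ range (m + 1), c k * x ^ q ^ (m * s + k * (ℓ * n)) := by
    intro m
    induction m with
    | zero => exact ⟨fun _ => 1, fun x => by simp⟩
    | succ m ih =>
      obtain ⟨c, hc⟩ := ih
      refine ⟨fun j => (if j ≤ m then a * (c j) ^ q ^ s else 0) +
        (if j = 0 then 0 else b * (c (j - 1)) ^ q ^ (s + ℓ * n)), fun x => ?_⟩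
      have hterm : ∀ (cc : F) (e : ℕ), Hadd (cc * x ^ q ^ e) =
          a * cc ^ q ^ s * x ^ q ^ (e + s) + b * cc ^ q ^ (s + ℓ * n) * x ^ q ^ (e + s + ℓ * n) := by
        intro cc e
        show H (cc * x ^ q ^ e) = _
        simp only [hHdef, mul_pow, ← pow_mul, ← pow_add]
        have e2 : e + (s + ℓ * n) = e + s + ℓ * n := by ring
        rw [e2]
        ring
      have hL : H^[m+1] x =
          (∑ k ∈ range (m + 1), a * (c k) ^ q ^ s * x ^ q ^ ((m + 1) * s + k * (ℓ * n))) +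
          (∑ k ∈ range (m + 1), b * (c k) ^ q ^ (s + ℓ * n) * x ^ q ^ ((m + 1) * s + (k + 1) * (ℓ * n))) := by
        rw [Function.iterate_succ_apply', hc x]
        show Hadd _ = _
        rw [map_sum]
        rw [← Finset.sum_add_distrib]
        refine Finset.sum_congr rfl fun k hk => ?_
        rw [hterm]
        have e1 : m * s + k * (ℓ * n) + s = (m + 1) * s + k * (ℓ * n) := by ring
        have e2 : m * s + k * (ℓ * n) + s + ℓ * n = (m + 1) * s + (k + 1) * (ℓ * n) := by ring
        rw [e2, e1]
      rw [hL]
      have hR1 : ∑ j ∈ range (m + 2),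
          (if j ≤ m then a * (c j) ^ q ^ s else 0) * x ^ q ^ ((m + 1) * s + j * (ℓ * n)) =
          ∑ k ∈ range (m + 1), a * (c k) ^ q ^ s * x ^ q ^ ((m + 1) * s + k * (ℓ * n)) := by
        rw [Finset.sum_range_succ, if_neg (by omega), zero_mul, add_zero]
        refine Finset.sum_congr rfl fun k hk => ?_
        rw [if_pos (by simp at hk; omega)]
      have hR2 : ∑ j ∈ range (m + 2),
          (if j = 0 then 0 else b * (c (j - 1)) ^ q ^ (s + ℓ * n)) * x ^ q ^ ((m + 1) * s + j * (ℓ * n)) =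
          ∑ k ∈ range (m + 1), b * (c k) ^ q ^ (s + ℓ * n) * x ^ q ^ ((m + 1) * s + (k + 1) * (ℓ * n)) := by
        rw [Finset.sum_range_succ']
        rw [if_pos rfl, zero_mul, add_zero]
        refine Finset.sum_congr rfl fun k hk => ?_
        rw [if_neg (by omega)]
        simp
      rw [← hR1, ← hR2, ← Finset.sum_add_distrib]
      exact Finset.sum_congr rfl fun j hj => (add_mul _ _ _).symm
  obtain ⟨c, hc⟩ := hiter n
  -- reduction of q-power exponents mod t
  have hred : ∀ (x : F) (m : ℕ), x ^ q ^ (n * m) = x ^ q ^ (n * (m % t)) := by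
    intro x m
    have hx : x ^ q ^ (n * t) = x := by
      have := FiniteField.pow_card x
      rwa [hF] at this
    have h1 : x ^ q ^ (n * t * (m / t)) = x := powfix hx (m / t)
    have h2 : n * m = n * t * (m / t) + n * (m % t) := by
      have := Nat.div_add_mod m t
      calc n * m = n * (t * (m / t) + m % t) := by rw [Nat.div_add_mod]
        _ = n * t * (m / t) + n * (m % t) := by ring
    rw [h2, pow_add, pow_mul, h1]
  -- the reduced linear map over Fqn and its kernel W
  have hlinadd : ∀ x y : F, (∑ k ∈ range (n + 1), c k * (x + y) ^ q ^ (n * ((s + k * ℓ) % t))) - (x + y) =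
      ((∑ k ∈ range (n + 1), c k * x ^ q ^ (n * ((s + k * ℓ) % t))) - x) +
      ((∑ k ∈ range (n + 1), c k * y ^ q ^ (n * ((s + k * ℓ) % t))) - y) := by
    intro x y
    simp only [hfrob, mul_add, Finset.sum_add_distrib]
    ring
  set g : F →ₗ[Fqn] F := {
    toFun := fun x => (∑ k ∈ range (n + 1), c k * x ^ q ^ (n * ((s + k * ℓ) % t))) - x
    map_add' := hlinadd
    map_smul' := by
      intro μ x
      simp only [RingHom.id_apply, Algebra.smul_def, mul_pow, hzmu, Finset.mul_sum, mul_sub]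
      congr 1
      refine Finset.sum_congr rfl fun k hk => ?_
      ring } with hgdef
  set W : Submodule Fqn F := LinearMap.ker g with hWdef
  -- every element of ker f lies in W
  have hker_sub : ∀ x : F, f x = 0 → x ∈ W := by
    intro x hx
    have hHx : H x = x := by
      have h := hf x
      rw [hx] at h
      show a * x ^ q ^ s + b * x ^ q ^ (s + ℓ * n) = x
      linear_combination -h
    have hit : H^[n] x = x := Function.iterate_fixed hHx n
    have hx2 : x = ∑ k ∈ range (n + 1), c k * x ^ q ^ (n * ((s + k * ℓ) % t)) := by
      conv_lhs => rw [← hit, hc x]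
      refine Finset.sum_congr rfl fun k hk => ?_
      have e1 : n * s + k * (ℓ * n) = n * (s + k * ℓ) := by ring
      rw [e1, hred x (s + k * ℓ)]
    simp only [hWdef, LinearMap.mem_ker, hgdef]
    show (∑ k ∈ range (n + 1), c k * x ^ q ^ (n * ((s + k * ℓ) % t))) - x = 0
    rw [← hx2, sub_self]
  -- the polynomial P
  set P : Polynomial F := (∑ k ∈ range (n + 1), C (c k) * X ^ q ^ (n * ((s + k * ℓ) % t))) - X with hPdef
  have hPeval : ∀ x : F, P.eval x = (∑ k ∈ range (n + 1), c k * x ^ q ^ (n * ((s + k * ℓ) % t))) - x := by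
    intro x
    simp [hPdef, eval_finset_sum]
  have hrknz : ∀ k, k ≤ n → 1 ≤ (s + k * ℓ) % t := by
    intro k hk
    have := hcong k hk
    have : ¬ ((s + k * ℓ) % t = 0) := fun h => this (Nat.dvd_of_mod_eq_zero h)
    omega
  have hPne : P ≠ 0 := by
    intro h0
    have h1 : P.coeff 1 = -1 := by
      simp only [hPdef, coeff_sub, finset_sum_coeff, coeff_C_mul, coeff_X_pow, coeff_X_one]
      have : ∀ k ∈ range (n + 1), c k * (if 1 = q ^ (n * ((s + k * ℓ) % t)) then (1:F) else 0) = 0 := by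
        intro k hk
        have hk' : k ≤ n := by simp at hk; omega
        have h2 : 2 ≤ q ^ (n * ((s + k * ℓ) % t)) := by
          calc 2 ≤ q := hq2
            _ = q ^ 1 := (pow_one q).symm
            _ ≤ q ^ (n * ((s + k * ℓ) % t)) := by
              apply Nat.pow_le_pow_right (by omega)
              have := hrknz k hk'
              nlinarith [hn1]
        rw [if_neg (by omega), mul_zero]
      rw [Finset.sum_eq_zero this]
      ring
    rw [h0] at h1
    simp at h1
  have hrkD : ∀ k, k ≤ n → (s + k * ℓ) % t ≤ D := by
    intro k hk
    have hmodlt : (s + k * ℓ) % t < t := Nat.mod_lt _ (by omega)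
    have hle2 : (s + k * ℓ) % t ≤ (n - 1) * ℓ + s := by
      rcases Nat.lt_or_ge (s + k * ℓ) t with hlt | hge
      · -- then k < n
        have hkn : k < n := by
          by_contra hkn
          have hkeq : k = n := by omega
          rw [hkeq] at hlt
          omega
        have h3 : k * ℓ ≤ (n - 1) * ℓ := Nat.mul_le_mul_right ℓ (by omega)
        rw [Nat.mod_eq_of_lt hlt]
        omega
      · have h4 : (s + k * ℓ) % t ≤ s + k * ℓ - t := by
          rw [Nat.mod_eq_sub_mod hge]
          exact Nat.mod_le _ _
        have h5 : k * ℓ ≤ n * ℓ := Nat.mul_le_mul_right ℓ hk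
        have h6 : (n - 1) * ℓ = n * ℓ - ℓ := by
          rw [Nat.sub_one_mul]
        omega
    omega
  have hPdeg : P.natDegree ≤ q ^ (n * D) := by
    have hXle : (X : Polynomial F).natDegree ≤ q ^ (n * D) := by
      rw [natDegree_X]
      calc 1 ≤ q := by omega
        _ = q ^ 1 := (pow_one q).symm
        _ ≤ q ^ (n * D) := Nat.pow_le_pow_right (by omega) (by nlinarith)
    refine (natDegree_sub_le _ _).trans ?_
    rw [max_le_iff]
    refine ⟨?_, hXle⟩
    apply natDegree_sum_le_of_forall_le
    intro k hk
    refine (natDegree_C_mul_le _ _).trans ?_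
    rw [natDegree_X_pow]
    apply Nat.pow_le_pow_right (by omega)
    apply Nat.mul_le_mul_left
    exact hrkD k (by simp at hk; omega)
  -- W is contained in the roots of P
  have hWroots : ∀ x : F, x ∈ W → x ∈ P.roots.toFinset := by
    intro x hx
    rw [Multiset.mem_toFinset, mem_roots hPne]
    rw [IsRoot, hPeval]
    simpa only [hWdef, LinearMap.mem_ker, hgdef, LinearMap.coe_mk, AddHom.coe_mk] using hx
  have hcardW : Fintype.card W ≤ q ^ (n * D) := by
    have h1 : Fintype.card W ≤ P.roots.toFinset.card := by
      have : Function.Injective (fun w : W => (⟨w.1, hWroots w.1 w.2⟩ : P.roots.toFinset)) := by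
        intro u v huv
        have h2 : ((⟨u.1, hWroots u.1 u.2⟩ : P.roots.toFinset) : F) = ((⟨v.1, hWroots v.1 v.2⟩ : P.roots.toFinset) : F) := congrArg Subtype.val huv
        exact Subtype.ext h2
      calc Fintype.card W ≤ Fintype.card P.roots.toFinset := Fintype.card_le_of_injective _ this
        _ = P.roots.toFinset.card := Fintype.card_coe _
    have h2 : P.roots.toFinset.card ≤ P.natDegree :=
      (Multiset.toFinset_card_le _).trans (P.card_roots')
    omega
  -- finrank of W over Fqn
  haveI : Finite W := Subtype.finite
  haveI : Module.Finite Fqn W := Module.Finite.of_finite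
  have hfrW : Module.finrank Fqn W ≤ D := by
    have h1 : Fintype.card W = Fintype.card Fqn ^ Module.finrank Fqn W :=
      Module.card_eq_pow_finrank
    rw [hqn, ← pow_mul] at h1
    have h2 : q ^ (n * Module.finrank Fqn W) ≤ q ^ (n * D) := by omega
    have h3 : n * Module.finrank Fqn W ≤ n * D :=
      (Nat.pow_le_pow_iff_right (by omega)).mp h2
    exact Nat.le_of_mul_le_mul_left h3 (by omega)
  -- fixed-field lemma: σ^s-fixed elements of Fqn lie in Fq
  have hfix : ∀ μ : Fqn, μ ^ q ^ s = μ → ∃ cc : Fq, algebraMap Fq Fqn cc = μ := by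
    intro μ hμ
    have hq1 : μ ^ q = μ := by
      rcases Nat.lt_or_ge 1 n with hn | hn
      · obtain ⟨u, -, hu⟩ := Nat.exists_mul_mod_eq_one_of_coprime hs hn
        have h1 : μ ^ q ^ (s * u) = μ := powfix hμ u
        have h2 : s * u = n * (s * u / n) + 1 := by
          have := Nat.div_add_mod (s * u) n
          omega
        rw [h2, pow_add, pow_mul, hmu, pow_one] at h1
        exact h1
      · have hn1' : n = 1 := by omega
        have := hmu μ 1
        rwa [hn1', one_mul, pow_one] at this
    -- μ is a root of X^q - X, which has exactly the image of Fq as roots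
    set T : Finset Fqn := Finset.univ.image (algebraMap Fq Fqn) with hT
    have hTcard : T.card = q := by
      rw [hT, Finset.card_image_of_injective _ (algebraMap Fq Fqn).injective,
        Finset.card_univ, hq]
    set G : Polynomial Fqn := X ^ q - X with hG
    have hGne : G ≠ 0 := by
      intro h0
      have h1 : G.coeff 1 = -1 := by
        simp only [hG, coeff_sub, coeff_X_pow, coeff_X_one]
        rw [if_neg (by omega)]
        ring
      rw [h0] at h1
      simp at h1
    have hGdeg : G.natDegree ≤ q := by
      refine (natDegree_sub_le _ _).trans ?_
      rw [max_le_iff, natDegree_X_pow, natDegree_X]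
      omega
    have hroot : ∀ ν : Fqn, ν ^ q = ν → ν ∈ G.roots.toFinset := by
      intro ν hν
      rw [Multiset.mem_toFinset, mem_roots hGne]
      simp [hG, IsRoot, hν]
    have hTsub : T ⊆ G.roots.toFinset := by
      intro ν hν
      rw [hT, Finset.mem_image] at hν
      obtain ⟨cc, _, rfl⟩ := hν
      apply hroot
      rw [← map_pow]
      congr 1
      have := FiniteField.pow_card cc
      rwa [hq] at this
    by_contra hcon
    push_neg at hcon
    have hμT : μ ∉ T := by
      intro hμT
      rw [hT, Finset.mem_image] at hμT
      obtain ⟨cc, _, hcc⟩ := hμT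
      exact hcon cc hcc
    have hins : insert μ T ⊆ G.roots.toFinset := by
      intro ν hν
      rcases Finset.mem_insert.mp hν with h | h
      · rw [h]; exact hroot μ hq1
      · exact hTsub h
    have h1 : (insert μ T).card = q + 1 := by
      rw [Finset.card_insert_of_notMem hμT, hTcard]
    have h2 : (insert μ T).card ≤ G.roots.toFinset.card := Finset.card_le_card hins
    have h3 : G.roots.toFinset.card ≤ q :=
      ((Multiset.toFinset_card_le _).trans G.card_roots').trans hGdeg
    omega
  -- set up the basis of ker f
  haveI : Finite (LinearMap.ker f) := Subtype.finite
  haveI : Module.Finite Fq (LinearMap.ker f) := Module.Finite.of_finite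
  set d : ℕ := Module.finrank Fq (LinearMap.ker f) with hd
  set B := Module.finBasis Fq (LinearMap.ker f) with hB
  set v : Fin d → F := fun i => ((B i : LinearMap.ker f) : F) with hv
  have hvindep : LinearIndependent Fq v := by
    have := B.linearIndependent
    have h2 := this.map' (LinearMap.ker f).subtype (Submodule.ker_subtype _)
    exact h2
  have hvfix : ∀ i, H (v i) = v i := by
    intro i
    have hmem : (B i : LinearMap.ker f).1 ∈ LinearMap.ker f := (B i).2
    rw [LinearMap.mem_ker] at hmem
    have := hf (v i)
    rw [hv] at *
    have hx : f ((B i : LinearMap.ker f) : F) = 0 := hmem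
    have h3 := hf ((B i : LinearMap.ker f) : F)
    rw [hx] at h3
    show H _ = _
    simp only [hHdef]
    linear_combination -h3
  -- Artin's argument: Fq-independent fixed vectors are Fqn-independent
  have artin : ∀ (S : Finset (Fin d)) (lam : Fin d → Fqn),
      (∑ i ∈ S, lam i • v i = 0) → ∀ i ∈ S, lam i = 0 := by
    intro S
    induction S using Finset.strongInduction with
    | _ S IH =>
      intro lam hrel
      by_contra hcon
      push_neg at hcon
      obtain ⟨i₀, hi₀S, hi₀⟩ := hcon
      set lam' : Fin d → Fqn := fun i => lam i / lam i₀ with hlam'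
      have hlam'i₀ : lam' i₀ = 1 := div_self hi₀
      have h1 : ∑ i ∈ S, lam' i • v i = 0 := by
        have : ∑ i ∈ S, lam' i • v i = (lam i₀)⁻¹ • ∑ i ∈ S, lam i • v i := by
          rw [Finset.smul_sum]
          refine Finset.sum_congr rfl fun i hi => ?_
          rw [smul_smul, hlam']
          congr 1
          field_simp
        rw [this, hrel, smul_zero]
      have h2 : ∑ i ∈ S, (lam' i ^ q ^ s) • v i = 0 := by
        have h0 : Hadd (∑ i ∈ S, lam' i • v i) = 0 := by rw [h1]; exact map_zero Hadd
        rw [map_sum] at h0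
        have heq : ∀ i ∈ S, Hadd (lam' i • v i) = (lam' i ^ q ^ s) • v i := by
          intro i hi
          show H (lam' i • v i) = _
          rw [hsemil, hvfix]
        rwa [Finset.sum_congr rfl heq] at h0
      have h3 : ∑ i ∈ S, (lam' i ^ q ^ s - lam' i) • v i = 0 := by
        simp only [sub_smul, Finset.sum_sub_distrib, h1, h2, sub_zero]
      have h4 : ∑ i ∈ S.erase i₀, (lam' i ^ q ^ s - lam' i) • v i = 0 := by
        have := Finset.add_sum_erase S (fun i => (lam' i ^ q ^ s - lam' i) • v i) hi₀S
        simp only [hlam'i₀, one_pow, sub_self, zero_smul, zero_add] at this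
        rw [this, h3]
      have h5 : ∀ i ∈ S, lam' i ^ q ^ s = lam' i := by
        intro i hi
        rcases eq_or_ne i i₀ with rfl | hne
        · rw [hlam'i₀, one_pow]
        · have := IH (S.erase i₀) (Finset.erase_ssubset hi₀S) _ h4 i
            (Finset.mem_erase.mpr ⟨hne, hi⟩)
          linear_combination this
      -- descend coefficients to Fq
      have h6 : ∀ i ∈ S, ∃ cc : Fq, algebraMap Fq Fqn cc = lam' i :=
        fun i hi => hfix _ (h5 i hi)
      choose! μ hμ using h6
      have h7 : ∑ i ∈ S, μ i • v i = 0 := by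
        rw [← h1]
        refine Finset.sum_congr rfl fun i hi => ?_
        rw [← hμ i hi, algebraMap_smul]
      have h8 := linearIndependent_iff'.mp hvindep S μ h7 i₀ hi₀S
      rw [← hμ i₀ hi₀S, h8, map_zero] at hlam'i₀
      exact zero_ne_one hlam'i₀
  have hvindepFqn : LinearIndependent Fqn v := linearIndependent_iff'.mpr artin
  -- v lands in W
  have hvW : ∀ i, v i ∈ W := by
    intro i
    apply hker_sub
    have hmem : (B i : LinearMap.ker f).1 ∈ LinearMap.ker f := (B i).2
    rwa [LinearMap.mem_ker] at hmem
  set w : Fin d → W := fun i => ⟨v i, hvW i⟩ with hw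
  have hwindep : LinearIndependent Fqn w := by
    apply LinearIndependent.of_comp W.subtype
    exact hvindepFqn
  have hdle : d ≤ Module.finrank Fqn W := by
    have := hwindep.fintype_card_le_finrank
    simpa using this
  omega
end

section
/- Let f(x) = -x + b₀x^σ + ... + b_{t-1}x^{σq^{n(t-1)}} with σ a generator of Gal(F_{q^n}/F_q), and let G(x) = Σ_{i=0}^{t-1} b_i x^{q^{ni}}. Then dim_{F_q} ker f ≤ t - dim_{F_{q^n}} ker G. -/
open Module

/-- Fixed vectors of a semilinear map that are linearly independent over the
base field are linearly independent over the big field. -/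
private lemma semilinear_indep {Fq Fqn F : Type*} [Field Fq] [Field Fqn] [Field F]
    [Algebra Fq Fqn] [Algebra Fqn F] [Algebra Fq F] [IsScalarTower Fq Fqn F]
    (σ' : Fqn ≃ₐ[Fq] Fqn)
    (hfix : ∀ c : Fqn, σ' c = c → ∃ a : Fq, algebraMap Fq Fqn a = c)
    (g : F →+ F)
    (hsmul : ∀ (c : Fqn) (x : F), g (c • x) = σ' c • g x)
    {ι : Type*} {v : ι → F} (hfv : ∀ i, g (v i) = v i)
    (hli : LinearIndependent Fq v) : LinearIndependent Fqn v := by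
  classical
  rw [linearIndependent_iff']
  intro s
  induction s using Finset.strongInduction with
  | _ s ih =>
    intro c hc
    by_contra hne
    push_neg at hne
    obtain ⟨i, hi, hci⟩ := hne
    set c' : ι → Fqn := fun j => (c i)⁻¹ * c j with hc'def
    have hc'i : c' i = 1 := inv_mul_cancel₀ hci
    have hrel : ∑ j ∈ s, c' j • v j = 0 := by
      have h1 : ∑ j ∈ s, c' j • v j = (c i)⁻¹ • ∑ j ∈ s, c j • v j := by
        rw [Finset.smul_sum]
        exact Finset.sum_congr rfl fun j _ => (smul_smul _ _ _).symm
      rw [h1, hc, smul_zero]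
    have hgrel : ∑ j ∈ s, σ' (c' j) • v j = 0 := by
      have h2 := congrArg g hrel
      rw [map_sum, map_zero] at h2
      simpa only [hsmul, hfv] using h2
    have hrel2 : ∑ j ∈ s, (σ' (c' j) - c' j) • v j = 0 := by
      simp only [sub_smul, Finset.sum_sub_distrib, hrel, hgrel, sub_zero]
    have hrel3 : ∑ j ∈ s.erase i, (σ' (c' j) - c' j) • v j = 0 := by
      rw [Finset.sum_erase s (by rw [hc'i, map_one, sub_self, zero_smul])]
      exact hrel2
    have hz : ∀ j ∈ s.erase i, σ' (c' j) - c' j = 0 :=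
      ih (s.erase i) (Finset.erase_ssubset hi) _ hrel3
    have hfixall : ∀ j, ∃ a : Fq, j ∈ s → algebraMap Fq Fqn a = c' j := by
      intro j
      by_cases hj : j ∈ s
      · rcases eq_or_ne j i with rfl | hji
        · obtain ⟨a, ha⟩ := hfix (c' j) (by rw [hc'i, map_one])
          exact ⟨a, fun _ => ha⟩
        · have hzj := hz j (Finset.mem_erase.mpr ⟨hji, hj⟩)
          obtain ⟨a, ha⟩ := hfix (c' j) (sub_eq_zero.mp hzj)
          exact ⟨a, fun _ => ha⟩
      · exact ⟨0, fun h => absurd h hj⟩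
    choose a ha using hfixall
    have hrelFq : ∑ j ∈ s, a j • v j = 0 := by
      calc ∑ j ∈ s, a j • v j = ∑ j ∈ s, c' j • v j :=
            Finset.sum_congr rfl fun j hj => by
              rw [← algebraMap_smul Fqn (a j) (v j), ha j hj]
        _ = 0 := hrel
    have hai : a i = 0 := linearIndependent_iff'.mp hli s a hrelFq i hi
    have : (1 : Fqn) = 0 := by rw [← hc'i, ← ha i hi, hai, map_zero]
    exact one_ne_zero this

theorem stmt_12 (q n t : ℕ) (Fq Fqn F : Type*) [Field Fq] [Field Fqn] [Field F]
    [Algebra Fq Fqn] [Algebra Fqn F] [Algebra Fq F] [IsScalarTower Fq Fqn F]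
    [Fintype Fq] [Fintype Fqn] [Fintype F]
    (hq : Fintype.card Fq = q) (hqn : Fintype.card Fqn = q ^ n)
    (hF : Fintype.card F = q ^ (n * t))
    (σ : F ≃ₐ[Fq] F) (σ' : Fqn ≃ₐ[Fq] Fqn) (hord : orderOf σ' = n)
    (hres : ∀ c : Fqn, σ (algebraMap Fqn F c) = algebraMap Fqn F (σ' c))
    (b : Fin t → F)
    (G : F →ₗ[Fqn] F)
    (hG : ∀ x, G x = ∑ i : Fin t, b i * x ^ q ^ (n * (i : ℕ)))
    (f : F →ₗ[Fq] F)
    (hf : ∀ x, f x = -x + G (σ x)) :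
    Module.finrank Fq (LinearMap.ker f) ≤ t - Module.finrank Fqn (LinearMap.ker G) := by
  classical
  have hq1 : 1 < q := hq ▸ Fintype.one_lt_card
  have hqn1 : 1 < q ^ n := hqn ▸ Fintype.one_lt_card
  have hn0 : n ≠ 0 := by rintro rfl; simp at hqn1
  -- dimensions
  have hfrk_n : finrank Fq Fqn = n := by
    have h := card_eq_pow_finrank (K := Fq) (V := Fqn)
    rw [hq, hqn] at h
    exact (Nat.pow_right_injective hq1 h).symm
  have hfrk_t : finrank Fqn F = t := by
    have h := card_eq_pow_finrank (K := Fqn) (V := F)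
    rw [hqn, hF, ← pow_mul] at h
    have := Nat.pow_right_injective hq1 h
    exact Nat.eq_of_mul_eq_mul_left (Nat.pos_of_ne_zero hn0) this.symm
  -- the fixed field of σ' is (the image of) Fq
  have hfix : ∀ c : Fqn, σ' c = c → ∃ a : Fq, algebraMap Fq Fqn a = c := by
    intro c hcfix
    have hcard : Fintype.card (Fqn ≃ₐ[Fq] Fqn) = n := by
      rw [← Nat.card_eq_fintype_card, IsGalois.card_aut_eq_finrank, hfrk_n]
    have htop : Subgroup.zpowers σ' = ⊤ := by
      apply Subgroup.eq_top_of_card_eq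
      rw [Nat.card_zpowers, hord, Nat.card_eq_fintype_card, hcard]
    have hallfix : ∀ τ : Fqn ≃ₐ[Fq] Fqn, τ c = c := by
      intro τ
      have hτ : τ ∈ Subgroup.zpowers σ' := htop ▸ Subgroup.mem_top τ
      obtain ⟨k, hk⟩ := mem_powers_iff_mem_zpowers.mpr hτ
      rw [← hk]
      clear hk hτ
      induction k with
      | zero => simp
      | succ m ihm =>
        show (σ' ^ (m + 1)) c = c
        rw [pow_succ, AlgEquiv.mul_apply, hcfix]
        exact ihm
    have hc_bot : c ∈ (⊥ : IntermediateField Fq Fqn) := by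
      have hbot : IntermediateField.fixedField
          (⊤ : Subgroup (Fqn ≃ₐ[Fq] Fqn)) = ⊥ := by
        rw [← IntermediateField.fixingSubgroup_bot (F := Fq) (E := Fqn)]
        exact IsGalois.fixedField_fixingSubgroup ⊥
      rw [← hbot]
      intro τ
      exact hallfix τ.1
    rcases IntermediateField.mem_bot.mp hc_bot with ⟨a, ha⟩
    exact ⟨a, ha⟩
  -- the semilinear map g = G ∘ σ
  let g : F →+ F :=
    { toFun := fun x => G (σ x)
      map_zero' := by simp
      map_add' := fun x y => by simp }
  have hsmul : ∀ (c : Fqn) (x : F), g (c • x) = σ' c • g x := by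
    intro c x
    show G (σ (c • x)) = σ' c • G (σ x)
    rw [Algebra.smul_def, map_mul, hres, ← Algebra.smul_def, map_smul]
  have hker_fix : ∀ x ∈ LinearMap.ker f, g x = x := by
    intro x hx
    have h0 : f x = 0 := LinearMap.mem_ker.mp hx
    rw [hf x] at h0
    show G (σ x) = x
    linear_combination h0
  have hker_range : ∀ x ∈ LinearMap.ker f, x ∈ LinearMap.range G :=
    fun x hx => ⟨σ x, hker_fix x hx⟩
  -- a basis of ker f over Fq
  let B := Module.finBasis Fq (LinearMap.ker f)
  set d := finrank Fq (LinearMap.ker f) with hd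
  let v : Fin d → F := fun i => (B i : F)
  have hvmem : ∀ i, v i ∈ LinearMap.ker f := fun i => (B i).2
  have hli : LinearIndependent Fq v :=
    B.linearIndependent.map' (LinearMap.ker f).subtype (Submodule.ker_subtype _)
  have hlin : LinearIndependent Fqn v :=
    semilinear_indep σ' hfix g hsmul (fun i => hker_fix _ (hvmem i)) hli
  have hspan : Submodule.span Fqn (Set.range v) ≤ LinearMap.range G := by
    rw [Submodule.span_le]
    rintro _ ⟨i, rfl⟩
    exact hker_range _ (hvmem i)
  have h1 : d ≤ finrank Fqn (LinearMap.range G) := by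
    have hs := finrank_span_eq_card hlin
    rw [Fintype.card_fin] at hs
    calc d = finrank Fqn (Submodule.span Fqn (Set.range v)) := hs.symm
      _ ≤ finrank Fqn (LinearMap.range G) := Submodule.finrank_mono hspan
  have h2 : finrank Fqn (LinearMap.range G) + finrank Fqn (LinearMap.ker G) = t := by
    rw [← hfrk_t]
    exact LinearMap.finrank_range_add_finrank_ker G
  omega
end

section
/- Let f(x) = -x + b₀x^{q³} + b₁x^q ∈ F_{q⁴}[x] with b₀,b₁ ≠ 0. Then dim_{F_q} ker f = 2 if and only if b₀^{1+q} + b₁^{q²+q} = 0 and b₁b₀^q + b₀^{q²}b₁^q = 1. -/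
open Polynomial Finset

theorem stmt_14 (q : ℕ) (Fq F : Type*) [Field Fq] [Field F] [Algebra Fq F]
    [Fintype Fq] [Fintype F]
    (hq : Fintype.card Fq = q) (hF : Fintype.card F = q ^ 4)
    (b0 b1 : F) (hb0 : b0 ≠ 0) (hb1 : b1 ≠ 0)
    (f : F →ₗ[Fq] F)
    (hf : ∀ x, f x = -x + b0 * x ^ q ^ 3 + b1 * x ^ q) :
    Module.finrank Fq (LinearMap.ker f) = 2 ↔
      (b0 ^ (1 + q) + b1 ^ (q ^ 2 + q) = 0 ∧
        b1 * b0 ^ q + b0 ^ q ^ 2 * b1 ^ q = 1) := by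
  classical
  have hq2 : 2 ≤ q := by rw [← hq]; exact Fintype.one_lt_card
  obtain ⟨p, k, hp, hqpk, hcharF⟩ : ∃ p k, p.Prime ∧ q = p ^ k ∧ CharP F p := by
    haveI : CharP Fq (ringChar Fq) := ringChar.charP Fq
    obtain ⟨n, hpp, hcard⟩ := FiniteField.card Fq (ringChar Fq)
    haveI : CharP F (ringChar Fq) :=
      charP_of_injective_algebraMap (algebraMap Fq F).injective (ringChar Fq)
    exact ⟨ringChar Fq, n, hpp, by rw [← hq, hcard], inferInstance⟩
  haveI : Fact p.Prime := ⟨hp⟩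
  -- Frobenius helpers
  have hfrobn : ∀ (n : ℕ) (x y : F), (x + y) ^ q ^ n = x ^ q ^ n + y ^ q ^ n := by
    intro n x y
    rw [hqpk, ← pow_mul]
    exact add_pow_char_pow (R := F) (p := p) x y (k * n)
  have hfrob1 : ∀ x y : F, (x + y) ^ q = x ^ q + y ^ q := by
    intro x y
    have := hfrobn 1 x y; rwa [pow_one] at this
  have hnegn : ∀ (n : ℕ) (x : F), (-x) ^ q ^ n = -(x ^ q ^ n) := by
    intro n x
    have h := hfrobn n x (-x)
    rw [add_neg_cancel, zero_pow (by positivity)] at h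
    linear_combination -h
  have hsubn : ∀ (n : ℕ) (x y : F), (x - y) ^ q ^ n = x ^ q ^ n - y ^ q ^ n := by
    intro n x y
    rw [sub_eq_add_neg, hfrobn n, hnegn n, sub_eq_add_neg]
  have hcard4 : ∀ x : F, x ^ q ^ 4 = x := by
    intro x; rw [← hF]; exact FiniteField.pow_card x
  have hmulred : ∀ (x : F) (a b : ℕ), x ^ (q ^ 4 * a + b) = x ^ a * x ^ b := by
    intro x a b; rw [pow_add, pow_mul, hcard4]
  -- counting roots of X^(q^2) - X
  have h1q4 : 1 < q ^ 4 := Nat.one_lt_pow (by norm_num) (by omega)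
  have h1q2 : 1 < q ^ 2 := Nat.one_lt_pow (by norm_num) (by omega)
  have hProots : (X ^ q ^ 4 - X : F[X]).roots = (univ : Finset F).val := by
    have := FiniteField.roots_X_pow_card_sub_X F
    rwa [hF] at this
  have hPne : (X ^ q ^ 4 - X : F[X]) ≠ 0 :=
    FiniteField.X_pow_card_sub_X_ne_zero F h1q4
  have hq2pk : q ^ 2 = p ^ (k * 2) := by rw [hqpk, ← pow_mul]
  have hApow : ((X ^ q ^ 2 - X : F[X])) ^ q ^ 2 = X ^ q ^ 4 - X ^ q ^ 2 := by
    have h := sub_pow_char_pow (R := F[X]) (p := p) (X ^ q ^ 2) X (k * 2)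
    rw [← hq2pk] at h
    rw [h, ← pow_mul, show q ^ 2 * q ^ 2 = q ^ 4 by ring]
  have hdvd : (X ^ q ^ 2 - X : F[X]) ∣ (X ^ q ^ 4 - X) := by
    refine ⟨(X ^ q ^ 2 - X) ^ (q ^ 2 - 1) + 1, ?_⟩
    rw [mul_add, mul_one, ← pow_succ', Nat.sub_add_cancel (by omega), hApow]
    ring
  have hroots_le : (X ^ q ^ 2 - X : F[X]).roots ≤ (X ^ q ^ 4 - X : F[X]).roots :=
    roots.le_of_dvd hPne hdvd
  have hnodup : (X ^ q ^ 2 - X : F[X]).roots.Nodup := by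
    refine Multiset.nodup_of_le hroots_le ?_
    rw [hProots]; exact univ.nodup
  have hPsplits : ((X ^ q ^ 4 - X : F[X])).Splits := by
    rw [splits_iff_card_roots, hProots,
      FiniteField.X_pow_card_pow_sub_X_natDegree_eq F (by norm_num) (by omega)]
    simpa using hF
  have hAsplits : ((X ^ q ^ 2 - X : F[X])).Splits :=
    Splits.of_dvd hPsplits hPne hdvd
  have hAroots_card : (X ^ q ^ 2 - X : F[X]).roots.card = q ^ 2 := by
    rw [splits_iff_card_roots.mp hAsplits,
      FiniteField.X_pow_card_pow_sub_X_natDegree_eq F (by norm_num) (by omega)]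
  have hS2card : (univ.filter fun x : F => x ^ q ^ 2 = x).card = q ^ 2 := by
    have hAne : (X ^ q ^ 2 - X : F[X]) ≠ 0 :=
      FiniteField.X_pow_card_sub_X_ne_zero F h1q2
    have : (univ.filter fun x : F => x ^ q ^ 2 = x)
        = (X ^ q ^ 2 - X : F[X]).roots.toFinset := by
      ext x
      simp [Polynomial.mem_roots, hAne, sub_eq_zero]
    rw [this, Multiset.toFinset_card_of_nodup hnodup, hAroots_card]
  have hS1cardle : (univ.filter fun c : F => c ^ q = c).card ≤ q := by
    have hBne : (X ^ q - X : F[X]) ≠ 0 :=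
      FiniteField.X_pow_card_sub_X_ne_zero F (by omega)
    have hsub2 : (univ.filter fun c : F => c ^ q = c)
        ⊆ (X ^ q - X : F[X]).roots.toFinset := by
      intro c hc
      simp only [mem_filter, mem_univ, true_and] at hc
      simp [Polynomial.mem_roots, hBne, sub_eq_zero, hc]
    calc (univ.filter fun c : F => c ^ q = c).card
        ≤ (X ^ q - X : F[X]).roots.toFinset.card := Finset.card_le_card hsub2
      _ ≤ (X ^ q - X : F[X]).roots.card := Multiset.toFinset_card_le _
      _ ≤ (X ^ q - X : F[X]).natDegree := Polynomial.card_roots' _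
      _ = q := FiniteField.X_pow_card_sub_X_natDegree_eq F (by omega)
  -- fixed points of x ↦ x^q are exactly the image of Fq
  have hS1 : ∀ c : F, c ^ q = c ↔ ∃ a : Fq, algebraMap Fq F a = c := by
    have hsub : (univ.image (algebraMap Fq F)) ⊆ (univ.filter fun c : F => c ^ q = c) := by
      intro c hc
      simp only [mem_image, mem_univ, true_and] at hc
      obtain ⟨a, rfl⟩ := hc
      simp only [mem_filter, mem_univ, true_and]
      rw [← map_pow]
      congr 1
      rw [← hq]; exact FiniteField.pow_card a
    have hcardI : (univ.image (algebraMap Fq F)).card = q := by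
      rw [Finset.card_image_of_injective _ (algebraMap Fq F).injective, ← hq, card_univ]
    have hcardT := hS1cardle
    have heq := Finset.eq_of_subset_of_card_le hsub (le_trans hcardT hcardI.ge)
    intro c
    constructor
    · intro hc
      have : c ∈ univ.image (algebraMap Fq F) := by
        rw [heq]; simp [hc]
      simpa using this
    · rintro ⟨a, rfl⟩
      have := hsub (by simp : algebraMap Fq F a ∈ univ.image (algebraMap Fq F))
      simpa using this
  -- the semilinear map g
  set g : F → F := fun x => b0 * x ^ q ^ 3 + b1 * x ^ q with hgdef
  have hsemi : ∀ c x : F, c ^ q ^ 2 = c → g (c * x) = c ^ q * g x := by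
    intro c x hc
    have h3 : c ^ q ^ 3 = c ^ q := by
      have e : c ^ q ^ 3 = (c ^ q ^ 2) ^ q := by
        rw [← pow_mul, ← pow_succ]
      rw [e, hc]
    simp only [hgdef, mul_pow]
    rw [h3]; ring
  have hgadd : ∀ x y : F, g (x + y) = g x + g y := by
    intro x y
    simp only [hgdef]
    have e3 := hfrobn 3 x y
    have e1 := hfrob1 x y
    rw [e3, e1]; ring
  have hgg : ∀ x : F, g (g x) =
      (b0 * b1 ^ q ^ 3 + b1 * b0 ^ q) * x + (b0 * b0 ^ q ^ 3 + b1 * b1 ^ q) * x ^ q ^ 2 := by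
    intro x
    have e1 : (g x) ^ q ^ 3 = b0 ^ q ^ 3 * x ^ q ^ 2 + b1 ^ q ^ 3 * x := by
      simp only [hgdef]
      rw [hfrobn 3, mul_pow, mul_pow, ← pow_mul, ← pow_mul,
        show q ^ 3 * q ^ 3 = q ^ 4 * q ^ 2 by ring, show q * q ^ 3 = q ^ 4 by ring,
        pow_mul, hcard4]
    have e2 : (g x) ^ q = b0 ^ q * x + b1 ^ q * x ^ q ^ 2 := by
      simp only [hgdef]
      rw [hfrob1, mul_pow, mul_pow, ← pow_mul, ← pow_mul,
        show q ^ 3 * q = q ^ 4 by ring, show q * q = q ^ 2 by ring, hcard4]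
    show b0 * (g x) ^ q ^ 3 + b1 * (g x) ^ q = _
    rw [e1, e2]; ring
  -- coefficient extraction
  have hcoeff : ∀ A B : F, (∀ x : F, A * x + B * x ^ q ^ 2 = x) → A = 1 ∧ B = 0 := by
    intro A B h
    have hq21 : q ^ 2 ≠ 1 := (Nat.one_lt_pow (by norm_num) (by omega)).ne'
    set P : F[X] := C B * X ^ q ^ 2 + C (A - 1) * X with hP
    have hPzero : P = 0 := by
      by_contra hne
      have hdeg : P.natDegree ≤ q ^ 2 := by
        apply le_trans (natDegree_add_le _ _)
        simp only [max_le_iff]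
        refine ⟨le_trans (natDegree_C_mul_le _ _) (by simp),
          le_trans (natDegree_C_mul_le _ _) ?_⟩
        simp only [natDegree_X]
        nlinarith
      have hsub : (univ : Finset F) ⊆ P.roots.toFinset := by
        intro x _
        rw [Multiset.mem_toFinset, mem_roots hne]
        simp only [hP, IsRoot.def, eval_add, eval_mul, eval_C, eval_pow, eval_X]
        linear_combination h x
      have hcard := Finset.card_le_card hsub
      rw [card_univ, hF] at hcard
      have h2 : P.roots.toFinset.card ≤ q ^ 2 :=
        le_trans (Multiset.toFinset_card_le _) (le_trans (Polynomial.card_roots' _) hdeg)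
      have h42 : q ^ 2 < q ^ 4 := Nat.pow_lt_pow_right (by omega) (by norm_num)
      omega
    have hB : B = 0 := by
      have := congrArg (fun (P : F[X]) => P.coeff (q ^ 2)) hPzero
      simp only [hP, coeff_add, coeff_C_mul, coeff_X_pow, coeff_X, coeff_zero] at this
      rw [if_neg (fun h' : (1 : ℕ) = q ^ 2 => hq21 h'.symm), if_pos trivial] at this
      simpa using this
    have hA : A = 1 := by
      have := congrArg (fun (P : F[X]) => P.coeff 1) hPzero
      simp only [hP, coeff_add, coeff_C_mul, coeff_X_pow, coeff_X_one, coeff_zero] at this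
      rw [if_neg (fun h' : (1 : ℕ) = q ^ 2 => hq21 h'.symm)] at this
      have h' : A - 1 = 0 := by linear_combination this
      linear_combination h'
    exact ⟨hA, hB⟩
  -- equivalence of the two sets of conditions
  have hz : b0 ^ (1 + q) + b1 ^ (q ^ 2 + q) = 0 ↔ b0 * b0 ^ q ^ 3 + b1 * b1 ^ q = 0 := by
    constructor
    · intro hs
      have h := congrArg (· ^ q ^ 3) hs
      rw [hfrobn 3, ← pow_mul, ← pow_mul, zero_pow (by positivity),
        show (1 + q) * q ^ 3 = q ^ 4 * 1 + q ^ 3 by ring,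
        show (q ^ 2 + q) * q ^ 3 = q ^ 4 * (q + 1) + 0 by ring,
        hmulred, hmulred] at h
      rw [pow_one, pow_zero, mul_one, pow_add, pow_one] at h
      linear_combination h
    · intro hm
      have h := congrArg (· ^ q) hm
      rw [hfrob1, mul_pow, mul_pow, ← pow_mul, ← pow_mul, zero_pow (by omega),
        show q ^ 3 * q = q ^ 4 by ring, hcard4, show q * q = q ^ 2 by ring] at h
      rw [pow_add, pow_add, pow_one]
      linear_combination h
  have hE : b0 ^ (1 + q) + b1 ^ (q ^ 2 + q) = 0 → b0 * b1 ^ q ^ 3 = b0 ^ q ^ 2 * b1 ^ q := by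
    intro hs1
    have hs1q : b0 ^ (q + q ^ 2) + b1 ^ (q ^ 3 + q ^ 2) = 0 := by
      have h := congrArg (· ^ q) hs1
      rw [hfrob1, ← pow_mul, ← pow_mul, zero_pow (by omega),
        show (1 + q) * q = q + q ^ 2 by ring,
        show (q ^ 2 + q) * q = q ^ 3 + q ^ 2 by ring] at h
      exact h
    have hb : b0 ^ q * b1 ≠ 0 := mul_ne_zero (pow_ne_zero _ hb0) hb1
    apply mul_left_cancel₀ hb
    linear_combination (b1 * b1 ^ q ^ 3) * hs1 - b1 * b1 ^ q * hs1q
  have hL6 : (b0 ^ (1 + q) + b1 ^ (q ^ 2 + q) = 0 ∧ b1 * b0 ^ q + b0 ^ q ^ 2 * b1 ^ q = 1) ↔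
      (b0 * b1 ^ q ^ 3 + b1 * b0 ^ q = 1 ∧ b0 * b0 ^ q ^ 3 + b1 * b1 ^ q = 0) := by
    constructor
    · rintro ⟨hs1, hs2⟩
      have hE' := hE hs1
      exact ⟨by linear_combination hs2 + hE', hz.mp hs1⟩
    · rintro ⟨hm1, hm2⟩
      have hs1 := hz.mpr hm2
      have hE' := hE hs1
      exact ⟨hs1, by linear_combination hm1 - hE'⟩
  -- kernel membership
  have hker : ∀ x : F, x ∈ LinearMap.ker f ↔ g x = x := by
    intro x
    rw [LinearMap.mem_ker, hf x]
    simp only [hgdef]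
    constructor <;> intro h <;> linear_combination h
  -- finite dimensionality and cardinality
  set W := LinearMap.ker f with hW
  have hcardW : Fintype.card ↥W = q ^ Module.finrank Fq ↥W := by
    rw [← hq]
    exact Module.card_eq_pow_finrank
  -- pick linearly independent fixed vectors
  have hpick : ∀ n : ℕ, n ≤ Module.finrank Fq ↥W →
      ∃ e : Fin n → F, (∀ i, g (e i) = e i) ∧ LinearIndependent Fq e := by
    intro n hn
    let b := Module.finBasis Fq ↥W
    refine ⟨fun i => (b (Fin.castLE hn i) : F), fun i => ?_, ?_⟩
    · exact (hker _).mp (b (Fin.castLE hn i)).2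
    · have h1 : LinearIndependent Fq (fun j : Fin n => b (Fin.castLE hn j)) :=
        b.linearIndependent.comp _ (Fin.castLE_injective hn)
      exact h1.map' W.subtype (Submodule.ker_subtype W)
  -- S2 as a subtype
  let K2 := {c : F // c ^ q ^ 2 = c}
  have hK2card : Fintype.card K2 = q ^ 2 := by
    rw [Fintype.card_of_subtype (univ.filter fun x : F => x ^ q ^ 2 = x) (by simp)]
    exact hS2card
  -- the key bijection
  have hkey : ∀ u v : F, g u = u → g v = v → u ≠ 0 →
      (∀ a : Fq, v ≠ algebraMap Fq F a * u) →
      Function.Bijective (fun ec : K2 × K2 => (ec.1 : F) * u + (ec.2 : F) * v) := by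
    intro u v hu hv hu0 hindep
    have hnotc : ∀ c : F, c ^ q ^ 2 = c → v ≠ c * u := by
      intro c hc hveq
      have h1 : g v = c ^ q * u := by rw [hveq, hsemi c u hc, hu]
      rw [hv, hveq] at h1
      have h2 : c ^ q = c := by
        have h3 : (c - c ^ q) * u = 0 := by linear_combination h1
        rcases mul_eq_zero.mp h3 with h4 | h4
        · linear_combination -h4
        · exact absurd h4 hu0
      obtain ⟨a, ha⟩ := (hS1 c).mp h2
      exact hindep a (by rw [ha, ← hveq])
    have hinj : Function.Injective
        (fun ec : K2 × K2 => (ec.1 : F) * u + (ec.2 : F) * v) := by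
      rintro ⟨e1, e2⟩ ⟨e1', e2'⟩ heq
      simp only [Prod.mk.injEq] at heq ⊢
      have heq' : ((e1 : F) - e1') * u = ((e2' : F) - e2) * v := by linear_combination heq
      have he2 : (e2 : F) = e2' := by
        by_contra hne
        have hne' : ((e2' : F) - e2) ≠ 0 := sub_ne_zero.mpr (fun h => hne (by
          exact_mod_cast h.symm))
        have hveq : v = (((e1 : F) - e1') * ((e2' : F) - e2)⁻¹) * u := by
          field_simp
          linear_combination -heq'
        refine hnotc _ ?_ hveq
        rw [mul_pow, inv_pow, hsubn 2, hsubn 2, e1.2, e1'.2, e2.2, e2'.2]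
      refine ⟨?_, Subtype.ext he2⟩
      rw [he2] at heq'
      have h5 : ((e1 : F) - e1') * u = 0 := by rw [heq']; ring
      rcases mul_eq_zero.mp h5 with h6 | h6
      · exact Subtype.ext (by linear_combination h6)
      · exact absurd h6 hu0
    refine (Fintype.bijective_iff_injective_and_card _).mpr ⟨hinj, ?_⟩
    rw [Fintype.card_prod, hK2card, hF]
    ring
  -- the iff
  rw [hL6]
  constructor
  · -- finrank = 2 → conditions
    intro hd2
    obtain ⟨e, hefix, heind⟩ := hpick 2 (by omega)
    set u := e 0 with hudef
    set v := e 1 with hvdef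
    have hu0 : u ≠ 0 := heind.ne_zero 0
    have hindep : ∀ a : Fq, v ≠ algebraMap Fq F a * u := by
      intro a hveq
      have := Fintype.linearIndependent_iff.mp heind ![a, -1] (by
        rw [Fin.sum_univ_two]
        simp only [Matrix.cons_val_zero, Matrix.cons_val_one, Matrix.head_cons]
        rw [Algebra.smul_def, Algebra.smul_def, map_neg, map_one, ← hudef, ← hvdef, hveq]
        ring) 1
      simp at this
    have hbij := hkey u v (hefix 0) (hefix 1) hu0 hindep
    -- g ∘ g = id
    have hggid : ∀ x : F, g (g x) = x := by
      intro x
      obtain ⟨⟨e1, e2⟩, hx⟩ := hbij.2 x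
      simp only at hx
      have hgx : g x = (e1 : F) ^ q * u + (e2 : F) ^ q * v := by
        rw [← hx, hgadd, hsemi _ _ e1.2, hsemi _ _ e2.2, hefix 0, hefix 1]
      have he1q : ((e1 : F) ^ q) ^ q ^ 2 = (e1 : F) ^ q := by
        rw [← pow_mul, show q * q ^ 2 = q ^ 2 * q by ring, pow_mul, e1.2]
      have he2q : ((e2 : F) ^ q) ^ q ^ 2 = (e2 : F) ^ q := by
        rw [← pow_mul, show q * q ^ 2 = q ^ 2 * q by ring, pow_mul, e2.2]
      rw [hgx, hgadd, hsemi _ _ he1q, hsemi _ _ he2q, hefix 0, hefix 1, ← hx]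
      have h1 : ((e1 : F) ^ q) ^ q = (e1 : F) := by
        rw [← pow_mul, show q * q = q ^ 2 by ring, e1.2]
      have h2 : ((e2 : F) ^ q) ^ q = (e2 : F) := by
        rw [← pow_mul, show q * q = q ^ 2 by ring, e2.2]
      rw [h1, h2]
    have : ∀ x : F, (b0 * b1 ^ q ^ 3 + b1 * b0 ^ q) * x
        + (b0 * b0 ^ q ^ 3 + b1 * b1 ^ q) * x ^ q ^ 2 = x := by
      intro x; rw [← hgg, hggid]
    exact hcoeff _ _ this
  · -- conditions → finrank = 2
    rintro ⟨hm1, hm2⟩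
    have hggid : ∀ x : F, g (g x) = x := by
      intro x
      rw [hgg, hm1, hm2]
      ring
    -- lower bound: finrank ≥ 2
    have hlow : 2 ≤ Module.finrank Fq ↥W := by
      have hlt : (univ.filter fun c : F => c ^ q = c).card
          < (univ.filter fun x : F => x ^ q ^ 2 = x).card := by
        rw [hS2card]
        calc (univ.filter fun c : F => c ^ q = c).card ≤ q := hS1cardle
          _ < q ^ 2 := by nlinarith
      have hnsub : ¬ (univ.filter fun x : F => x ^ q ^ 2 = x)
          ⊆ (univ.filter fun c : F => c ^ q = c) :=
        fun hsub => absurd (Finset.card_le_card hsub) (not_le.mpr hlt)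
      obtain ⟨c0, hc0mem, hc0not⟩ := Finset.not_subset.mp hnsub
      simp only [mem_filter, mem_univ, true_and] at hc0mem hc0not
      have hcne : c0 ^ q - c0 ≠ 0 := sub_ne_zero.mpr hc0not
      have hsurj : Function.Surjective (fun wpair : ↥W × ↥W =>
          (c0 ^ q - c0)⁻¹ * (c0 ^ q * (wpair.1 : F) - (wpair.2 : F))) := by
        intro x
        have hw1 : x + g x ∈ W := (hker _).mpr (by rw [hgadd, hggid, add_comm])
        have hc0q2 : (c0 ^ q) ^ q ^ 2 = c0 ^ q := by
          rw [← pow_mul, show q * q ^ 2 = q ^ 2 * q by ring, pow_mul, hc0mem]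
        have hc0qq : (c0 ^ q) ^ q = c0 := by
          rw [← pow_mul, show q * q = q ^ 2 by ring, hc0mem]
        have hw2 : c0 * x + c0 ^ q * g x ∈ W := by
          refine (hker _).mpr ?_
          rw [hgadd, hsemi _ _ hc0mem, hsemi _ _ hc0q2, hggid, hc0qq]
          ring
        refine ⟨(⟨x + g x, hw1⟩, ⟨c0 * x + c0 ^ q * g x, hw2⟩), ?_⟩
        simp only
        field_simp
        ring
      have hcardle := Fintype.card_le_of_surjective _ hsurj
      rw [Fintype.card_prod, hcardW, hF, ← pow_add] at hcardle
      have h4 := (Nat.pow_le_pow_iff_right (by omega : 1 < q)).mp hcardle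
      omega
    -- upper bound: finrank ≤ 2
    have hhigh : Module.finrank Fq ↥W ≤ 2 := by
      by_contra hcon
      push_neg at hcon
      obtain ⟨e, hefix, heind⟩ := hpick 3 (by omega)
      set u := e 0 with hudef
      set v := e 1 with hvdef
      have hgu : g u = u := by rw [hudef]; exact hefix 0
      have hgv : g v = v := by rw [hvdef]; exact hefix 1
      have hgw : g (e 2) = e 2 := hefix 2
      have heind2 : LinearIndependent Fq (fun i : Fin 2 => e (Fin.castLE (by omega) i)) :=
        heind.comp _ (Fin.castLE_injective (by omega))
      have hu0 : u ≠ 0 := heind.ne_zero 0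
      have hindep : ∀ a : Fq, v ≠ algebraMap Fq F a * u := by
        intro a hveq
        have := Fintype.linearIndependent_iff.mp heind2 ![a, -1] (by
          rw [Fin.sum_univ_two]
          simp only [Matrix.cons_val_zero, Matrix.cons_val_one, Matrix.head_cons]
          show a • e 0 + (-1 : Fq) • e 1 = 0
          rw [Algebra.smul_def, Algebra.smul_def, map_neg, map_one, ← hudef, ← hvdef, hveq]
          ring) 1
        simp at this
      have hbij := hkey u v hgu hgv hu0 hindep
      obtain ⟨⟨e1, e2⟩, hx⟩ := hbij.2 (e 2)
      simp only at hx
      have hgw2 : (e1 : F) ^ q * u + (e2 : F) ^ q * v = e 2 := by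
        rw [← hgw, ← hx, hgadd, hsemi _ _ e1.2, hsemi _ _ e2.2, hgu, hgv]
      have heq' : ((e1 : F) ^ q - e1) * u = ((e2 : F) - (e2 : F) ^ q) * v := by
        rw [← hx] at hgw2
        linear_combination hgw2
      have he2fix : (e2 : F) ^ q = e2 := by
        by_contra hne
        have hne' : ((e2 : F) - (e2 : F) ^ q) ≠ 0 := sub_ne_zero.mpr (Ne.symm hne)
        have hveq : v = ((((e1 : F) ^ q - e1)) * (((e2 : F) - (e2 : F) ^ q))⁻¹) * u := by
          field_simp
          linear_combination -heq'
        have he1q2 : ((e1 : F) ^ q) ^ q ^ 2 = (e1 : F) ^ q := by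
          rw [← pow_mul, show q * q ^ 2 = q ^ 2 * q by ring, pow_mul, e1.2]
        have he2q2 : ((e2 : F) ^ q) ^ q ^ 2 = (e2 : F) ^ q := by
          rw [← pow_mul, show q * q ^ 2 = q ^ 2 * q by ring, pow_mul, e2.2]
        have hc : ((((e1 : F) ^ q - e1)) * (((e2 : F) - (e2 : F) ^ q))⁻¹) ^ q ^ 2
            = (((e1 : F) ^ q - e1)) * (((e2 : F) - (e2 : F) ^ q))⁻¹ := by
          rw [mul_pow, inv_pow, hsubn 2, hsubn 2, e1.2, e2.2, he1q2, he2q2]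
        -- contradiction via hindep as in hkey
        have h1 : g v = (((e1 : F) ^ q - e1) * (((e2 : F) - (e2 : F) ^ q))⁻¹) ^ q * u := by
          rw [hveq, hsemi _ u hc, hgu]
        rw [hgv, hveq] at h1
        set c := (((e1 : F) ^ q - e1)) * (((e2 : F) - (e2 : F) ^ q))⁻¹ with hcdef
        have h2 : c ^ q = c := by
          have h3 : (c - c ^ q) * u = 0 := by linear_combination h1
          rcases mul_eq_zero.mp h3 with h4 | h4
          · linear_combination -h4
          · exact absurd h4 hu0
        obtain ⟨a, ha⟩ := (hS1 c).mp h2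
        exact hindep a (by rw [ha]; exact hveq)
      have he1fix : (e1 : F) ^ q = e1 := by
        rw [he2fix, sub_self, zero_mul] at heq'
        rcases mul_eq_zero.mp heq' with h4 | h4
        · linear_combination h4
        · exact absurd h4 hu0
      obtain ⟨a1, ha1⟩ := (hS1 e1).mp he1fix
      obtain ⟨a2, ha2⟩ := (hS1 e2).mp he2fix
      have := Fintype.linearIndependent_iff.mp heind ![a1, a2, -1] (by
        rw [Fin.sum_univ_three]
        simp only [Matrix.cons_val_zero, Matrix.cons_val_one, Matrix.head_cons,
          Matrix.cons_val_two, Matrix.tail_cons]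
        rw [Algebra.smul_def, Algebra.smul_def, Algebra.smul_def, map_neg, map_one,
          ha1, ha2]
        rw [← hudef, ← hvdef, ← hx]
        ring) 2
      simp at this
    omega
end

section
/- Let f(x) = -x + b₀x^{q³} + b₁x^q ∈ F_{q⁴}[x] with b₀,b₁ ≠ 0 and z = b₀/b₁. Then dim_{F_q} ker f = 2 if and only if N_{q⁴/q}(z) = 1 and b₁^{q+1} = 1/(z^q - z^{q²+q+1}). In particular, these conditions force N_{q⁴/q²}(z) ≠ 1. -/
open Module

lemma indep_map {Fq F : Type*} [Field Fq] [Field F] [Algebra Fq F]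
    [FiniteDimensional Fq F] {n k : ℕ} (v : Fin k → (Fin n → Fq))
    (hv : LinearIndependent Fq v) :
    LinearIndependent F (fun i => (algebraMap Fq F) ∘ v i) := by
  classical
  set ι : Fq →+* F := algebraMap Fq F with hι
  let e : Basis (Fin (finrank Fq F)) Fq F := Module.finBasis Fq F
  rw [Fintype.linearIndependent_iff] at hv ⊢
  intro g hg i0
  set a : Fin k → Fin (finrank Fq F) → Fq := fun i j => e.repr (g i) j with ha
  have hrepr : ∀ i, g i = ∑ j, ι (a i j) * e j := by
    intro i
    conv_lhs => rw [← e.sum_repr (g i)]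
    exact Finset.sum_congr rfl fun j _ => Algebra.smul_def _ _
  have key : ∀ j, ∀ t : Fin n, (∑ i, a i j * v i t) = 0 := by
    intro j t
    have hgt : (∑ i, g i * ι (v i t)) = 0 := by
      have := congrFun hg t
      simpa [Finset.sum_apply, Pi.smul_apply, smul_eq_mul] using this
    have h2 : (∑ j, (∑ i, a i j * v i t) • e j) = ∑ i, g i * ι (v i t) :=
      calc ∑ j, (∑ i, a i j * v i t) • e j
          = ∑ j, ∑ i, (ι (a i j) * e j) * ι (v i t) := by
            refine Finset.sum_congr rfl fun j _ => ?_
            rw [Algebra.smul_def, map_sum, Finset.sum_mul]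
            exact Finset.sum_congr rfl fun i _ => by rw [map_mul]; ring
        _ = ∑ i, ∑ j, (ι (a i j) * e j) * ι (v i t) := Finset.sum_comm
        _ = ∑ i, g i * ι (v i t) := by
            refine Finset.sum_congr rfl fun i _ => ?_
            rw [hrepr i, Finset.sum_mul]
    rw [hgt] at h2
    exact Fintype.linearIndependent_iff.mp e.linearIndependent _ h2 j
  have haz : ∀ i j, a i j = 0 := by
    intro i j
    refine hv (fun i => a i j) ?_ i
    funext t
    simpa [Finset.sum_apply, Pi.smul_apply, smul_eq_mul] using key j t
  rw [hrepr i0]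
  simp [haz]

lemma frob_distinct {F : Type*} [Field F] [Fintype F] [DecidableEq F] {q : ℕ} (hq2 : 2 ≤ q)
    (hF : Fintype.card F = q ^ 4) {i j : Fin 4} (hij : i < j)
    (h : ∀ x : F, x ^ q ^ (i:ℕ) = x ^ q ^ (j:ℕ)) : False := by
  classical
  obtain ⟨ζ, hζ⟩ := IsCyclic.exists_generator (α := Fˣ)
  have hord : orderOf ζ = q ^ 4 - 1 := by
    rw [orderOf_eq_card_of_forall_mem_zpowers hζ, Nat.card_eq_fintype_card,
      Fintype.card_units, hF]
  have hu : ζ ^ q ^ (i:ℕ) = ζ ^ q ^ (j:ℕ) := by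
    ext
    push_cast
    exact h ζ
  have hmod := (pow_eq_pow_iff_modEq).mp hu
  rw [hord] at hmod
  have hle : q ^ (i:ℕ) ≤ q ^ (j:ℕ) :=
    Nat.pow_le_pow_right (by omega) (le_of_lt hij)
  have hlt : q ^ (i:ℕ) < q ^ (j:ℕ) :=
    Nat.pow_lt_pow_right (by omega) hij
  have hdvd := (Nat.modEq_iff_dvd' hle).mp hmod
  have hpos : 0 < q ^ (j:ℕ) - q ^ (i:ℕ) := by omega
  have hge := Nat.le_of_dvd hpos hdvd
  have hj3 : (j:ℕ) ≤ 3 := by omega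
  have h3 : q ^ (j:ℕ) ≤ q ^ 3 := Nat.pow_le_pow_right (by omega) hj3
  have h4 : q ^ 3 * 2 ≤ q ^ 4 := by
    calc q ^ 3 * 2 ≤ q ^ 3 * q := Nat.mul_le_mul_left _ hq2
    _ = q ^ 4 := by ring
  have h23 : 2 ≤ q ^ 3 := by
    calc 2 ≤ q := hq2
    _ = q ^ 1 := (pow_one q).symm
    _ ≤ q ^ 3 := Nat.pow_le_pow_right (by omega) (by omega)
  omega

lemma moore_det {Fq F : Type*} [Field Fq] [Field F] [Algebra Fq F]
    [Fintype Fq] [Fintype F] {q : ℕ} (hq2 : 2 ≤ q)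
    (hq : Fintype.card Fq = q) (hF : Fintype.card F = q ^ 4)
    (hadd : ∀ (x y : F) (n : ℕ), (x + y) ^ q ^ n = x ^ q ^ n + y ^ q ^ n)
    (bb : Basis (Fin 4) Fq F) :
    (Matrix.of (fun i j : Fin 4 => bb j ^ q ^ (i : ℕ))).det ≠ 0 := by
  classical
  intro hdet
  obtain ⟨c, hc0, hc⟩ := Matrix.exists_vecMul_eq_zero_iff.mpr hdet
  set ι := algebraMap Fq F with hι
  have hfixq : ∀ (a : Fq) (n : ℕ), a ^ q ^ n = a := by
    intro a n
    induction n with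
    | zero => simp
    | succ n ih => rw [pow_succ, pow_mul, ih, ← hq, FiniteField.pow_card]
  let g : F →ₗ[Fq] F :=
    { toFun := fun x => ∑ i : Fin 4, c i * x ^ q ^ (i:ℕ)
      map_add' := by
        intro x y
        rw [← Finset.sum_add_distrib]
        exact Finset.sum_congr rfl fun i _ => by rw [hadd]; ring
      map_smul' := by
        intro a x
        simp only [RingHom.id_apply, Algebra.smul_def, mul_pow, ← map_pow, hfixq,
          Finset.mul_sum]
        exact Finset.sum_congr rfl fun i _ => by ring }
  have hgb : ∀ j, g (bb j) = 0 := by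
    intro j
    have := congrFun hc j
    simpa [g, Matrix.vecMul, dotProduct] using this
  have hg : ∀ x, g x = 0 := by
    have : g = 0 := by
      apply bb.ext
      intro j; simpa using hgb j
    intro x; rw [this]; rfl
  have hinj : Function.Injective (fun i : Fin 4 => (powMonoidHom (q ^ (i:ℕ)) : F →* F)) := by
    intro i j hijeq
    by_contra hne
    rcases Ne.lt_or_gt hne with h | h
    · exact frob_distinct hq2 hF h
        (fun x => by simpa [powMonoidHom] using DFunLike.congr_fun hijeq x)
    · exact frob_distinct hq2 hF h
        (fun x => by simpa [powMonoidHom] using (DFunLike.congr_fun hijeq x).symm)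
  have hind := (linearIndependent_monoidHom F F).comp _ hinj
  have := Fintype.linearIndependent_iff.mp hind c ?_
  · exact hc0 (funext fun i => this i)
  · funext x
    have := hg x
    simpa [g, powMonoidHom, Finset.sum_apply] using this
lemma mulVec_map_comm {Fq F : Type*} [Field Fq] [Field F] [Algebra Fq F]
    {n : ℕ} (A : Matrix (Fin n) (Fin n) Fq) (v : Fin n → Fq) :
    (A.map (algebraMap Fq F)).mulVec ((algebraMap Fq F) ∘ v)
      = (algebraMap Fq F) ∘ (A.mulVec v) := by
  funext i
  simp [Matrix.mulVec, dotProduct, Function.comp, ← map_mul, ← map_sum]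

lemma ker_finrank_map {Fq F : Type*} [Field Fq] [Field F] [Algebra Fq F]
    [FiniteDimensional Fq F] {n : ℕ} (A : Matrix (Fin n) (Fin n) Fq) :
    finrank F (LinearMap.ker (A.map (algebraMap Fq F)).mulVecLin)
      = finrank Fq (LinearMap.ker A.mulVecLin) := by
  classical
  set ι := algebraMap Fq F with hι
  set A' := A.map ι with hA'
  -- nullity inequality
  have hnull : finrank Fq (LinearMap.ker A.mulVecLin)
      ≤ finrank F (LinearMap.ker A'.mulVecLin) := by
    set k := finrank Fq (LinearMap.ker A.mulVecLin) with hk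
    let bb : Basis (Fin k) Fq (LinearMap.ker A.mulVecLin) := Module.finBasis _ _
    have hbi : LinearIndependent Fq (fun i => ((bb i : Fin n → Fq))) :=
      bb.linearIndependent.map' (LinearMap.ker A.mulVecLin).subtype
        (Submodule.ker_subtype _)
    have hind : LinearIndependent F (fun i => ι ∘ (bb i : Fin n → Fq)) :=
      indep_map _ hbi
    have hmem : ∀ i, (ι ∘ (bb i : Fin n → Fq)) ∈ LinearMap.ker A'.mulVecLin := by
      intro i
      have : A.mulVec (bb i : Fin n → Fq) = 0 := (bb i).2
      simp only [LinearMap.mem_ker, Matrix.mulVecLin_apply, hA']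
      rw [mulVec_map_comm, this]
      funext t; simp
    let w : Fin k → LinearMap.ker A'.mulVecLin := fun i => ⟨_, hmem i⟩
    have hw : LinearIndependent F w := by
      apply LinearIndependent.of_comp (LinearMap.ker A'.mulVecLin).subtype
      exact hind
    simpa using hw.fintype_card_le_finrank
  -- rank inequality
  have hrange : finrank Fq (LinearMap.range A.mulVecLin)
      ≤ finrank F (LinearMap.range A'.mulVecLin) := by
    set k := finrank Fq (LinearMap.range A.mulVecLin) with hk
    let bb : Basis (Fin k) Fq (LinearMap.range A.mulVecLin) := Module.finBasis _ _
    have hbi : LinearIndependent Fq (fun i => ((bb i : Fin n → Fq))) :=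
      bb.linearIndependent.map' (LinearMap.range A.mulVecLin).subtype
        (Submodule.ker_subtype _)
    have hind : LinearIndependent F (fun i => ι ∘ (bb i : Fin n → Fq)) :=
      indep_map _ hbi
    have hmem : ∀ i, (ι ∘ (bb i : Fin n → Fq)) ∈ LinearMap.range A'.mulVecLin := by
      intro i
      obtain ⟨x, hx⟩ := (bb i).2
      refine ⟨ι ∘ x, ?_⟩
      simp only [Matrix.mulVecLin_apply, hA']
      rw [mulVec_map_comm]
      simp only [Matrix.mulVecLin_apply] at hx
      rw [hx]
    let w : Fin k → LinearMap.range A'.mulVecLin := fun i => ⟨_, hmem i⟩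
    have hw : LinearIndependent F w := by
      apply LinearIndependent.of_comp (LinearMap.range A'.mulVecLin).subtype
      exact hind
    simpa using hw.fintype_card_le_finrank
  have h1 := LinearMap.finrank_range_add_finrank_ker A.mulVecLin
  have h2 := LinearMap.finrank_range_add_finrank_ker A'.mulVecLin
  rw [finrank_fintype_fun_eq_card, Fintype.card_fin] at h1 h2
  omega
lemma sum_pow_q {F : Type*} [Field F] {q : ℕ} (hq2 : 2 ≤ q)
    (hadd : ∀ (x y : F) (n : ℕ), (x + y) ^ q ^ n = x ^ q ^ n + y ^ q ^ n)
    {γ : Type*} (s : Finset γ) (g : γ → F) (n : ℕ) :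
    (∑ t ∈ s, g t) ^ q ^ n = ∑ t ∈ s, (g t) ^ q ^ n := by
  classical
  induction s using Finset.cons_induction with
  | empty =>
    simp only [Finset.sum_empty]
    have : 0 < q ^ n := Nat.pow_pos (by omega)
    exact zero_pow (by omega)
  | cons a s ha ih =>
    rw [Finset.sum_cons, Finset.sum_cons, hadd, ih]

lemma dickson {Fq F : Type*} [Field Fq] [Field F] [Algebra Fq F]
    [Fintype Fq] [Fintype F] {q : ℕ} (hq2 : 2 ≤ q)
    (hq : Fintype.card Fq = q) (hF : Fintype.card F = q ^ 4)
    (hadd : ∀ (x y : F) (n : ℕ), (x + y) ^ q ^ n = x ^ q ^ n + y ^ q ^ n)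
    (f : F →ₗ[Fq] F) (D : Matrix (Fin 4) (Fin 4) F)
    (hrow : ∀ (i : Fin 4) (y : F),
      ∑ k : Fin 4, D i k * y ^ q ^ (k:ℕ) = (f y) ^ q ^ (i:ℕ)) :
    finrank Fq (LinearMap.ker f) = finrank F (LinearMap.ker D.mulVecLin) := by
  classical
  set ι := algebraMap Fq F with hι
  have hιinj : Function.Injective ι := (algebraMap Fq F).injective
  haveI : FiniteDimensional Fq F := Module.Finite.of_finite (R := Fq) (M := F)
  have hfixq : ∀ (a : Fq) (n : ℕ), a ^ q ^ n = a := by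
    intro a n
    induction n with
    | zero => simp
    | succ n ih => rw [pow_succ, pow_mul, ih, ← hq, FiniteField.pow_card]
  have h4 : finrank Fq F = 4 := by
    have := card_eq_pow_finrank (K := Fq) (V := F)
    rw [hq, hF] at this
    exact (Nat.pow_right_injective hq2 this.symm)
  let bb : Basis (Fin 4) Fq F := (Module.finBasis Fq F).reindex (finCongr h4)
  set A : Matrix (Fin 4) (Fin 4) Fq := LinearMap.toMatrix bb bb f with hA
  set A' := A.map ι with hA'
  -- Step I : ker f ≅ ker A.mulVecLin
  have stepI : finrank Fq (LinearMap.ker f) = finrank Fq (LinearMap.ker A.mulVecLin) := by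
    have hmap : Submodule.map bb.equivFun.toLinearMap (LinearMap.ker f) = LinearMap.ker A.mulVecLin := by
      ext v
      constructor
      · rintro ⟨x, hx, rfl⟩
        have hx0 : f x = 0 := hx
        show A.mulVec (bb.equivFun x) = 0
        rw [Basis.equivFun_apply, hA, LinearMap.toMatrix_mulVec_repr, hx0]
        simp
      · intro hv
        have hv0 : A.mulVec v = 0 := hv
        refine ⟨bb.equivFun.symm v, ?_, bb.equivFun.apply_symm_apply v⟩
        show f (bb.equivFun.symm v) = 0
        have key := LinearMap.toMatrix_mulVec_repr bb bb f (bb.equivFun.symm v)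
        have hcoe : ⇑(bb.repr (bb.equivFun.symm v)) = v := by
          rw [← Basis.equivFun_apply, bb.equivFun.apply_symm_apply]
        rw [hcoe, ← hA, hv0] at key
        have hrz : bb.repr (f (bb.equivFun.symm v)) = 0 := by
          ext j; exact (congrFun key.symm j)
        exact (LinearEquiv.map_eq_zero_iff bb.repr).mp hrz
    rw [← hmap]
    exact (LinearEquiv.finrank_map_eq bb.equivFun (LinearMap.ker f)).symm
  -- Moore matrix
  set M : Matrix (Fin 4) (Fin 4) F := Matrix.of (fun i j : Fin 4 => bb j ^ q ^ (i : ℕ)) with hM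
  have hdet : M.det ≠ 0 := moore_det hq2 hq hF hadd bb
  -- key identity
  have hDM : D * M = M * A' := by
    ext i j
    rw [Matrix.mul_apply, Matrix.mul_apply]
    have lhs : ∑ k : Fin 4, D i k * M k j = (f (bb j)) ^ q ^ (i:ℕ) := hrow i (bb j)
    rw [lhs]
    have hfbj : f (bb j) = ∑ k : Fin 4, ι (A k j) * bb k := by
      conv_lhs => rw [← bb.sum_repr (f (bb j))]
      refine Finset.sum_congr rfl fun k _ => ?_
      rw [Algebra.smul_def, hA, LinearMap.toMatrix_apply]
    rw [hfbj, sum_pow_q hq2 hadd]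
    refine Finset.sum_congr rfl fun k _ => ?_
    rw [mul_pow, ← map_pow, hfixq]
    simp only [hM, hA', Matrix.map_apply, Matrix.of_apply]
    ring
  -- Step III
  haveI hMinv : Invertible M := M.invertibleOfIsUnitDet (isUnit_iff_ne_zero.mpr hdet)
  let e2 := M.toLinearEquiv' hMinv
  have he2 : ∀ v, e2 v = M.mulVec v := fun v => rfl
  have stepIII : Submodule.map e2.toLinearMap (LinearMap.ker A'.mulVecLin)
      = LinearMap.ker D.mulVecLin := by
    ext w
    constructor
    · rintro ⟨v, hv, rfl⟩
      have hv0 : A'.mulVec v = 0 := hv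
      show D.mulVec (e2 v) = 0
      rw [he2, Matrix.mulVec_mulVec, hDM, ← Matrix.mulVec_mulVec, hv0, Matrix.mulVec_zero]
    · intro hw
      have hw0 : D.mulVec w = 0 := hw
      refine ⟨e2.symm w, ?_, e2.apply_symm_apply w⟩
      have hws : M.mulVec (e2.symm w) = w := by
        have := e2.apply_symm_apply w
        rwa [he2] at this
      show A'.mulVec (e2.symm w) = 0
      apply e2.injective
      rw [map_zero, he2, Matrix.mulVec_mulVec, ← hDM, ← Matrix.mulVec_mulVec, hws, hw0]
  rw [stepI, ← ker_finrank_map (F := F) A, ← hA', ← stepIII]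
  exact (LinearEquiv.finrank_map_eq e2 (LinearMap.ker A'.mulVecLin)).symm
lemma kerD_char {F : Type*} [Field F] {q : ℕ} (b0 b1 : F) (hb0 : b0 ≠ 0)
    (D : Matrix (Fin 4) (Fin 4) F)
    (hD : D = !![-1, b1, 0, b0; b0^q, -1, b1^q, 0;
        0, b0^(q^2), -1, b1^(q^2); b1^(q^3), 0, b0^(q^3), -1]) :
    finrank F (LinearMap.ker D.mulVecLin) = 2 ↔
      (D.mulVec ![b0, b0*b0^q, 0, 1 - b1*b0^q] = 0 ∧
        D.mulVec ![0, b0*b1^q, b0, -(b1*b1^q)] = 0) := by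
  classical
  subst hD
  set D : Matrix (Fin 4) (Fin 4) F := !![-1, b1, 0, b0; b0^q, -1, b1^q, 0;
        0, b0^(q^2), -1, b1^(q^2); b1^(q^3), 0, b0^(q^3), -1] with hD
  -- row equations
  have hrows : ∀ v : Fin 4 → F, D.mulVec v = 0 →
      (-(v 0) + b1 * v 1 + b0 * v 3 = 0) ∧ (b0^q * v 0 - v 1 + b1^q * v 2 = 0) := by
    intro v h
    have h0 := congrFun h 0
    have h1 := congrFun h 1
    simp [hD, Matrix.mulVec, dotProduct, Fin.sum_univ_four] at h0 h1
    constructor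
    · linear_combination h0
    · linear_combination h1
  -- the projection map
  let proj : (Fin 4 → F) →ₗ[F] (Fin 2 → F) :=
    { toFun := fun v => ![v 0, v 2]
      map_add' := by intro x y; funext i; fin_cases i <;> simp
      map_smul' := by intro c x; funext i; fin_cases i <;> simp }
  let π : LinearMap.ker D.mulVecLin →ₗ[F] (Fin 2 → F) :=
    proj.comp (LinearMap.ker D.mulVecLin).subtype
  have hπinj : Function.Injective π := by
    rw [← LinearMap.ker_eq_bot]
    rw [Submodule.eq_bot_iff]
    rintro ⟨v, hv⟩ hvπ
    have hv0 : D.mulVec v = 0 := hv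
    have hc0 : v 0 = 0 := by
      have := congrFun (show (![v 0, v 2] : Fin 2 → F) = 0 from hvπ) 0
      simpa using this
    have hc2 : v 2 = 0 := by
      have := congrFun (show (![v 0, v 2] : Fin 2 → F) = 0 from hvπ) 1
      simpa using this
    obtain ⟨r0, r1⟩ := hrows v hv0
    rw [hc0] at r0 r1
    rw [hc2] at r1
    have hv1 : v 1 = 0 := by linear_combination -r1
    rw [hv1] at r0
    have hv3 : v 3 = 0 := by
      have : b0 * v 3 = 0 := by linear_combination r0
      rcases mul_eq_zero.mp this with h | h
      · exact absurd h hb0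
      · exact h
    ext j
    fin_cases j <;> simpa [hv0] using (by assumption : _ = (0:F))
  constructor
  · -- dim = 2 → both vectors in kernel
    intro hdim
    have hsurj : Function.Surjective π := by
      have hfr : finrank F (LinearMap.ker D.mulVecLin) = finrank F (Fin 2 → F) := by
        rw [hdim, finrank_fintype_fun_eq_card]; simp
      exact (LinearMap.injective_iff_surjective_of_finrank_eq_finrank hfr).mp hπinj
    have getvec : ∀ c0 c2 : F, ∃ v : Fin 4 → F, D.mulVec v = 0 ∧ v 0 = c0 ∧ v 2 = c2 := by
      intro c0 c2
      obtain ⟨⟨v, hv⟩, hveq⟩ := hsurj ![c0, c2]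
      refine ⟨v, hv, ?_, ?_⟩
      · have := congrFun (show (![v 0, v 2] : Fin 2 → F) = ![c0, c2] from hveq) 0
        simpa using this
      · have := congrFun (show (![v 0, v 2] : Fin 2 → F) = ![c0, c2] from hveq) 1
        simpa using this
    constructor
    · obtain ⟨v, hv, h0, h2⟩ := getvec b0 0
      obtain ⟨r0, r1⟩ := hrows v hv
      rw [h0] at r0 r1
      rw [h2] at r1
      have hv1 : v 1 = b0 * b0^q := by linear_combination -r1
      rw [hv1] at r0
      have hv3 : v 3 = 1 - b1 * b0^q := by
        have hkey : b0 * v 3 = b0 * (1 - b1 * b0^q) := by ring_nf; linear_combination r0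
        exact mul_left_cancel₀ hb0 hkey
      have : v = ![b0, b0*b0^q, 0, 1 - b1*b0^q] := by
        funext j; fin_cases j <;> simp [h0, hv1, h2, hv3]
      rw [← this]; exact hv
    · obtain ⟨v, hv, h0, h2⟩ := getvec 0 b0
      obtain ⟨r0, r1⟩ := hrows v hv
      rw [h0] at r0 r1
      rw [h2] at r1
      have hv1 : v 1 = b0 * b1^q := by linear_combination -r1
      rw [hv1] at r0
      have hv3 : v 3 = -(b1 * b1^q) := by
        have hkey : b0 * v 3 = b0 * (-(b1 * b1^q)) := by ring_nf; linear_combination r0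
        exact mul_left_cancel₀ hb0 hkey
      have : v = ![0, b0*b1^q, b0, -(b1*b1^q)] := by
        funext j; fin_cases j <;> simp [h0, hv1, h2, hv3]
      rw [← this]; exact hv
  · -- both vectors in kernel → dim = 2
    rintro ⟨hA, hB⟩
    have hle : finrank F (LinearMap.ker D.mulVecLin) ≤ 2 := by
      have := LinearMap.finrank_le_finrank_of_injective hπinj
      rwa [finrank_fintype_fun_eq_card, Fintype.card_fin] at this
    have hge : 2 ≤ finrank F (LinearMap.ker D.mulVecLin) := by
      let vv : Fin 2 → LinearMap.ker D.mulVecLin :=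
        ![⟨_, hA⟩, ⟨_, hB⟩]
      have hindc : LinearIndependent F (⇑π ∘ vv) := by
        rw [Fintype.linearIndependent_iff]
        intro g hg
        have e0 := congrFun hg 0
        have e1 := congrFun hg 1
        simp [vv, π, proj, Fin.sum_univ_two, Matrix.cons_val_zero, Matrix.cons_val_one] at e0 e1
        have hg0 : g 0 = 0 := by
          rcases e0 with h | h
          · exact h
          · exact absurd h hb0
        have hg1 : g 1 = 0 := by
          rcases e1 with h | h
          · exact h
          · exact absurd h hb0
        intro i; fin_cases i <;> assumption
      have hind : LinearIndependent F vv := hindc.of_comp π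
      simpa using hind.fintype_card_le_finrank
    omega
theorem stmt_15 (q : ℕ) (Fq F : Type*) [Field Fq] [Field F] [Algebra Fq F]
    [Fintype Fq] [Fintype F]
    (hq : Fintype.card Fq = q) (hF : Fintype.card F = q ^ 4)
    (b0 b1 : F) (hb0 : b0 ≠ 0) (hb1 : b1 ≠ 0)
    (z : F) (hz : z = b0 / b1)
    (f : F →ₗ[Fq] F)
    (hf : ∀ x, f x = -x + b0 * x ^ q ^ 3 + b1 * x ^ q) :
    (Module.finrank Fq (LinearMap.ker f) = 2 ↔
      (z ^ (1 + q + q ^ 2 + q ^ 3) = 1 ∧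
        b1 ^ (q + 1) = 1 / (z ^ q - z ^ (q ^ 2 + q + 1)))) ∧
    ((z ^ (1 + q + q ^ 2 + q ^ 3) = 1 ∧
        b1 ^ (q + 1) = 1 / (z ^ q - z ^ (q ^ 2 + q + 1))) →
      z ^ (q ^ 2 + 1) ≠ 1) := by
  classical
  -- basic facts
  have hq2 : 2 ≤ q := by rw [← hq]; exact Fintype.one_lt_card
  have hadd : ∀ (x y : F) (n : ℕ), (x + y) ^ q ^ n = x ^ q ^ n + y ^ q ^ n := by
    set p := ringChar Fq with hp
    haveI : CharP Fq p := ringChar.charP Fq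
    obtain ⟨m, hprime, hcard⟩ := FiniteField.card Fq p
    haveI : Fact p.Prime := ⟨hprime⟩
    haveI : CharP F p := charP_of_injective_algebraMap (algebraMap Fq F).injective p
    intro x y n
    have hqpm : q = p ^ (m : ℕ) := by rw [← hq, hcard]
    rw [hqpm, ← pow_mul]
    exact add_pow_char_pow x y p (m*n)
  have h4 : ∀ y : F, y ^ q ^ 4 = y := by
    intro y; rw [← hF]; exact FiniteField.pow_card y
  have hqn0 : ∀ n : ℕ, q ^ n ≠ 0 := fun n => (Nat.pow_pos (show 0 < q by omega)).ne'
  have hneg : ∀ (x : F) (n : ℕ), (-x) ^ q ^ n = -(x ^ q ^ n) := by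
    intro x n
    have h0 := hadd x (-x) n
    rw [add_neg_cancel, zero_pow (hqn0 n)] at h0
    exact (eq_neg_of_add_eq_zero_right h0.symm)
  have hadd1 : ∀ x y : F, (x + y) ^ q = x ^ q + y ^ q := by
    intro x y; have := hadd x y 1; rwa [pow_one] at this
  have hneg1 : ∀ x : F, (-x) ^ q = -(x ^ q) := by
    intro x; have := hneg x 1; rwa [pow_one] at this
  -- power reduction lemmas
  have hr3q : ∀ y : F, (y ^ q ^ 3) ^ q = y := by
    intro y; rw [← pow_mul, ← pow_succ]; exact h4 y
  have hr1q : ∀ y : F, (y ^ q) ^ q = y ^ q ^ 2 := by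
    intro y; rw [← pow_mul, ← pow_two]
  have hr32 : ∀ y : F, (y ^ q ^ 3) ^ q ^ 2 = y ^ q := by
    intro y; rw [← pow_mul, show q^3 * q^2 = q^4 * q by ring, pow_mul, h4]
  have hr12 : ∀ y : F, (y ^ q) ^ q ^ 2 = y ^ q ^ 3 := by
    intro y; rw [← pow_mul, show q * q^2 = q^3 by ring]
  have hr33 : ∀ y : F, (y ^ q ^ 3) ^ q ^ 3 = y ^ q ^ 2 := by
    intro y; rw [← pow_mul, show q^3 * q^3 = q^4 * q^2 by ring, pow_mul, h4]
  have hr13 : ∀ y : F, (y ^ q) ^ q ^ 3 = y := by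
    intro y; rw [← pow_mul, show q * q^3 = q^4 by ring, h4]
  -- the Dickson matrix
  set D : Matrix (Fin 4) (Fin 4) F := !![-1, b1, 0, b0; b0^q, -1, b1^q, 0;
      0, b0^(q^2), -1, b1^(q^2); b1^(q^3), 0, b0^(q^3), -1] with hD
  have hrow : ∀ (i : Fin 4) (y : F),
      ∑ k : Fin 4, D i k * y ^ q ^ (k:ℕ) = (f y) ^ q ^ (i:ℕ) := by
    intro i y
    have hE1 : (f y) ^ q = -(y^q) + b0^q * y + b1^q * y^(q^2) := by
      rw [hf y, hadd1, hadd1, hneg1, mul_pow, mul_pow, hr3q, hr1q]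
    have hE2 : (f y) ^ q^2 = -(y^(q^2)) + b0^(q^2) * y^q + b1^(q^2) * y^(q^3) := by
      rw [hf y, hadd _ _ 2, hadd _ _ 2, hneg _ 2, mul_pow, mul_pow, hr32, hr12]
    have hE3 : (f y) ^ q^3 = -(y^(q^3)) + b0^(q^3) * y^(q^2) + b1^(q^3) * y := by
      rw [hf y, hadd _ _ 3, hadd _ _ 3, hneg _ 3, mul_pow, mul_pow, hr33, hr13]
    fin_cases i <;> simp [hD, Fin.sum_univ_four, show ((3:Fin 4):ℕ) = 3 by rfl]
    · rw [hf y]; ring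
    · rw [hE1]; ring
    · rw [hE2]; ring
    · rw [hE3]; ring
  have hdick : Module.finrank Fq (LinearMap.ker f)
      = Module.finrank F (LinearMap.ker D.mulVecLin) :=
    dickson hq2 hq hF hadd f D hrow
  have hchar := kerD_char (q := q) b0 b1 hb0 D hD
  rw [hdick, hchar]
  -- substitution z = b0 / b1
  have hb0e : b0 = z * b1 := by rw [hz]; field_simp
  have hz0 : z ≠ 0 := by
    rw [hz]; exact div_ne_zero hb0 hb1
  have hbp : ∀ n : ℕ, b0 ^ n = z ^ n * b1 ^ n := fun n => by rw [hb0e, mul_pow]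
  -- the frobenius ring hom
  let σ : F →+* F :=
    { toFun := fun x => x ^ q
      map_one' := one_pow q
      map_mul' := fun x y => mul_pow x y q
      map_zero' := zero_pow (by simpa using hqn0 1)
      map_add' := hadd1 }
  have hσ : ∀ x : F, σ x = x ^ q := fun x => rfl
  have hr2q : ∀ y : F, (y ^ q ^ 2) ^ q = y ^ q ^ 3 := by
    intro y; rw [← pow_mul, show q^2 * q = q^3 by ring]
  -- membership ↔ equations
  have hmemA : D.mulVec ![b0, b0*b0^q, 0, 1 - b1*b0^q] = 0 ↔
      (b1 * b1^q * (z^q - z*z^q*z^(q^2)) = 1 ∧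
        z*(b1^(q^3)*b1) + z^q*(b1*b1^q) = 1) := by
    constructor
    · intro h
      have h2 := congrFun h 2
      have h3 := congrFun h 3
      simp [hD, Matrix.mulVec, dotProduct, Fin.sum_univ_four] at h2 h3
      simp only [hb0e, mul_pow] at h2 h3
      constructor
      · have key : b1^(q^2) * (b1 * b1^q * (z^q - z*z^q*z^(q^2)) - 1) = 0 := by
          linear_combination -h2
        rcases mul_eq_zero.mp key with h' | h'
        · exact absurd h' (pow_ne_zero _ hb1)
        · linear_combination h'
      · linear_combination h3
    · rintro ⟨e1, e3⟩
      funext i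
      fin_cases i <;>
        simp [hD, Matrix.mulVec, dotProduct, Fin.sum_univ_four, hb0e, mul_pow]
      · ring
      · ring
      · linear_combination (-(b1^(q^2))) * e1
      · linear_combination e3
  have hmemB : D.mulVec ![0, b0*b1^q, b0, -(b1*b1^q)] = 0 ↔
      (b1^q * b1^(q^2) * (z*z^(q^2) - 1) = z ∧
        z*z^(q^3)*(b1^(q^3)*b1) + b1*b1^q = 0) := by
    constructor
    · intro h
      have h2 := congrFun h 2
      have h3 := congrFun h 3
      simp [hD, Matrix.mulVec, dotProduct, Fin.sum_univ_four] at h2 h3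
      simp only [hb0e, mul_pow] at h2 h3
      constructor
      · have key : b1 * (b1^q * b1^(q^2) * (z*z^(q^2) - 1) - z) = 0 := by
          linear_combination h2
        rcases mul_eq_zero.mp key with h' | h'
        · exact absurd h' hb1
        · linear_combination h'
      · linear_combination h3
    · rintro ⟨e2, e4⟩
      funext i
      fin_cases i <;>
        simp [hD, Matrix.mulVec, dotProduct, Fin.sum_univ_four, hb0e, mul_pow]
      · ring
      · ring
      · linear_combination b1 * e2
      · linear_combination e4
  rw [hmemA, hmemB]
  -- now pure algebra
  constructor
  · constructor
    · rintro ⟨⟨e1, e3⟩, e2, e4⟩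
      have σe1 : b1^q * b1^(q^2) * (z^(q^2) - z^q*z^(q^2)*z^(q^3)) = 1 := by
        have := congrArg σ e1
        simp only [map_mul, map_sub, map_one] at this
        simp only [hσ, hr1q, hr2q, hr3q] at this
        linear_combination this
      have hN : z ^ (1 + q + q ^ 2 + q ^ 3) = 1 := by
        have hN0 : (b1^q*b1^(q^2)) * (1 - z*z^q*z^(q^2)*z^(q^3)) = 0 := by
          linear_combination z * σe1 - e2
        rcases mul_eq_zero.mp hN0 with h' | h'
        · exact absurd h' (mul_ne_zero (pow_ne_zero _ hb1) (pow_ne_zero _ hb1))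
        · linear_combination -h'
      refine ⟨hN, ?_⟩
      have e1' : b1^(q+1) * (z^q - z^(q^2+q+1)) = 1 := by linear_combination e1
      have hd0 : z^q - z^(q^2+q+1) ≠ 0 := by
        intro h0
        rw [h0, mul_zero] at e1'
        exact one_ne_zero e1'.symm
      rw [eq_div_iff hd0]
      exact e1'
    · rintro ⟨hN, hT⟩
      have hd0 : z^q - z^(q^2+q+1) ≠ 0 := by
        intro h0
        rw [h0] at hT
        simp only [div_zero] at hT
        exact hb1 (pow_eq_zero_iff (by omega : q + 1 ≠ 0) |>.mp hT)
      rw [eq_div_iff hd0] at hT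
      have e1 : b1 * b1^q * (z^q - z*z^q*z^(q^2)) = 1 := by linear_combination hT
      have σe1 : b1^q * b1^(q^2) * (z^(q^2) - z^q*z^(q^2)*z^(q^3)) = 1 := by
        have := congrArg σ e1
        simp only [map_mul, map_sub, map_one] at this
        simp only [hσ, hr1q, hr2q, hr3q] at this
        linear_combination this
      have σ2e1 : b1^(q^2) * b1^(q^3) * (z^(q^3) - z^(q^2)*z^(q^3)*z) = 1 := by
        have := congrArg σ σe1
        simp only [map_mul, map_sub, map_one] at this
        simp only [hσ, hr1q, hr2q, hr3q] at this
        linear_combination this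
      have σ3e1 : b1^(q^3) * b1 * (z - z^(q^3)*z*z^q) = 1 := by
        have := congrArg σ σ2e1
        simp only [map_mul, map_sub, map_one] at this
        simp only [hσ, hr1q, hr2q, hr3q] at this
        linear_combination this
      -- nonvanishing facts
      have hu0 : z*z^(q^2) - 1 ≠ 0 := by
        intro h0
        have : b1 * b1^q * (z^q - z*z^q*z^(q^2)) = 0 := by
          linear_combination (-(b1*b1^q*z^q)) * h0
        rw [e1] at this
        exact one_ne_zero this
      have hσu0 : z^q*z^(q^3) - 1 ≠ 0 := by
        intro h0
        have : b1^q * b1^(q^2) * (z^(q^2) - z^q*z^(q^2)*z^(q^3)) = 0 := by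
          linear_combination (-(b1^q*b1^(q^2)*z^(q^2))) * h0
        rw [σe1] at this
        exact one_ne_zero this
      -- the core identity
      have hcore : (z*z^(q^2) - 1) * (z^q*z^(q^3) - 1) + (z*z^(q^2) - 1) + (z^q*z^(q^3) - 1) = 0 := by
        have hw0 : z*z^(q^2) ≠ 0 := mul_ne_zero hz0 (pow_ne_zero _ hz0)
        have key : (z*z^(q^2)) * ((z*z^(q^2) - 1) * (z^q*z^(q^3) - 1) + (z*z^(q^2) - 1) + (z^q*z^(q^3) - 1)) = 0 := by
          linear_combination (z*z^(q^2) - 1) * hN + hN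
        rcases mul_eq_zero.mp key with h' | h'
        · exact absurd h' hw0
        · exact h'
      have hY : (b1^(q^3)*b1) * (z*(z^q*z^(q^3) - 1)) = -1 := by
        linear_combination -σ3e1
      have ht' : (b1*b1^q) * (z^q*(z*z^(q^2) - 1)) = -1 := by
        linear_combination -e1
      refine ⟨⟨e1, ?_⟩, ?_, ?_⟩
      · -- e3
        have hmul : (z*(b1^(q^3)*b1) + z^q*(b1*b1^q)) * ((z^q*z^(q^3) - 1)*(z*z^(q^2) - 1))
            = 1 * ((z^q*z^(q^3) - 1)*(z*z^(q^2) - 1)) := by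
          linear_combination (z*z^(q^2) - 1) * hY + (z^q*z^(q^3) - 1) * ht' - hcore
        exact mul_right_cancel₀ (mul_ne_zero hσu0 hu0) hmul
      · -- e2
        linear_combination z * σe1 + (b1^q*b1^(q^2)) * hN
      · -- e4
        have hmul : (z*z^(q^3)*(b1^(q^3)*b1) + b1*b1^q) * (z^q*(z*z^(q^2) - 1)*(z^q*z^(q^3) - 1))
            = 0 * (z^q*(z*z^(q^2) - 1)*(z^q*z^(q^3) - 1)) := by
          linear_combination (z^q*z^(q^3)*(z*z^(q^2)-1)) * hY + (z^q*z^(q^3)-1) * ht' - hcore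
        exact mul_right_cancel₀
          (mul_ne_zero (mul_ne_zero (pow_ne_zero _ hz0) hu0) hσu0) hmul
  · rintro ⟨hN, hT⟩ hcontra
    have hdz : z^q - z^(q^2+q+1) = 0 := by
      linear_combination (-(z^q)) * hcontra
    rw [hdz] at hT
    simp only [div_zero] at hT
    exact hb1 (pow_eq_zero_iff (by omega : q + 1 ≠ 0) |>.mp hT)
end

section
/- For each z ∈ F_{q⁴} with N_{q⁴/q}(z) = 1 and N_{q⁴/q²}(z) ≠ 1, there exist exactly q+1 elements b₁ ∈ F_{q⁴} such that f(x) = -x + b₀x^{q³} + b₁x^q with b₀ = zb₁ satisfies dim_{F_q} ker f = 2. -/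
open Polynomial Finset

namespace Stmt16

variable {F : Type*} [Field F] [Fintype F] [DecidableEq F]

private lemma card_roots_le (P : F[X]) (hP : P ≠ 0) :
    (univ.filter fun x : F => P.eval x = 0).card ≤ P.natDegree := by
  refine le_trans (Finset.card_le_card ?_) ((Multiset.toFinset_card_le _).trans P.card_roots')
  intro x hx
  simp only [mem_filter, mem_univ, true_and] at hx
  simpa [Polynomial.mem_roots, hP] using hx

private lemma count_pow_one {m r : ℕ} (hmr : m * r = Fintype.card F - 1) :
    (univ.filter fun x : F => x ^ m = 1 ∧ x ≠ 0).card = m := by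
  have hcard2 : 2 ≤ Fintype.card F := Fintype.one_lt_card
  have hm : m ≠ 0 := by rintro rfl; omega
  have hr : r ≠ 0 := by rintro rfl; omega
  have hmpos : 0 < m := Nat.pos_of_ne_zero hm
  -- upper bound
  have hub : (univ.filter fun x : F => x ^ m = 1 ∧ x ≠ 0).card ≤ m := by
    have h1 : (univ.filter fun x : F => x ^ m = 1 ∧ x ≠ 0).card
        ≤ (univ.filter fun x : F => (X ^ m - C 1 : F[X]).eval x = 0).card := by
      apply Finset.card_le_card
      intro x hx
      simp only [mem_filter, mem_univ, true_and] at *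
      simp [hx.1]
    calc _ ≤ _ := h1
      _ ≤ (X ^ m - C 1 : F[X]).natDegree :=
          card_roots_le _ (X_pow_sub_C_ne_zero hmpos 1)
      _ = m := natDegree_X_pow_sub_C
  -- lower bound
  have hGid : (∑ i ∈ range r, ((X : F[X]) ^ m) ^ i) * (X ^ m - 1) = X ^ (m * r) - 1 := by
    rw [geom_sum_mul, ← pow_mul]
  have hW : ((X : F[X]) ^ (m * r) - 1) ≠ 0 := by
    have : ((X : F[X]) ^ (m * r) - C 1) ≠ 0 := X_pow_sub_C_ne_zero (by positivity) 1
    simpa using this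
  have hXm : ((X : F[X]) ^ m - 1) ≠ 0 := by
    have : ((X : F[X]) ^ m - C 1) ≠ 0 := X_pow_sub_C_ne_zero hmpos 1
    simpa using this
  have hG : (∑ i ∈ range r, ((X : F[X]) ^ m) ^ i) ≠ 0 := by
    intro h; rw [h, zero_mul] at hGid; exact hW hGid.symm
  have hdegG : (∑ i ∈ range r, ((X : F[X]) ^ m) ^ i).natDegree = m * r - m := by
    have h2 := natDegree_mul hG hXm
    rw [hGid] at h2
    have h3 : ((X : F[X]) ^ (m * r) - 1).natDegree = m * r := by
      have : ((X : F[X]) ^ (m * r) - C 1).natDegree = m * r := natDegree_X_pow_sub_C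
      simpa using this
    have h4 : ((X : F[X]) ^ m - 1).natDegree = m := by
      have : ((X : F[X]) ^ m - C 1).natDegree = m := natDegree_X_pow_sub_C
      simpa using this
    omega
  have hsubset : (univ.filter fun x : F => x ≠ 0) ⊆
      (univ.filter fun x : F => x ^ m = 1 ∧ x ≠ 0) ∪
      (univ.filter fun x : F => (∑ i ∈ range r, ((X : F[X]) ^ m) ^ i).eval x = 0) := by
    intro x hx
    simp only [mem_filter, mem_univ, true_and] at hx
    have hx1 : x ^ (Fintype.card F - 1) = 1 := FiniteField.pow_card_sub_one_eq_one x hx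
    have : ((∑ i ∈ range r, ((X : F[X]) ^ m) ^ i) * (X ^ m - 1)).eval x = 0 := by
      rw [hGid]; simp only [eval_sub, eval_pow, eval_X, eval_one]
      rw [hmr, hx1, sub_self]
    rw [eval_mul, mul_eq_zero] at this
    rcases this with h | h
    · simp only [mem_union, mem_filter, mem_univ, true_and]; right; exact h
    · simp only [eval_sub, eval_pow, eval_X, eval_one, sub_eq_zero] at h
      simp only [mem_union, mem_filter, mem_univ, true_and]; left; exact ⟨h, hx⟩
  have hcardne : (univ.filter fun x : F => x ≠ 0).card = Fintype.card F - 1 := by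
    rw [Finset.filter_ne' univ 0, Finset.card_erase_of_mem (mem_univ 0), Finset.card_univ]
  have hlb := Finset.card_le_card hsubset
  have := Finset.card_union_le
      (univ.filter fun x : F => x ^ m = 1 ∧ x ≠ 0)
      (univ.filter fun x : F => (∑ i ∈ range r, ((X : F[X]) ^ m) ^ i).eval x = 0)
  have hGroots := card_roots_le _ hG
  rw [hdegG] at hGroots
  have hmlr : m ≤ m * r := Nat.le_mul_of_pos_right m (Nat.pos_of_ne_zero hr)
  omega

private lemma count_pow {m r : ℕ} (hmr : m * r = Fintype.card F - 1) (c : F) :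
    (univ.filter fun x : F => x ^ m = c ∧ x ≠ 0).card = if c ^ r = 1 then m else 0 := by
  have hcard2 : 2 ≤ Fintype.card F := Fintype.one_lt_card
  have hm : m ≠ 0 := by rintro rfl; omega
  have hr : r ≠ 0 := by rintro rfl; omega
  by_cases hc : c ^ r = 1
  · rw [if_pos hc]
    -- partition argument
    have hS : (univ.filter fun c : F => c ^ r = 1 ∧ c ≠ 0).card = r :=
      count_pow_one (by rw [mul_comm]; exact hmr)
    have hpart : (univ.filter fun x : F => x ≠ 0) =
        (univ.filter fun c : F => c ^ r = 1 ∧ c ≠ 0).biUnion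
          (fun c => univ.filter fun x : F => x ^ m = c ∧ x ≠ 0) := by
      ext x
      simp only [mem_filter, mem_univ, true_and, mem_biUnion]
      constructor
      · intro hx
        refine ⟨x ^ m, ⟨?_, pow_ne_zero m hx⟩, rfl, hx⟩
        rw [← pow_mul, hmr]; exact FiniteField.pow_card_sub_one_eq_one x hx
      · rintro ⟨c, _, _, hx⟩; exact hx
    have hdisj : ∀ a ∈ (univ.filter fun c : F => c ^ r = 1 ∧ c ≠ 0),
        ∀ b ∈ (univ.filter fun c : F => c ^ r = 1 ∧ c ≠ 0), a ≠ b →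
        Disjoint (univ.filter fun x : F => x ^ m = a ∧ x ≠ 0)
          (univ.filter fun x : F => x ^ m = b ∧ x ≠ 0) := by
      intro a _ b _ hab
      rw [Finset.disjoint_left]
      intro x hx1 hx2
      simp only [mem_filter, mem_univ, true_and] at hx1 hx2
      exact hab (hx1.1 ▸ hx2.1 ▸ rfl)
    have hcardne : (univ.filter fun x : F => x ≠ 0).card = Fintype.card F - 1 := by
      rw [Finset.filter_ne' univ 0, Finset.card_erase_of_mem (mem_univ 0), Finset.card_univ]
    have hsum : ∑ c ∈ (univ.filter fun c : F => c ^ r = 1 ∧ c ≠ 0),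
        (univ.filter fun x : F => x ^ m = c ∧ x ≠ 0).card = r * m := by
      rw [← Finset.card_biUnion hdisj, ← hpart, hcardne, ← hmr, mul_comm]
    have hub : ∀ c' : F, (univ.filter fun x : F => x ^ m = c' ∧ x ≠ 0).card ≤ m := by
      intro c'
      have h1 : (univ.filter fun x : F => x ^ m = c' ∧ x ≠ 0).card
          ≤ (univ.filter fun x : F => (X ^ m - C c' : F[X]).eval x = 0).card := by
        apply Finset.card_le_card
        intro x hx
        simp only [mem_filter, mem_univ, true_and] at *
        simp [hx.1]
      calc _ ≤ _ := h1
        _ ≤ (X ^ m - C c' : F[X]).natDegree :=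
            card_roots_le _ (X_pow_sub_C_ne_zero (Nat.pos_of_ne_zero hm) c')
        _ = m := natDegree_X_pow_sub_C
    have hall : ∀ c' ∈ (univ.filter fun c : F => c ^ r = 1 ∧ c ≠ 0),
        (univ.filter fun x : F => x ^ m = c' ∧ x ≠ 0).card = m := by
      by_contra hcon
      push_neg at hcon
      obtain ⟨c0, hc0S, hc0⟩ := hcon
      have hlt : ∑ c ∈ (univ.filter fun c : F => c ^ r = 1 ∧ c ≠ 0),
          (univ.filter fun x : F => x ^ m = c ∧ x ≠ 0).card <
          ∑ _c ∈ (univ.filter fun c : F => c ^ r = 1 ∧ c ≠ 0), m := by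
        apply Finset.sum_lt_sum (fun i _ => hub i)
        exact ⟨c0, hc0S, lt_of_le_of_ne (hub c0) hc0⟩
      rw [hsum, Finset.sum_const, hS, smul_eq_mul] at hlt
      omega
    have hcne : c ≠ 0 := by
      rintro rfl
      rw [zero_pow hr] at hc
      exact zero_ne_one hc
    exact hall c (by simp [hc, hcne])
  · rw [if_neg hc]
    rw [Finset.card_eq_zero, Finset.filter_eq_empty_iff]
    rintro x - ⟨hxm, hx0⟩
    apply hc
    rw [← hxm, ← pow_mul, hmr]
    exact FiniteField.pow_card_sub_one_eq_one x hx0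

section Alg

variable {F : Type*} [Field F] {q : ℕ}

private lemma neg_pow_q (hfr : ∀ a b : F, (a + b) ^ q = a ^ q + b ^ q) (hq0 : q ≠ 0) :
    (-1 : F) ^ q = -1 := by
  have h := hfr 1 (-1)
  rw [add_neg_cancel, one_pow, zero_pow hq0] at h
  linear_combination -h

private lemma sub_pow_q (hfr : ∀ a b : F, (a + b) ^ q = a ^ q + b ^ q) (hq0 : q ≠ 0)
    (a b : F) : (a - b) ^ q = a ^ q - b ^ q := by
  have h := hfr a (-b)
  have h2 : (-b : F) ^ q = -(b ^ q) := by
    rw [neg_eq_neg_one_mul b, mul_pow, neg_pow_q hfr hq0]; ring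
  rw [h2] at h
  rw [sub_eq_add_neg, h]; ring

/-- `l * (1 + z*l^q)^(q+1) = (l + z^q) * (1 + z*l^q)` for `l` in the norm-one group U. -/
private lemma psi_id (hfr : ∀ a b : F, (a + b) ^ q = a ^ q + b ^ q)
    {z l : F} (hU : l ^ (q ^ 2 + 1) = 1) :
    l * (1 + z * l ^ q) ^ (q + 1) = (l + z ^ q) * (1 + z * l ^ q) := by
  have h1 : (1 + z * l ^ q) ^ q = 1 + z ^ q * l ^ (q ^ 2) := by
    rw [hfr, one_pow, mul_pow, ← pow_mul, show q * q = q ^ 2 by ring]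
  have h2 : l * (1 + z * l ^ q) ^ q = l + z ^ q := by
    rw [h1]
    have h3 : l * (1 + z ^ q * l ^ (q ^ 2)) = l + z ^ q * l ^ (q ^ 2 + 1) := by ring
    rw [h3, hU, mul_one]
  calc l * (1 + z * l ^ q) ^ (q + 1) = (l * (1 + z * l ^ q) ^ q) * (1 + z * l ^ q) := by
        rw [pow_succ]; ring
    _ = (l + z ^ q) * (1 + z * l ^ q) := by rw [h2]

/-- `1 + z*l^q ≠ 0` for `l ∈ U`. -/
private lemma H_ne_zero (hfr : ∀ a b : F, (a + b) ^ q = a ^ q + b ^ q) (hq0 : q ≠ 0)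
    {z y l : F} (hy : z ^ (q ^ 2) * z = y) (hy1 : y ≠ 1)
    (hU : l ^ (q ^ 2 + 1) = 1) : 1 + z * l ^ q ≠ 0 := by
  intro h
  have hzl : z * l ^ q = -1 := by linear_combination h
  have h2 : (z * l ^ q) ^ (q ^ 2 + 1) = (-1 : F) ^ (q ^ 2 + 1) := by rw [hzl]
  have h3 : (z * l ^ q) ^ (q ^ 2 + 1) = y := by
    have e1 : (l ^ q) ^ (q ^ 2 + 1) = (l ^ (q ^ 2 + 1)) ^ q := by
      rw [← pow_mul, ← pow_mul, mul_comm]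
    rw [mul_pow, e1, hU, one_pow, mul_one, pow_succ, hy]
  have h4 : ((-1 : F) ^ q) ^ q = -1 := by rw [neg_pow_q hfr hq0, neg_pow_q hfr hq0]
  have h5 : (-1 : F) ^ (q ^ 2 + 1) = 1 := by
    rw [pow_succ, show q ^ 2 = q * q by ring, pow_mul, h4]; ring
  rw [h3, h5] at h2
  exact hy1 h2

/-- Uniqueness: two distinct elements of U with the same ψ-value force the value v₀. -/
private lemma Ylemma (hfr : ∀ a b : F, (a + b) ^ q = a ^ q + b ^ q) (hq0 : q ≠ 0)
    {z y l l' : F} (hy : z ^ (q ^ 2) * z = y) (hy1 : y ≠ 1)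
    (hU : l ^ (q ^ 2 + 1) = 1) (hU' : l' ^ (q ^ 2 + 1) = 1) (hne : l ≠ l')
    (hv : (l + z ^ q) * (1 + z * l ^ q) = (l' + z ^ q) * (1 + z * l' ^ q)) :
    (l + z ^ q) * (1 + z * l ^ q) = z ^ q * (1 - y) := by
  set G := l + z ^ q with hG
  set H' := 1 + z * l' ^ q with hH'
  set D := l - l' with hD
  have hD0 : D ≠ 0 := sub_ne_zero.mpr hne
  have hDq : D ^ q = l ^ q - l' ^ q := sub_pow_q hfr hq0 l l'
  have hE1 : D * H' + D ^ q * (z * G) = 0 := by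
    rw [hDq, hD, hG, hH']
    linear_combination hv
  have hGne : G ≠ 0 := by
    intro hG0
    have h0 : D * H' = 0 := by
      have := hE1
      rw [hG0, mul_zero, mul_zero, add_zero] at this
      exact this
    rcases mul_eq_zero.mp h0 with h | h
    · exact hD0 h
    · exact H_ne_zero hfr hq0 hy hy1 hU' h
  have hDq2 : D ^ (q ^ 2) = l ^ (q ^ 2) - l' ^ (q ^ 2) := by
    rw [show q ^ 2 = q * q by ring, pow_mul, pow_mul, pow_mul, hDq, sub_pow_q hfr hq0]
  have hE2 : D ^ (q ^ 2) * (l * l') = -D := by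
    have h1 : l ^ (q ^ 2) * l = 1 := by rw [← pow_succ]; exact hU
    have h2 : l' ^ (q ^ 2) * l' = 1 := by rw [← pow_succ]; exact hU'
    calc D ^ (q ^ 2) * (l * l') = (l ^ (q ^ 2) * l) * l' - (l' ^ (q ^ 2) * l') * l := by
          rw [hDq2]; ring
      _ = -D := by rw [h1, h2, hD]; ring
  -- raise E1 to the (q+1)st power
  have hE1' : D ^ q * (z * G) = -(D * H') := by linear_combination hE1
  have hm1 : (-1 : F) ^ (q + 1) = 1 := by rw [pow_succ, neg_pow_q hfr hq0]; ring
  have hE3 : (D ^ (q ^ 2) * D ^ q) * (z ^ (q + 1) * G ^ (q + 1))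
      = (D * D ^ q) * H' ^ (q + 1) := by
    have e1 : (D ^ q * (z * G)) ^ (q + 1) = (-(D * H')) ^ (q + 1) := by rw [hE1']
    have e2 : (D ^ q) ^ (q + 1) = D ^ (q ^ 2) * D ^ q := by
      rw [← pow_mul, show q * (q + 1) = q ^ 2 + q by ring, pow_add]
    have e3 : (-(D * H')) ^ (q + 1) = D ^ (q + 1) * H' ^ (q + 1) := by
      rw [neg_eq_neg_one_mul, mul_pow, mul_pow, hm1]; ring
    have e4 : D ^ (q + 1) = D * D ^ q := by rw [pow_succ]; ring
    rw [mul_pow, mul_pow, e2, e3, e4] at e1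
    linear_combination e1
  have key1 : D ^ (q ^ 2) * (z ^ (q + 1) * G ^ (q + 1)) = D * H' ^ (q + 1) := by
    apply mul_right_cancel₀ (pow_ne_zero q hD0)
    linear_combination hE3
  have key2 : -(z ^ (q + 1) * G ^ (q + 1)) = H' ^ (q + 1) * (l * l') := by
    apply mul_right_cancel₀ hD0
    linear_combination -(z ^ (q + 1) * G ^ (q + 1)) * hE2 + (l * l') * key1
  have hpsi' : l' * H' ^ (q + 1) = (l' + z ^ q) * H' := psi_id hfr hU'
  have key3 : H' ^ (q + 1) * (l * l') = (G * (1 + z * l ^ q)) * l := by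
    calc H' ^ (q + 1) * (l * l') = (l' * H' ^ (q + 1)) * l := by ring
      _ = ((l' + z ^ q) * H') * l := by rw [hpsi']
      _ = (G * (1 + z * l ^ q)) * l := by rw [hH', ← hv, hG]
  have key4 : (G * (1 + z * l ^ q)) * l = -(z ^ (q + 1) * G ^ (q + 1)) := by
    rw [← key3, key2]
  have hGq : G ^ q = l ^ q + z ^ (q ^ 2) := by
    rw [hG, hfr, ← pow_mul, show q * q = q ^ 2 by ring]
  have hGq1 : G ^ (q + 1) = (l ^ q + z ^ (q ^ 2)) * G := by rw [pow_succ, hGq]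
  -- final cancellation
  apply mul_right_cancel₀ hGne
  have expand : (G * (1 + z * l ^ q)) * G
      = (G * (1 + z * l ^ q)) * l + z ^ q * G + z ^ (q + 1) * l ^ q * G := by
    rw [hG]; ring
  rw [expand, key4, hGq1]
  have hzz : z ^ (q + 1) * z ^ (q ^ 2) = z ^ q * y := by
    rw [← hy, pow_succ]; ring
  linear_combination -G * hzz

end Alg

section Poly

variable {F : Type*} [Field F] {q : ℕ}

private lemma keyP_eq (z y : F) :
    C z * X ^ q * (X + C (z ^ q)) + (X + C (z ^ q) * C y)
      = C z * X ^ (q + 1) + C (z * z ^ q) * X ^ q + X + C (z ^ q) * C y := by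
  rw [C_mul]; ring

private lemma keyP_natDegree (hq0 : q ≠ 0) {z : F} (hz0 : z ≠ 0) (y : F) :
    (C z * X ^ q * (X + C (z ^ q)) + (X + C (z ^ q) * C y) : F[X]).natDegree = q + 1 := by
  have hle : (C z * X ^ q * (X + C (z ^ q)) + (X + C (z ^ q) * C y) : F[X]).natDegree ≤ q + 1 := by
    rw [keyP_eq]
    apply le_trans (natDegree_add_le _ _)
    apply max_le
    · apply le_trans (natDegree_add_le _ _)
      apply max_le
      · apply le_trans (natDegree_add_le _ _)
        apply max_le
        · exact le_trans (natDegree_C_mul_le _ _) (by rw [natDegree_X_pow])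
        · exact le_trans (natDegree_C_mul_le _ _) (by rw [natDegree_X_pow]; omega)
      · exact le_trans natDegree_X_le (by omega)
    · exact le_trans (natDegree_C_mul_le _ _) (by rw [natDegree_C]; omega)
  have hcoeff : (C z * X ^ q * (X + C (z ^ q)) + (X + C (z ^ q) * C y) : F[X]).coeff (q + 1) = z := by
    rw [keyP_eq]
    rw [coeff_add, coeff_add, coeff_add, coeff_C_mul, coeff_C_mul, coeff_X_pow, coeff_X_pow]
    rw [if_pos rfl, if_neg (by omega), coeff_X, if_neg (by omega), ← C_mul, coeff_C,
      if_neg (by omega)]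
    ring
  exact natDegree_eq_of_le_of_coeff_ne_zero hle (by rw [hcoeff]; exact hz0)

private lemma keyP_ne_zero (hq0 : q ≠ 0) {z : F} (hz0 : z ≠ 0) (y : F) :
    (C z * X ^ q * (X + C (z ^ q)) + (X + C (z ^ q) * C y) : F[X]) ≠ 0 := by
  intro h
  have := keyP_natDegree hq0 hz0 y (F := F)
  rw [h] at this
  simp only [natDegree_zero] at this
  omega

private lemma keyP_dvd (hq0 : q ≠ 0)
    (hfrP : ∀ a b : F[X], (a + b) ^ q = a ^ q + b ^ q)
    {z y : F} (hy : z ^ (q ^ 2) * z = y) (hyq : y * y ^ q = 1)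
    (hz0 : z ≠ 0) (hy1 : y ≠ 1) :
    (C z * X ^ q * (X + C (z ^ q)) + (X + C (z ^ q) * C y)) ∣ (X ^ (q ^ 2 + 1) - 1 : F[X]) := by
  have hCy : C z * C (z ^ (q ^ 2)) = (C y : F[X]) := by
    rw [← C_mul, ← hy, mul_comm]
  have hCyq : C y * C (y ^ q) = (1 : F[X]) := by
    rw [← C_mul, hyq, C_1]
  -- Frobenius computation of P^q
  have hPq : (C z * X ^ q * (X + C (z ^ q)) + (X + C (z ^ q) * C y) : F[X]) ^ q
      = C (z ^ q) * X ^ (q ^ 2) * (X ^ q + C (z ^ (q ^ 2)))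
        + (X ^ q + C (z ^ (q ^ 2)) * C (y ^ q)) := by
    rw [hfrP]
    congr 1
    · rw [mul_pow, mul_pow, ← C_pow, ← pow_mul, hfrP, ← C_pow, ← pow_mul,
        show q * q = q ^ 2 by ring]
    · rw [hfrP, mul_pow, ← C_pow, ← C_pow, ← pow_mul, show q * q = q ^ 2 by ring]
  -- the two middle congruence steps
  have step2 : C z * (X + C (z ^ q)) * (X ^ q + C (z ^ (q ^ 2)))
      = (C z * X ^ q * (X + C (z ^ q)) + (X + C (z ^ q) * C y)) + (C y - 1) * X := by
    linear_combination (X + C (z ^ q)) * hCy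
  have step3 : C z * (X + C (z ^ q)) * (X ^ q + C (z ^ (q ^ 2)) * C (y ^ q))
      = (C z * X ^ q * (X + C (z ^ q)) + (X + C (z ^ q) * C y)) + C (z ^ q) * (1 - C y) := by
    linear_combination ((X + C (z ^ q)) * C (y ^ q)) * hCy + (X + C (z ^ q)) * hCyq
  -- assemble the explicit factorization
  have hPP : (C z * X ^ q * (X + C (z ^ q)) + (X + C (z ^ q) * C y))
      * (C z * (X + C (z ^ q)) * (C z * X ^ q * (X + C (z ^ q)) + (X + C (z ^ q) * C y)) ^ (q - 1))
      = C z * (X + C (z ^ q))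
        * (C z * X ^ q * (X + C (z ^ q)) + (X + C (z ^ q) * C y)) ^ q := by
    have hq1 : (C z * X ^ q * (X + C (z ^ q)) + (X + C (z ^ q) * C y) : F[X]) ^ (q - 1)
        * (C z * X ^ q * (X + C (z ^ q)) + (X + C (z ^ q) * C y))
        = (C z * X ^ q * (X + C (z ^ q)) + (X + C (z ^ q) * C y)) ^ q := by
      rw [← pow_succ]; congr 1; omega
    calc _ = C z * (X + C (z ^ q)) *
          ((C z * X ^ q * (X + C (z ^ q)) + (X + C (z ^ q) * C y)) ^ (q - 1)
            * (C z * X ^ q * (X + C (z ^ q)) + (X + C (z ^ q) * C y))) := by ring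
      _ = _ := by rw [hq1]
  have hid : (C z * X ^ q * (X + C (z ^ q)) + (X + C (z ^ q) * C y))
      * (C z * (X + C (z ^ q)) * (C z * X ^ q * (X + C (z ^ q)) + (X + C (z ^ q) * C y)) ^ (q - 1)
          - 1 - C (z ^ q) * X ^ (q ^ 2))
      = (C (z ^ q) * (C y - 1)) * (X ^ (q ^ 2 + 1) - 1) := by
    rw [mul_sub, mul_sub, hPP, hPq, pow_succ (X : F[X]) (q ^ 2)]
    linear_combination (C (z ^ q) * X ^ (q ^ 2)) * step2 + step3
  have hdvd0 : (C z * X ^ q * (X + C (z ^ q)) + (X + C (z ^ q) * C y))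
      ∣ (C (z ^ q) * (C y - 1)) * (X ^ (q ^ 2 + 1) - 1) := ⟨_, hid.symm⟩
  have hunit : IsUnit (C (z ^ q) * (C y - 1) : F[X]) := by
    have : (C (z ^ q) * (C y - 1) : F[X]) = C (z ^ q * (y - 1)) := by
      rw [C_mul, C_sub, C_1]
    rw [this]
    refine Polynomial.isUnit_C.mpr (isUnit_iff_ne_zero.mpr ?_)
    exact mul_ne_zero (pow_ne_zero q hz0) (sub_ne_zero.mpr hy1)
  exact (IsUnit.dvd_mul_left hunit).mp hdvd0

end Poly

section Roots

variable {F : Type*} [Field F] [Fintype F] [DecidableEq F] {q : ℕ}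

private lemma keyP_eval (z y l : F) :
    (C z * X ^ q * (X + C (z ^ q)) + (X + C (z ^ q) * C y)).eval l
      = z * l ^ q * (l + z ^ q) + (l + z ^ q * y) := by
  simp [eval_add, eval_mul, eval_pow]

/-- Every root of P lies in U. -/
private lemma keyP_root_in_U (hq0 : q ≠ 0)
    (hfrP : ∀ a b : F[X], (a + b) ^ q = a ^ q + b ^ q)
    {z y : F} (hy : z ^ (q ^ 2) * z = y) (hyq : y * y ^ q = 1)
    (hz0 : z ≠ 0) (hy1 : y ≠ 1) {l : F}
    (hl : z * l ^ q * (l + z ^ q) + (l + z ^ q * y) = 0) : l ^ (q ^ 2 + 1) = 1 := by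
  obtain ⟨R0, hR0⟩ := keyP_dvd hq0 hfrP hy hyq hz0 hy1
  have hev : (X ^ (q ^ 2 + 1) - 1 : F[X]).eval l = 0 := by
    rw [hR0, eval_mul, keyP_eval, hl, zero_mul]
  simp only [eval_sub, eval_pow, eval_X, eval_one, sub_eq_zero] at hev
  exact hev

/-- P has exactly q+1 roots. -/
private lemma keyP_card_roots (hq0 : q ≠ 0)
    (hfrP : ∀ a b : F[X], (a + b) ^ q = a ^ q + b ^ q)
    (hcard : Fintype.card F = q ^ 4)
    {z y : F} (hy : z ^ (q ^ 2) * z = y) (hyq : y * y ^ q = 1)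
    (hz0 : z ≠ 0) (hy1 : y ≠ 1) :
    (univ.filter fun l : F => z * l ^ q * (l + z ^ q) + (l + z ^ q * y) = 0).card = q + 1 := by
  obtain ⟨R0, hR0⟩ := keyP_dvd hq0 hfrP hy hyq hz0 hy1
  have hq1 : 1 ≤ q := Nat.pos_of_ne_zero hq0
  -- U has q^2+1 elements
  have hUcard : (univ.filter fun l : F => l ^ (q ^ 2 + 1) = 1).card = q ^ 2 + 1 := by
    have hmr : (q ^ 2 + 1) * (q ^ 2 - 1) = Fintype.card F - 1 := by
      rw [hcard]
      have h2 : 1 ≤ q ^ 2 := Nat.one_le_pow _ _ (Nat.pos_of_ne_zero hq0)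
      obtain ⟨m, hm⟩ := Nat.exists_eq_add_of_le h2
      rw [show q ^ 4 = q ^ 2 * q ^ 2 by ring, hm]
      have e1 : (1 + m + 1) * (1 + m - 1) = m * m + 2 * m := by
        rw [Nat.add_sub_cancel_left]; ring
      have e2 : (1 + m) * (1 + m) = m * m + 2 * m + 1 := by ring
      omega
    have h0 := count_pow_one (F := F) hmr
    have hset : (univ.filter fun l : F => l ^ (q ^ 2 + 1) = 1)
        = (univ.filter fun x : F => x ^ (q ^ 2 + 1) = 1 ∧ x ≠ 0) := by
      ext x
      simp only [mem_filter, mem_univ, true_and]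
      refine ⟨fun hx => ⟨hx, fun h0x => ?_⟩, fun hx => hx.1⟩
      rw [h0x, zero_pow (by omega : q ^ 2 + 1 ≠ 0)] at hx
      exact zero_ne_one hx
    rw [hset, h0]
  -- degrees
  have hW0 : (X ^ (q ^ 2 + 1) - 1 : F[X]) ≠ 0 := by
    have : (X ^ (q ^ 2 + 1) - C 1 : F[X]) ≠ 0 := X_pow_sub_C_ne_zero (by omega) 1
    simpa using this
  have hWdeg : (X ^ (q ^ 2 + 1) - 1 : F[X]).natDegree = q ^ 2 + 1 := by
    have : (X ^ (q ^ 2 + 1) - C 1 : F[X]).natDegree = q ^ 2 + 1 := natDegree_X_pow_sub_C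
    simpa using this
  have hP0 := keyP_ne_zero hq0 hz0 y (q := q) (F := F)
  have hPdeg := keyP_natDegree hq0 hz0 y (q := q) (F := F)
  have hR0ne : R0 ≠ 0 := by
    intro h
    rw [h, mul_zero] at hR0
    exact hW0 hR0
  have hR0deg : R0.natDegree = q ^ 2 - q := by
    have h1 := natDegree_mul hP0 hR0ne
    rw [← hR0, hWdeg, hPdeg] at h1
    have : 1 ≤ q ^ 2 := Nat.one_le_pow _ _ (Nat.pos_of_ne_zero hq0)
    have hqq : q ≤ q ^ 2 := by nlinarith
    omega
  -- counting
  have hsub : (univ.filter fun l : F => l ^ (q ^ 2 + 1) = 1) ⊆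
      (univ.filter fun l : F => z * l ^ q * (l + z ^ q) + (l + z ^ q * y) = 0) ∪
      (univ.filter fun l : F => R0.eval l = 0) := by
    intro l hl
    simp only [mem_filter, mem_univ, true_and] at hl
    have : ((X ^ (q ^ 2 + 1) - 1 : F[X])).eval l = 0 := by
      simp [hl]
    rw [hR0, eval_mul, mul_eq_zero] at this
    simp only [mem_union, mem_filter, mem_univ, true_and]
    rcases this with h | h
    · left; rw [← keyP_eval]; exact h
    · right; exact h
  have hcard1 := Finset.card_le_card hsub
  have hcard2 := Finset.card_union_le
      (univ.filter fun l : F => z * l ^ q * (l + z ^ q) + (l + z ^ q * y) = 0)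
      (univ.filter fun l : F => R0.eval l = 0)
  have hcard3 : (univ.filter fun l : F => R0.eval l = 0).card ≤ q ^ 2 - q := by
    rw [← hR0deg]; exact card_roots_le R0 hR0ne
  have hcard4 : (univ.filter fun l : F => z * l ^ q * (l + z ^ q) + (l + z ^ q * y) = 0).card
      ≤ q + 1 := by
    have h1 : (univ.filter fun l : F => z * l ^ q * (l + z ^ q) + (l + z ^ q * y) = 0)
        = (univ.filter fun l : F =>
            (C z * X ^ q * (X + C (z ^ q)) + (X + C (z ^ q) * C y)).eval l = 0) := by
      apply Finset.filter_congr
      intro l _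
      rw [keyP_eval]
    rw [h1, ← hPdeg]
    exact card_roots_le _ hP0
  have hqq : q ≤ q ^ 2 := by nlinarith [Nat.pos_of_ne_zero hq0]
  rw [hUcard] at hcard1
  omega

end Roots

section Ker

variable {F : Type*} [Field F] [Fintype F] [DecidableEq F] {q : ℕ}

private lemma ker_card (hq2 : 2 ≤ q) (hcard : Fintype.card F = q ^ 4)
    (hfr : ∀ a b : F, (a + b) ^ q = a ^ q + b ^ q)
    {z y b : F} (hy : z ^ (q ^ 2) * z = y) (hy1 : y ≠ 1) (hb : b ≠ 0) :
    (univ.filter fun x : F => -x + (z * b) * x ^ (q ^ 3) + b * x ^ q = 0).card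
      = 1 + (q - 1) * (univ.filter fun l : F =>
          l ^ (q ^ 2 + 1) = 1 ∧ b ^ (q + 1) * ((l + z ^ q) * (1 + z * l ^ q)) = 1).card := by
  have hq0 : q ≠ 0 := by omega
  have hq2pos : 1 ≤ q ^ 2 := Nat.one_le_pow _ _ (by omega)
  have hq4pos : 1 ≤ q ^ 4 := Nat.one_le_pow _ _ (by omega)
  have hqsq : (q ^ 2 - 1) * (q ^ 2 + 1) = q ^ 4 - 1 := by
    zify [hq2pos, hq4pos]; ring
  have hqpm : (q - 1) * (q + 1) = q ^ 2 - 1 := by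
    zify [hq2pos, (by omega : 1 ≤ q)]; ring
  have hmr : (q - 1) * ((q + 1) * (q ^ 2 + 1)) = Fintype.card F - 1 := by
    rw [hcard, ← mul_assoc, hqpm, hqsq]
  -- basic exponent juggling
  have hx2 : ∀ x : F, x ^ (q ^ 2) = (x ^ q) ^ q := fun x => by
    rw [← pow_mul, show q * q = q ^ 2 by ring]
  have hx3 : ∀ x : F, x ^ (q ^ 3) = (x ^ (q ^ 2)) ^ q := fun x => by
    rw [← pow_mul, show q ^ 2 * q = q ^ 3 by ring]
  -- for nonzero x in the kernel, the line data
  have hker_data : ∀ x : F, x ≠ 0 → (-x + (z * b) * x ^ (q ^ 3) + b * x ^ q = 0) →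
      (x ^ (q ^ 2 - 1)) ^ (q ^ 2 + 1) = 1 ∧
      x ^ (q - 1) * (b * (1 + z * (x ^ (q ^ 2 - 1)) ^ q)) = 1 := by
    intro x hx0 hker
    have hx41 : x ^ (q ^ 4 - 1) = 1 := by
      rw [← hcard]; exact FiniteField.pow_card_sub_one_eq_one x hx0
    have hU : (x ^ (q ^ 2 - 1)) ^ (q ^ 2 + 1) = 1 := by
      rw [← pow_mul, hqsq, hx41]
    refine ⟨hU, ?_⟩
    set l := x ^ (q ^ 2 - 1) with hl
    have hxq2 : x ^ (q ^ 2) = l * x := by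
      rw [hl, ← pow_succ]
      congr 1
      omega
    have hxq3 : x ^ (q ^ 3) = l ^ q * x ^ q := by
      rw [hx3, hxq2, mul_pow]
    have hxc : x = (b * (1 + z * l ^ q)) * x ^ q := by
      rw [hxq3] at hker
      linear_combination -hker
    have hc0 : b * (1 + z * l ^ q) ≠ 0 := by
      intro h
      rw [h, zero_mul] at hxc
      exact hx0 hxc
    apply mul_right_cancel₀ hx0
    rw [one_mul]
    calc x ^ (q - 1) * (b * (1 + z * l ^ q)) * x
        = (b * (1 + z * l ^ q)) * (x ^ (q - 1) * x) := by ring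
      _ = (b * (1 + z * l ^ q)) * x ^ q := by
          rw [← pow_succ]
          congr 2
          omega
      _ = x := hxc.symm
  -- conversely, fiber elements are in the kernel
  have hfib_ker : ∀ l x : F, l ^ (q ^ 2 + 1) = 1 →
      b ^ (q + 1) * ((l + z ^ q) * (1 + z * l ^ q)) = 1 →
      x ^ (q - 1) = (b * (1 + z * l ^ q))⁻¹ → x ≠ 0 →
      (-x + (z * b) * x ^ (q ^ 3) + b * x ^ q = 0) ∧ x ^ (q ^ 2 - 1) = l := by
    intro l x hU hSb hxf hx0
    have hcl : (b * (1 + z * l ^ q)) ^ (q + 1) * l = 1 := by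
      have hpsi := psi_id hfr (z := z) (l := l) hU
      rw [mul_pow]
      calc b ^ (q + 1) * (1 + z * l ^ q) ^ (q + 1) * l
          = b ^ (q + 1) * (l * (1 + z * l ^ q) ^ (q + 1)) := by ring
        _ = b ^ (q + 1) * ((l + z ^ q) * (1 + z * l ^ q)) := by rw [hpsi]
        _ = 1 := hSb
    have hc0 : b * (1 + z * l ^ q) ≠ 0 := by
      intro h
      rw [h] at hcl
      rw [zero_pow (by omega : q + 1 ≠ 0), zero_mul] at hcl
      exact zero_ne_one hcl
    have hxq1 : x ^ (q - 1) * (b * (1 + z * l ^ q)) = 1 := by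
      rw [hxf, inv_mul_cancel₀ hc0]
    -- x^(q^2-1) = l
    have hxl : x ^ (q ^ 2 - 1) = l := by
      have h1 : (x ^ (q - 1)) ^ (q + 1) = x ^ (q ^ 2 - 1) := by
        rw [← pow_mul, hqpm]
      have h2 : (x ^ (q - 1) * (b * (1 + z * l ^ q))) ^ (q + 1) = 1 := by
        rw [hxq1, one_pow]
      rw [mul_pow, h1] at h2
      -- x^(q^2-1) * c^(q+1) = 1 = c^(q+1) * l
      have h3 : x ^ (q ^ 2 - 1) * (b * (1 + z * l ^ q)) ^ (q + 1)
          = l * (b * (1 + z * l ^ q)) ^ (q + 1) := by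
        rw [h2]; linear_combination -hcl
      exact mul_right_cancel₀ (pow_ne_zero _ hc0) h3
    refine ⟨?_, hxl⟩
    have h4 : x ^ (q - 1) * x = x ^ q := by
      rw [← pow_succ]; congr 1; omega
    have hxq : (b * (1 + z * l ^ q)) * x ^ q = x := by
      calc (b * (1 + z * l ^ q)) * x ^ q
          = (b * (1 + z * l ^ q)) * (x ^ (q - 1) * x) := by rw [h4]
        _ = (x ^ (q - 1) * (b * (1 + z * l ^ q))) * x := by ring
        _ = x := by rw [hxq1, one_mul]
    have hxq2 : x ^ (q ^ 2) = l * x := by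
      have h5 : x ^ (q ^ 2) = x ^ (q ^ 2 - 1) * x := by rw [← pow_succ]; congr 1; omega
      rw [h5, hxl]
    have hxq3 : x ^ (q ^ 3) = l ^ q * x ^ q := by rw [hx3, hxq2, mul_pow]
    rw [hxq3]
    linear_combination hxq
  -- now the counting
  have hinsert : (univ.filter fun x : F => -x + (z * b) * x ^ (q ^ 3) + b * x ^ q = 0)
      = insert 0 (univ.filter fun x : F =>
          (-x + (z * b) * x ^ (q ^ 3) + b * x ^ q = 0) ∧ x ≠ 0) := by
    ext x
    simp only [mem_filter, mem_univ, true_and, mem_insert]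
    constructor
    · intro hx
      by_cases h : x = 0
      · left; exact h
      · right; exact ⟨hx, h⟩
    · rintro (rfl | ⟨hx, -⟩)
      · rw [zero_pow (pow_ne_zero 3 hq0), zero_pow hq0]; ring
      · exact hx
  have hbiUnion : (univ.filter fun x : F =>
        (-x + (z * b) * x ^ (q ^ 3) + b * x ^ q = 0) ∧ x ≠ 0)
      = (univ.filter fun l : F =>
          l ^ (q ^ 2 + 1) = 1 ∧ b ^ (q + 1) * ((l + z ^ q) * (1 + z * l ^ q)) = 1).biUnion
        (fun l => univ.filter fun x : F =>
          x ^ (q - 1) = (b * (1 + z * l ^ q))⁻¹ ∧ x ≠ 0) := by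
    ext x
    simp only [mem_filter, mem_univ, true_and, mem_biUnion]
    constructor
    · rintro ⟨hker, hx0⟩
      obtain ⟨hU, hfib⟩ := hker_data x hx0 hker
      refine ⟨x ^ (q ^ 2 - 1), ⟨hU, ?_⟩, ?_, hx0⟩
      · -- b^(q+1) * ψ(l) = 1
        set l := x ^ (q ^ 2 - 1) with hl
        have h1 : (x ^ (q - 1)) ^ (q + 1) = l := by
          rw [← pow_mul, hqpm]
        have h2 : (x ^ (q - 1) * (b * (1 + z * l ^ q))) ^ (q + 1) = 1 := by
          rw [hfib, one_pow]
        rw [mul_pow, h1, mul_pow] at h2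
        have hpsi := psi_id hfr (z := z) (l := l) hU
        calc b ^ (q + 1) * ((l + z ^ q) * (1 + z * l ^ q))
            = b ^ (q + 1) * (l * (1 + z * l ^ q) ^ (q + 1)) := by rw [hpsi]
          _ = l * (b ^ (q + 1) * (1 + z * l ^ q) ^ (q + 1)) := by ring
          _ = 1 := by linear_combination h2
      · -- x^(q-1) = c⁻¹
        exact eq_inv_of_mul_eq_one_left hfib
    · rintro ⟨l, hlSb, hxf, hx0⟩
      exact ⟨(hfib_ker l x hlSb.1 hlSb.2 hxf hx0).1, hx0⟩
  have hdisj : ∀ l₁ ∈ (univ.filter fun l : F =>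
        l ^ (q ^ 2 + 1) = 1 ∧ b ^ (q + 1) * ((l + z ^ q) * (1 + z * l ^ q)) = 1),
      ∀ l₂ ∈ (univ.filter fun l : F =>
        l ^ (q ^ 2 + 1) = 1 ∧ b ^ (q + 1) * ((l + z ^ q) * (1 + z * l ^ q)) = 1),
      l₁ ≠ l₂ →
      Disjoint (univ.filter fun x : F => x ^ (q - 1) = (b * (1 + z * l₁ ^ q))⁻¹ ∧ x ≠ 0)
        (univ.filter fun x : F => x ^ (q - 1) = (b * (1 + z * l₂ ^ q))⁻¹ ∧ x ≠ 0) := by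
    intro l₁ hl₁ l₂ hl₂ hne
    rw [Finset.disjoint_left]
    intro x hx1 hx2
    simp only [mem_filter, mem_univ, true_and] at hl₁ hl₂ hx1 hx2
    have h1 := (hfib_ker l₁ x hl₁.1 hl₁.2 hx1.1 hx1.2).2
    have h2 := (hfib_ker l₂ x hl₂.1 hl₂.2 hx2.1 hx2.2).2
    exact hne (h1 ▸ h2 ▸ rfl)
  have hfibcard : ∀ l ∈ (univ.filter fun l : F =>
        l ^ (q ^ 2 + 1) = 1 ∧ b ^ (q + 1) * ((l + z ^ q) * (1 + z * l ^ q)) = 1),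
      (univ.filter fun x : F => x ^ (q - 1) = (b * (1 + z * l ^ q))⁻¹ ∧ x ≠ 0).card = q - 1 := by
    intro l hl
    simp only [mem_filter, mem_univ, true_and] at hl
    have hcl : (b * (1 + z * l ^ q)) ^ (q + 1) * l = 1 := by
      have hpsi := psi_id hfr (z := z) (l := l) hl.1
      rw [mul_pow]
      calc b ^ (q + 1) * (1 + z * l ^ q) ^ (q + 1) * l
          = b ^ (q + 1) * (l * (1 + z * l ^ q) ^ (q + 1)) := by ring
        _ = b ^ (q + 1) * ((l + z ^ q) * (1 + z * l ^ q)) := by rw [hpsi]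
        _ = 1 := hl.2
    have hc0 : b * (1 + z * l ^ q) ≠ 0 := by
      intro h
      rw [h, zero_pow (by omega : q + 1 ≠ 0), zero_mul] at hcl
      exact zero_ne_one hcl
    have hcrit : ((b * (1 + z * l ^ q))⁻¹) ^ ((q + 1) * (q ^ 2 + 1)) = 1 := by
      rw [inv_pow, inv_eq_one]
      calc (b * (1 + z * l ^ q)) ^ ((q + 1) * (q ^ 2 + 1))
          = ((b * (1 + z * l ^ q)) ^ (q + 1)) ^ (q ^ 2 + 1) := by rw [pow_mul]
        _ = ((b * (1 + z * l ^ q)) ^ (q + 1)) ^ (q ^ 2 + 1) * (l ^ (q ^ 2 + 1)) := by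
            rw [hl.1, mul_one]
        _ = (((b * (1 + z * l ^ q)) ^ (q + 1)) * l) ^ (q ^ 2 + 1) := by rw [← mul_pow]
        _ = 1 := by rw [hcl, one_pow]
    have := count_pow (F := F) hmr ((b * (1 + z * l ^ q))⁻¹)
    rw [if_pos hcrit] at this
    exact this
  rw [hinsert, Finset.card_insert_of_notMem (by simp), hbiUnion,
    Finset.card_biUnion hdisj, Finset.sum_congr rfl hfibcard, Finset.sum_const, smul_eq_mul]
  ring

end Ker

end Stmt16

open Stmt16 Polynomial Finset in
theorem stmt_16 (q : ℕ) (Fq F : Type*) [Field Fq] [Field F] [Algebra Fq F]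
    [Fintype Fq] [Fintype F]
    (hq : Fintype.card Fq = q) (hF : Fintype.card F = q ^ 4)
    (z : F) (hzN : z ^ (1 + q + q ^ 2 + q ^ 3) = 1) (hzN2 : z ^ (q ^ 2 + 1) ≠ 1) :
    Set.ncard {b1 : F | ∃ f : F →ₗ[Fq] F,
        (∀ x, f x = -x + (z * b1) * x ^ q ^ 3 + b1 * x ^ q) ∧
        Module.finrank Fq (LinearMap.ker f) = 2} = q + 1 := by
  classical
  have hq2 : 2 ≤ q := by rw [← hq]; exact Fintype.one_lt_card
  have hq0 : q ≠ 0 := by omega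
  -- characteristic and Frobenius
  obtain ⟨k, pp, hcardq⟩ := FiniteField.card Fq (ringChar Fq)
  haveI : Fact (ringChar Fq).Prime := ⟨pp⟩
  haveI : CharP F (ringChar Fq) :=
    charP_of_injective_ringHom (algebraMap Fq F).injective (ringChar Fq)
  haveI : CharP (Polynomial F) (ringChar Fq) :=
    charP_of_injective_ringHom (Polynomial.C_injective (R := F)) (ringChar Fq)
  have hqpk : q = ringChar Fq ^ (k : ℕ) := by rw [← hq, hcardq]
  have hfr : ∀ a b : F, (a + b) ^ q = a ^ q + b ^ q := by
    intro a b; rw [hqpk]; exact add_pow_char_pow a b (ringChar Fq) k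
  have hfrP : ∀ a b : F[X], (a + b) ^ q = a ^ q + b ^ q := by
    intro a b; rw [hqpk]; exact add_pow_char_pow a b (ringChar Fq) k
  have halg : ∀ c : Fq, (algebraMap Fq F c) ^ q = algebraMap Fq F c := by
    intro c; rw [← map_pow]; congr 1; rw [← hq]; exact FiniteField.pow_card c
  -- z and y facts
  have hz0 : z ≠ 0 := by
    intro h
    rw [h, zero_pow (by positivity : 1 + q + q ^ 2 + q ^ 3 ≠ 0)] at hzN
    exact zero_ne_one hzN
  obtain ⟨y, hy'⟩ : ∃ y : F, y = z ^ (q ^ 2 + 1) := ⟨_, rfl⟩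
  have hy : z ^ (q ^ 2) * z = y := by rw [hy', pow_succ z (q ^ 2)]
  have hy1 : y ≠ 1 := by rw [hy']; exact hzN2
  have hyq : y * y ^ q = 1 := by
    rw [hy', ← pow_mul, ← pow_add,
      show q ^ 2 + 1 + (q ^ 2 + 1) * q = 1 + q + q ^ 2 + q ^ 3 by ring]
    exact hzN
  have hy0 : y ≠ 0 := by
    intro h
    rw [h, zero_mul] at hyq
    exact zero_ne_one hyq
  have hg0 : (1 : F) - y ≠ 0 := sub_ne_zero.mpr (Ne.symm hy1)
  have hv00 : z ^ q * (1 - y) ≠ 0 := mul_ne_zero (pow_ne_zero _ hz0) hg0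
  -- exponent arithmetic
  have hq2pos : 1 ≤ q ^ 2 := Nat.one_le_pow _ _ (by omega)
  have hq4pos : 1 ≤ q ^ 4 := Nat.one_le_pow _ _ (by omega)
  -- the q^3 Frobenius
  have hx3 : ∀ x : F, x ^ (q ^ 3) = ((x ^ q) ^ q) ^ q := fun x => by
    rw [← pow_mul, ← pow_mul]
    congr 1
    ring
  have hfr3 : ∀ a b : F, (a + b) ^ (q ^ 3) = a ^ (q ^ 3) + b ^ (q ^ 3) := by
    intro a b; rw [hx3, hx3, hx3, hfr, hfr, hfr]
  have halg3 : ∀ c : Fq, (algebraMap Fq F c) ^ (q ^ 3) = algebraMap Fq F c := by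
    intro c; rw [hx3, halg, halg, halg]
  -- linear maps
  have hLbdef : ∀ b : F, ∃ L : F →ₗ[Fq] F, ∀ x, L x = -x + (z * b) * x ^ q ^ 3 + b * x ^ q := by
    intro b
    refine ⟨{ toFun := fun x => -x + (z * b) * x ^ q ^ 3 + b * x ^ q
              map_add' := ?_
              map_smul' := ?_ }, fun _ => rfl⟩
    · intro u v
      rw [show (q : ℕ) ^ 3 = q ^ 3 from rfl, hfr3, hfr]
      ring
    · intro c x
      dsimp only [RingHom.id_apply]
      rw [Algebra.smul_def, Algebra.smul_def, mul_pow, mul_pow, halg3, halg]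
      ring
  -- kernel cardinality bridge
  have hbridge : ∀ (b : F) (f : F →ₗ[Fq] F),
      (∀ x, f x = -x + (z * b) * x ^ q ^ 3 + b * x ^ q) →
      q ^ (Module.finrank Fq (LinearMap.ker f))
        = (univ.filter fun x : F => -x + (z * b) * x ^ (q ^ 3) + b * x ^ q = 0).card := by
    intro b f hf
    have h1 : Nat.card (LinearMap.ker f) = q ^ (Module.finrank Fq (LinearMap.ker f)) := by
      rw [Nat.card_eq_fintype_card, Module.card_eq_pow_finrank (K := Fq), hq]
    have h2 : Nat.card (LinearMap.ker f)
        = (univ.filter fun x : F => -x + (z * b) * x ^ (q ^ 3) + b * x ^ q = 0).card := by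
      rw [Nat.card_eq_fintype_card, Fintype.card_subtype]
      congr 1
      apply Finset.filter_congr
      intro x _
      rw [LinearMap.mem_ker, hf x]
    rw [← h1, h2]
  -- main set characterization
  have hmain : {b1 : F | ∃ f : F →ₗ[Fq] F,
      (∀ x, f x = -x + (z * b1) * x ^ q ^ 3 + b1 * x ^ q) ∧
      Module.finrank Fq (LinearMap.ker f) = 2}
      = ↑(univ.filter fun b : F => b ^ (q + 1) * (z ^ q * (1 - y)) = 1) := by
    ext b
    simp only [Set.mem_setOf_eq, Finset.coe_filter, Finset.mem_univ, true_and,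
      Set.mem_setOf_eq]
    constructor
    · rintro ⟨f, hf, hrank⟩
      have hcardker := hbridge b f hf
      rw [hrank] at hcardker
      -- rule out b = 0
      have hb0 : b ≠ 0 := by
        rintro rfl
        have hset : (univ.filter fun x : F =>
            -x + (z * 0) * x ^ (q ^ 3) + 0 * x ^ q = 0) = {0} := by
          ext x
          simp only [mem_filter, mem_univ, true_and, mem_singleton, mul_zero, zero_mul,
            zero_mul, add_zero]
          constructor
          · intro h; linear_combination -h
          · rintro rfl; ring
        rw [hset, Finset.card_singleton] at hcardker
        have : q ^ 2 ≥ 4 := by nlinarith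
        omega
      have hkc := ker_card hq2 hF hfr hy hy1 hb0
      rw [hkc] at hcardker
      -- so Sb.card = q + 1 ≥ 2, get two distinct elements
      have hScard : (univ.filter fun l : F =>
          l ^ (q ^ 2 + 1) = 1 ∧ b ^ (q + 1) * ((l + z ^ q) * (1 + z * l ^ q)) = 1).card
          = q + 1 := by
        have hqpm : (q - 1) * (q + 1) = q ^ 2 - 1 := by
          zify [hq2pos, (by omega : 1 ≤ q)]; ring
        have h3 : q ^ 2 = 1 + (q - 1) * (univ.filter fun l : F =>
            l ^ (q ^ 2 + 1) = 1 ∧ b ^ (q + 1) * ((l + z ^ q) * (1 + z * l ^ q)) = 1).card :=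
          hcardker
        apply Nat.eq_of_mul_eq_mul_left (show 0 < q - 1 by omega)
        omega
      have h2lt : 1 < (univ.filter fun l : F =>
          l ^ (q ^ 2 + 1) = 1 ∧ b ^ (q + 1) * ((l + z ^ q) * (1 + z * l ^ q)) = 1).card := by
        rw [hScard]; omega
      obtain ⟨l, hl, l', hl', hne⟩ := Finset.one_lt_card.mp h2lt
      simp only [mem_filter, mem_univ, true_and] at hl hl'
      have hveq : (l + z ^ q) * (1 + z * l ^ q) = (l' + z ^ q) * (1 + z * l' ^ q) := by
        have hbq : b ^ (q + 1) ≠ 0 := pow_ne_zero _ hb0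
        apply mul_left_cancel₀ hbq
        rw [hl.2, hl'.2]
      have hY := Ylemma hfr hq0 hy hy1 hl.1 hl'.1 hne hveq
      rw [← hY]
      exact hl.2
    · intro hb
      obtain ⟨L, hL⟩ := hLbdef b
      refine ⟨L, hL, ?_⟩
      have hb0 : b ≠ 0 := by
        rintro rfl
        rw [zero_pow (by omega : q + 1 ≠ 0), zero_mul] at hb
        exact zero_ne_one hb
      have hcardker := hbridge b L hL
      have hkc := ker_card hq2 hF hfr hy hy1 hb0
      -- identify Sb with the roots of P
      have hSb : (univ.filter fun l : F =>
          l ^ (q ^ 2 + 1) = 1 ∧ b ^ (q + 1) * ((l + z ^ q) * (1 + z * l ^ q)) = 1)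
          = (univ.filter fun l : F => z * l ^ q * (l + z ^ q) + (l + z ^ q * y) = 0) := by
        ext l
        simp only [mem_filter, mem_univ, true_and]
        constructor
        · rintro ⟨hU, hbl⟩
          have hpsi : (l + z ^ q) * (1 + z * l ^ q) = z ^ q * (1 - y) := by
            have hbq : b ^ (q + 1) ≠ 0 := pow_ne_zero _ hb0
            apply mul_left_cancel₀ hbq
            rw [hbl, hb]
          linear_combination hpsi
        · intro hP
          have hU := keyP_root_in_U hq0 hfrP hy hyq hz0 hy1 hP
          refine ⟨hU, ?_⟩
          have hpsi : (l + z ^ q) * (1 + z * l ^ q) = z ^ q * (1 - y) := by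
            linear_combination hP
          rw [hpsi]
          exact hb
      have hroots := keyP_card_roots hq0 hfrP hF hy hyq hz0 hy1
      rw [hSb, hroots] at hkc
      have hq2eq : 1 + (q - 1) * (q + 1) = q ^ 2 := by
        zify [hq2pos, (by omega : 1 ≤ q)]; ring
      rw [hkc, hq2eq] at hcardker
      exact Nat.pow_right_injective hq2 hcardker
  rw [hmain, Set.ncard_coe_finset]
  -- final count of good b's
  have hmr2 : (q + 1) * ((q - 1) * (q ^ 2 + 1)) = Fintype.card F - 1 := by
    rw [hF]; zify [hq2pos, hq4pos, (by omega : 1 ≤ q)]; ring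
  have hfilter : (univ.filter fun b : F => b ^ (q + 1) * (z ^ q * (1 - y)) = 1)
      = (univ.filter fun b : F => b ^ (q + 1) = (z ^ q * (1 - y))⁻¹ ∧ b ≠ 0) := by
    ext b
    simp only [mem_filter, mem_univ, true_and]
    constructor
    · intro hb
      refine ⟨eq_inv_of_mul_eq_one_left hb, ?_⟩
      intro h
      rw [h, zero_pow (by omega : q + 1 ≠ 0), zero_mul] at hb
      exact zero_ne_one hb
    · rintro ⟨hb, -⟩
      rw [hb, inv_mul_cancel₀ hv00]
  -- criterion: v₀⁻¹ is in the image of the (q+1)-power map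
  have hyq2 : y ^ (q ^ 2) = y := by
    have h1 : y ^ q * y ^ (q ^ 2) = 1 := by
      have h := congrArg (fun t : F => t ^ q) hyq
      simp only [mul_pow, one_pow] at h
      rw [← pow_mul, show q * q = q ^ 2 by ring] at h
      exact h
    apply mul_left_cancel₀ (pow_ne_zero q hy0)
    rw [h1]
    linear_combination -hyq
  have e1 : (1 - y) ^ q = 1 - y ^ q := by rw [sub_pow_q hfr hq0, one_pow]
  have e2 : y * (1 - y ^ q) = y - 1 := by linear_combination -hyq
  have hstep : (z ^ q * (1 - y)) ^ (q ^ 2 + 1) = y ^ q * (1 - y) ^ 2 := by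
    rw [mul_pow]
    congr 1
    · rw [← pow_mul, show q * (q ^ 2 + 1) = (q ^ 2 + 1) * q by ring, pow_mul, ← hy']
    · have hgq2 : (1 - y) ^ (q ^ 2) = 1 - y := by
        rw [show q ^ 2 = q * q by ring, pow_mul, e1, sub_pow_q hfr hq0, one_pow,
          ← pow_mul, show q * q = q ^ 2 by ring, hyq2]
      rw [pow_succ, hgq2, sq]
  have hA : (y ^ q) ^ q = y := by rw [← pow_mul, show q * q = q ^ 2 by ring, hyq2]
  have hB : ((1 - y) ^ 2) ^ q = ((1 - y) ^ q) ^ 2 := by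
    rw [← pow_mul, ← pow_mul, mul_comm]
  have ht : (y ^ q * (1 - y) ^ 2) ^ q = y ^ q * (1 - y) ^ 2 := by
    rw [mul_pow, hA, hB, e1]
    apply mul_left_cancel₀ (pow_ne_zero 2 hy0)
    calc y ^ 2 * (y * (1 - y ^ q) ^ 2) = y * (y * (1 - y ^ q)) ^ 2 := by ring
      _ = y * (y - 1) ^ 2 := by rw [e2]
      _ = y ^ 2 * (y ^ q * (1 - y) ^ 2) := by
          linear_combination (-(y * (1 - y) ^ 2)) * hyq
  have ht1 : (y ^ q * (1 - y) ^ 2) ^ (q - 1) = 1 := by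
    have ht0 : y ^ q * (1 - y) ^ 2 ≠ 0 := mul_ne_zero (pow_ne_zero _ hy0) (pow_ne_zero _ hg0)
    apply mul_right_cancel₀ ht0
    rw [one_mul, ← pow_succ, show q - 1 + 1 = q by omega]
    exact ht
  have hcrit : ((z ^ q * (1 - y))⁻¹) ^ ((q - 1) * (q ^ 2 + 1)) = 1 := by
    rw [inv_pow, inv_eq_one, show (q - 1) * (q ^ 2 + 1) = (q ^ 2 + 1) * (q - 1) by ring,
      pow_mul, hstep, ht1]
  rw [hfilter, count_pow hmr2, if_pos hcrit]
end
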